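/- arXiv:2306.04623 — 8 statements merged into one kernel-verified Lean document; each statement's English description precedes it below -/
import Mathlib

section
/- Let r be a square root on a pseudo MV-algebra M = Γ(G,u). Then for each x ∈ M there exists a unique element R(x) ∈ M with R(x) ≤ r(0)⁻ such that R(x) ⊕ r(0) = r(x); moreover R(x) = r(x~)⁻ = r(x⁻)~. -/
section Core

variable {G : Type} [Lattice G] [AddGroup G]

/-- `u` is a strong unit of the ℓ-group `G`. -/
def IsStrongUnit (u : G) : Prop :=
  0 ≤ u ∧ ∀ g : G, ∃ n : ℕ, 1 ≤ n ∧ g ≤ n • u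

/-- Truncated addition `x ⊕ y = (x + y) ⊓ u` of the pseudo MV-algebra `Γ(G,u)`. -/
def oplus (u x y : G) : G := (x + y) ⊓ u

/-- Left negation `x⁻ = u - x`. -/
def negl (u x : G) : G := u - x

/-- Right negation `x~ = -x + u`. -/
def negr (u x : G) : G := -x + u

/-- `x ⊙ y = (x - u + y) ⊔ 0`. -/
def odot (u x y : G) : G := (x - u + y) ⊔ 0

/-- `r` is a square root on the pseudo MV-algebra `M = Γ(G,u)`:
it maps `M` to `M` and satisfies (Sq1), (Sq2), (Sq3). -/
def IsSquareRoot (u : G) (r : G → G) : Prop :=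
  (∀ x, 0 ≤ x → x ≤ u → 0 ≤ r x ∧ r x ≤ u) ∧
  (∀ x, 0 ≤ x → x ≤ u → odot u (r x) (r x) = x) ∧
  (∀ x y, 0 ≤ x → x ≤ u → 0 ≤ y → y ≤ u → odot u y y ≤ x → y ≤ r x) ∧
  (∀ x, 0 ≤ x → x ≤ u → r (negl u x) = oplus u (negl u (r x)) (r 0)) ∧
  (∀ x, 0 ≤ x → x ≤ u → r (negr u x) = oplus u (r 0) (negr u (r x)))

/-- `r` is strict: `r 0 = r 0⁻`. -/
def IsStrict (u : G) (r : G → G) : Prop := r 0 = negl u (r 0)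

end Core

/-- An additive structure is two-divisible if every element is `h + h` for some `h`. -/
def TwoDivisible (A : Type) [Add A] : Prop := ∀ g : A, ∃ h : A, h + h = g

/-- For each `x ∈ M` there is a unique `R(x) ∈ M` with `R(x) ≤ r(0)⁻` and
`R(x) ⊕ r(0) = r(x)`; moreover `R(x) = r(x~)⁻ = r(x⁻)~`. -/
theorem stmt_0 {G : Type} [Lattice G] [AddGroup G]
    [CovariantClass G G (· + ·) (· ≤ ·)]
    [CovariantClass G G (Function.swap (· + ·)) (· ≤ ·)]
    (u : G) (hu : IsStrongUnit u) (r : G → G) (hr : IsSquareRoot u r)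
    (x : G) (hx0 : 0 ≤ x) (hxu : x ≤ u) :
    (∃! R : G, (0 ≤ R ∧ R ≤ u) ∧ R ≤ negl u (r 0) ∧ oplus u R (r 0) = r x) ∧
    (0 ≤ negl u (r (negr u x)) ∧ negl u (r (negr u x)) ≤ u) ∧
    negl u (r (negr u x)) ≤ negl u (r 0) ∧
    oplus u (negl u (r (negr u x))) (r 0) = r x ∧
    negl u (r (negr u x)) = negr u (r (negl u x)) := by
  obtain ⟨hM, h1, h2, h3, h4⟩ := hr
  obtain ⟨ha0, hau⟩ := hM 0 le_rfl hu.1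
  obtain ⟨hs0, hsu⟩ := hM x hx0 hxu
  have haa : odot u (r 0) (r 0) = 0 := h1 0 le_rfl hu.1
  have hale : ∀ y, 0 ≤ y → y ≤ u → r 0 ≤ r y := fun y hy0 hyu =>
    h2 y (r 0) hy0 hyu ha0 hau (by rw [haa]; exact hy0)
  have has : r 0 ≤ r x := hale x hx0 hxu
  -- conjugation by u commutes with r
  have key : ∀ w : G, odot u (u + w - u) (u + w - u) = u + odot u w w - u := by
    intro w
    unfold odot
    conv_rhs => rw [sub_eq_add_neg, add_sup, sup_add]
    congr 1
    · simp [sub_eq_add_neg, add_assoc]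
    · simp
  have hconj : ∀ y, 0 ≤ y → y ≤ u → r (u + y - u) = u + r y - u := by
    intro y hy0 hyu
    obtain ⟨hry0, hryu⟩ := hM y hy0 hyu
    have hy'0 : 0 ≤ u + y - u := by
      rw [sub_nonneg]; exact le_add_of_nonneg_right hy0
    have hy'u : u + y - u ≤ u := by
      rw [sub_le_iff_le_add]; exact add_le_add_right hyu u
    have hsq : odot u (u + r y - u) (u + r y - u) = u + y - u := by
      rw [key, h1 y hy0 hyu]
    have hz0 : 0 ≤ u + r y - u := by
      rw [sub_nonneg]; exact le_add_of_nonneg_right hry0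
    have hzu : u + r y - u ≤ u := by
      rw [sub_le_iff_le_add]; exact add_le_add_right hryu u
    have hle1 : u + r y - u ≤ r (u + y - u) :=
      h2 _ _ hy'0 hy'u hz0 hzu (le_of_eq hsq)
    obtain ⟨hw0, hwu⟩ := hM _ hy'0 hy'u
    set w := r (u + y - u) with hw
    have hv0 : 0 ≤ -u + w + u := by
      have := add_le_add_left (add_le_add_right hw0 (-u)) u
      simpa using this
    have hvu : -u + w + u ≤ u := by
      have := add_le_add_right (add_le_add_left hwu (-u)) u
      simpa using this
    have hce : u + (-u + w + u) - u = w := by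
      simp [sub_eq_add_neg, add_assoc]
    have hsq2 : odot u (-u + w + u) (-u + w + u) = y := by
      have := key (-u + w + u)
      rw [hce, h1 _ hy'0 hy'u] at this
      have h' := congrArg (fun t => -u + t + u) this
      simpa [sub_eq_add_neg, add_assoc] using h'.symm
    have hle2 : -u + w + u ≤ r y := h2 y _ hy0 hyu hv0 hvu (le_of_eq hsq2)
    have hle2' : w ≤ u + r y - u := by
      have := add_le_add_left (add_le_add_right hle2 u) (-u)
      simpa [sub_eq_add_neg, add_assoc] using this
    exact le_antisymm hle2' hle1
  -- a + u = u + a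
  have hcomm_au : r 0 + u = u + r 0 := by
    have h := hconj 0 le_rfl hu.1
    simp only [add_zero, sub_self] at h
    exact eq_sub_iff_add_eq.mp h
  have hc : r 0 + -u = -u + r 0 := by
    have h := congrArg (fun t => -u + t + -u) hcomm_au
    simpa [add_assoc] using h.symm
  -- closed forms for r(x~) and r(x⁻)
  have hrxt : r (negr u x) = r 0 + (-(r x) + u) := by
    have h := h4 x hx0 hxu
    rw [h]
    unfold oplus negr
    refine inf_eq_left.mpr ?_
    have : r 0 + (-(r x) + u) ≤ r x + (-(r x) + u) := add_le_add_left has _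
    simpa using this
  have hrxl : r (negl u x) = u - r x + r 0 := by
    have h := h3 x hx0 hxu
    rw [h]
    unfold oplus negl
    refine inf_eq_left.mpr ?_
    have : u - r x + r 0 ≤ u - r x + r x := add_le_add_right has _
    simpa [sub_eq_add_neg, add_assoc] using this
  -- bounds for x~
  have hnx0 : 0 ≤ negr u x := by
    have := add_le_add_left hxu (-x)
    simpa [negr] using this
  have hnxu : negr u x ≤ u := by
    have := add_le_add_right (neg_nonpos.mpr hx0) u
    simpa [negr] using this
  -- r(-u+x+u) computed two ways
  have hx'0 : 0 ≤ -u + x + u := by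
    have := add_le_add_left (add_le_add_right hx0 (-u)) u
    simpa using this
  have hx'u : -u + x + u ≤ u := by
    have := add_le_add_right (add_le_add_left hxu (-u)) u
    simpa using this
  have hA : r (-u + x + u) = -u + r x + u := by
    have h := hconj (-u + x + u) hx'0 hx'u
    have hce : u + (-u + x + u) - u = x := by simp [sub_eq_add_neg, add_assoc]
    rw [hce] at h
    have h' := congrArg (fun t => -u + t + u) h
    simpa [sub_eq_add_neg, add_assoc] using h'.symm
  have hB : r (-u + x + u) = r 0 + (-(r 0 + (-(r x) + u)) + u) := by
    have h := h4 (negr u x) hnx0 hnxu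
    have hnn : negr u (negr u x) = -u + x + u := by
      simp [negr, add_assoc]
    rw [hnn, hrxt] at h
    rw [h]
    unfold oplus negr
    refine inf_eq_left.mpr ?_
    have h5 : r 0 + r x ≤ u + r 0 := by
      rw [← hcomm_au]; exact add_le_add_right hsu _
    have h6 : r 0 + r x + -(r 0) ≤ u := by
      have := add_le_add_left h5 (-(r 0))
      simpa [add_assoc] using this
    have h7 : -u + (r 0 + r x + -(r 0)) + u ≤ u := by
      have := add_le_add_right (add_le_add_left h6 (-u)) u
      simpa using this
    calc r 0 + (-(r 0 + (-(r x) + u)) + u)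
        = r 0 + -u + (r x + (-(r 0) + u)) := by
          simp [neg_add_rev, add_assoc]
      _ = -u + (r 0 + r x + -(r 0)) + u := by
          rw [hc]; simp [add_assoc]
      _ ≤ u := h7
  -- commutation of r 0 with r x
  have hE : -u + r x + u = r 0 + (-(r 0 + (-(r x) + u)) + u) := hA.symm.trans hB
  have hE2 : r x = r 0 + r x + -(r 0) := by
    have h : -u + r x + u = -u + (r 0 + r x + -(r 0)) + u := by
      rw [hE]
      calc r 0 + (-(r 0 + (-(r x) + u)) + u)
          = r 0 + -u + (r x + (-(r 0) + u)) := by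
            simp [neg_add_rev, add_assoc]
        _ = -u + (r 0 + r x + -(r 0)) + u := by
            rw [hc]; simp [add_assoc]
    have h' := congrArg (fun t => u + t + -u) h
    simpa [add_assoc] using h'
  have hcomm : r x + r 0 = r 0 + r x := by
    conv_lhs => rw [hE2]
    simp [add_assoc]
  have hRR : r x - r 0 = -(r 0) + r x := by
    have h := congrArg (fun t => -(r 0) + t + -(r 0)) hcomm
    simp only [add_assoc, neg_add_cancel_left, add_neg_cancel, add_zero] at h
    rw [sub_eq_add_neg]
    exact h.symm
  -- rewriting the negations
  have hneglt : negl u (r (negr u x)) = r x - r 0 := by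
    rw [hrxt]
    unfold negl
    simp [sub_eq_add_neg, neg_add_rev, add_assoc]
  have hnegrl : negr u (r (negl u x)) = -(r 0) + r x := by
    rw [hrxl]
    unfold negr
    simp [sub_eq_add_neg, neg_add_rev, add_assoc]
  -- the main claims for R = r x - r 0
  have hR0 : 0 ≤ r x - r 0 := sub_nonneg.mpr has
  have hRu : r x - r 0 ≤ u :=
    sub_le_iff_le_add.mpr (hsu.trans (le_add_of_nonneg_right ha0))
  have hRle : r x - r 0 ≤ negl u (r 0) := sub_le_sub_right hsu _
  have hRop : oplus u (r x - r 0) (r 0) = r x := by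
    unfold oplus
    rw [sub_add_cancel]
    exact inf_eq_left.mpr hsu
  refine ⟨⟨r x - r 0, ⟨⟨hR0, hRu⟩, hRle, hRop⟩, ?_⟩, ?_, ?_, ?_, ?_⟩
  · rintro R' ⟨⟨hR'0, hR'u⟩, hR'le, hR'op⟩
    have hle : R' + r 0 ≤ u := by
      have := add_le_add_left hR'le (r 0)
      simpa [negl, sub_add_cancel] using this
    unfold oplus at hR'op
    rw [inf_eq_left.mpr hle] at hR'op
    exact eq_sub_of_add_eq hR'op
  · rw [hneglt]; exact ⟨hR0, hRu⟩
  · rw [hneglt]; exact hRle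
  · rw [hneglt]; exact hRop
  · rw [hneglt, hnegrl]; exact hRR
end

section
/- Let r be a square root on a pseudo MV-algebra M = Γ(G,u). Then for each x ∈ M there exists a unique element R(x) ∈ M with R(x) ≤ r(0)⁻ such that R(x) ⊕ R(x) = x. -/
section SqrtProof

variable {G : Type} [Lattice G] [AddGroup G]
    [CovariantClass G G (· + ·) (· ≤ ·)]
    [CovariantClass G G (Function.swap (· + ·)) (· ≤ ·)]
    {u : G} {r : G → G}

private lemma sq_negle {a b : G} (h : a ≤ b) : -b ≤ -a := by
  have h1 : -b + a + -a ≤ -b + b + -a := add_le_add_left (add_le_add_right h _) _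
  simpa [add_assoc] using h1

-- r 0 bounds
private lemma sq_t0 (hu0 : 0 ≤ u) (hr : IsSquareRoot u r) : 0 ≤ r 0 := (hr.1 0 le_rfl hu0).1
private lemma sq_tu (hu0 : 0 ≤ u) (hr : IsSquareRoot u r) : r 0 ≤ u := (hr.1 0 le_rfl hu0).2

-- (Sq1) at 0 :  r 0 - u + r 0 ≤ 0
private lemma sq_sq1zero (hu0 : 0 ≤ u) (hr : IsSquareRoot u r) : r 0 - u + r 0 ≤ 0 := by
  have h : (r 0 - u + r 0) ⊔ 0 = 0 := hr.2.1 0 le_rfl hu0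
  exact le_sup_left.trans h.le

-- r 0 + r 0 ≤ u
private lemma sq_twot (hu0 : 0 ≤ u) (hr : IsSquareRoot u r) : r 0 + r 0 ≤ u := by
  have h := sq_sq1zero hu0 hr
  have h1 : r 0 - u + r 0 ≤ -(r 0) + r 0 := by simpa using h
  have h2 : r 0 - u ≤ -(r 0) := le_of_add_le_add_right h1
  have h3 : r 0 - u + u ≤ -(r 0) + u := add_le_add_left h2 u
  have h4 : r 0 ≤ -(r 0) + u := by simpa using h3
  have h5 : r 0 + r 0 ≤ r 0 + (-(r 0) + u) := add_le_add_right h4 _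
  simpa [← add_assoc] using h5

-- -u + r 0 ≤ -(r 0)
private lemma sq_tneg (hu0 : 0 ≤ u) (hr : IsSquareRoot u r) : -u + r 0 ≤ -(r 0) := by
  have h := sq_twot hu0 hr
  have h1 : -u + (r 0 + r 0) ≤ -u + u := add_le_add_right h _
  have h2 : -u + r 0 + r 0 ≤ 0 := by simpa [add_assoc] using h1
  have h3 : -u + r 0 + r 0 + -(r 0) ≤ 0 + -(r 0) := add_le_add_left h2 _
  simpa [add_assoc] using h3

-- r 0 ≤ r x
private lemma sq_t_le (hu0 : 0 ≤ u) (hr : IsSquareRoot u r) {x : G} (hx0 : 0 ≤ x) (hxu : x ≤ u) :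
    r 0 ≤ r x := by
  refine hr.2.2.1 x (r 0) hx0 hxu (sq_t0 hu0 hr) (sq_tu hu0 hr) ?_
  rw [hr.2.1 0 le_rfl hu0]; exact hx0

-- bounds of complements
private lemma sq_negl0 {x : G} (hxu : x ≤ u) : 0 ≤ negl u x := by
  have := add_le_add_left hxu (-x); simpa [negl, sub_eq_add_neg] using this
private lemma sq_neglu {x : G} (hx0 : 0 ≤ x) : negl u x ≤ u := by
  have h : -x ≤ 0 := by simpa using sq_negle hx0
  have := add_le_add_right h u; simpa [negl, sub_eq_add_neg] using this
private lemma sq_negr0 {x : G} (hxu : x ≤ u) : 0 ≤ negr u x := by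
  have := add_le_add_right hxu (-x); simpa [negr] using this
private lemma sq_negru {x : G} (hx0 : 0 ≤ x) : negr u x ≤ u := by
  have h : -x ≤ 0 := by simpa using sq_negle hx0
  have := add_le_add_left h u; simpa [negr] using this

-- r (x~) = r 0 + (-(r x) + u)
private lemma sq_wR (hu0 : 0 ≤ u) (hr : IsSquareRoot u r) {x : G} (hx0 : 0 ≤ x) (hxu : x ≤ u) :
    r (negr u x) = r 0 + (-(r x) + u) := by
  have h := hr.2.2.2.2 x hx0 hxu
  rw [h]
  show (r 0 + (-(r x) + u)) ⊓ u = _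
  refine inf_eq_left.mpr ?_
  have h1 : r 0 + (-(r x) + u) ≤ r x + (-(r x) + u) :=
    add_le_add_left (sq_t_le hu0 hr hx0 hxu) _
  simpa [← add_assoc] using h1

-- r (x⁻) = (u - r x) + r 0
private lemma sq_wL (hu0 : 0 ≤ u) (hr : IsSquareRoot u r) {x : G} (hx0 : 0 ≤ x) (hxu : x ≤ u) :
    r (negl u x) = u - r x + r 0 := by
  have h := hr.2.2.2.1 x hx0 hxu
  rw [h]
  show (u - r x + r 0) ⊓ u = _
  refine inf_eq_left.mpr ?_
  have h1 : u - r x + r 0 ≤ u - r x + r x :=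
    add_le_add_right (sq_t_le hu0 hr hx0 hxu) _
  simpa [sub_eq_add_neg, add_assoc] using h1

-- Existence, left form: ((r x - r 0) + (r x - r 0)) ⊓ u = x
private lemma sq_existL (hu0 : 0 ≤ u) (hr : IsSquareRoot u r) {x : G} (hx0 : 0 ≤ x) (hxu : x ≤ u) :
    (r x - r 0 + (r x - r 0)) ⊓ u = x := by
  set s := r x with hs
  set t := r 0 with ht
  have h1 := hr.2.1 (negr u x) (sq_negr0 hxu) (sq_negru hx0)
  rw [sq_wR hu0 hr hx0 hxu] at h1
  -- h1 : odot u (t + (-s + u)) (t + (-s + u)) = negr u x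
  have e1 : (t + (-s + u)) - u + (t + (-s + u)) = (t - s + (t - s)) + u := by
    simp [sub_eq_add_neg, add_assoc]
  have h2 : ((t - s + (t - s)) + u) ⊔ 0 = -x + u := by
    rw [← e1]; exact h1
  have h3 : (t - s + (t - s)) ⊔ (-u) = -x := by
    have := congrArg (fun y => y + -u) h2
    simpa [sup_add, add_assoc] using this
  have h4 : -((t - s + (t - s)) ⊔ (-u)) = x := by rw [h3, neg_neg]
  rw [neg_sup, neg_neg] at h4
  have e2 : -(t - s + (t - s)) = s - t + (s - t) := by
    simp [sub_eq_add_neg, neg_add_rev, add_assoc]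
  rw [e2] at h4
  exact h4

-- Existence, right form: ((-(r 0) + r x) + (-(r 0) + r x)) ⊓ u = x
private lemma sq_existR (hu0 : 0 ≤ u) (hr : IsSquareRoot u r) {x : G} (hx0 : 0 ≤ x) (hxu : x ≤ u) :
    (-(r 0) + r x + (-(r 0) + r x)) ⊓ u = x := by
  set s := r x with hs
  set t := r 0 with ht
  have h1 := hr.2.1 (negl u x) (sq_negl0 hxu) (sq_neglu hx0)
  rw [sq_wL hu0 hr hx0 hxu] at h1
  have e1 : (u - s + t) - u + (u - s + t) = u + (-s + t + (-s + t)) := by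
    simp [sub_eq_add_neg, add_assoc]
  have h2 : (u + (-s + t + (-s + t))) ⊔ 0 = u - x := by
    rw [← e1]; exact h1
  have h3 : (-s + t + (-s + t)) ⊔ (-u) = -x := by
    have := congrArg (fun y => -u + y) h2
    simpa [add_sup, sub_eq_add_neg, ← add_assoc] using this
  have h4 : -((-s + t + (-s + t)) ⊔ (-u)) = x := by rw [h3, neg_neg]
  rw [neg_sup, neg_neg] at h4
  have e2 : -(-s + t + (-s + t)) = -t + s + (-t + s) := by
    simp [neg_add_rev, add_assoc]
  rw [e2] at h4
  exact h4

-- commutation  r x + r 0 = r 0 + r x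
private lemma sq_comm_ts (hu0 : 0 ≤ u) (hr : IsSquareRoot u r) {x : G} (hx0 : 0 ≤ x) (hxu : x ≤ u) :
    r x + r 0 = r 0 + r x := by
  set s := r x with hs
  set t := r 0 with ht
  have hts : t ≤ s := sq_t_le hu0 hr hx0 hxu
  have ht0 : 0 ≤ t := sq_t0 hu0 hr
  have htu : t ≤ u := sq_tu hu0 hr
  have hsu : s ≤ u := (hr.1 x hx0 hxu).2
  -- (a)  s + t ≤ t + s  via Q = u + (t - s) and Sq2 at x⁻
  have ha : s + t ≤ t + s := by
    have h0Q : 0 ≤ u + (t - s) := by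
      have h1 : s ≤ u + t := hsu.trans (by simpa using add_le_add_right ht0 u)
      have h2 : s + -s ≤ u + t + -s := add_le_add_left h1 _
      simpa [sub_eq_add_neg, add_assoc] using h2
    have hQu : u + (t - s) ≤ u := by
      have h1 : t + -s ≤ s + -s := add_le_add_left hts _
      have h2 : u + (t + -s) ≤ u + 0 := add_le_add_right (by simpa using h1) u
      simpa [sub_eq_add_neg] using h2
    have hQQ : odot u (u + (t - s)) (u + (t - s)) = negl u x := by
      show ((u + (t - s)) - u + (u + (t - s))) ⊔ 0 = u - x
      rw [← sq_existL hu0 hr hx0 hxu]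
      simp [sub_eq_add_neg, neg_inf, add_sup, neg_add_rev, add_assoc]
      rfl
    have hSq2 := hr.2.2.1 (negl u x) (u + (t - s)) (sq_negl0 hxu) (sq_neglu hx0) h0Q hQu
      (le_of_eq hQQ)
    rw [sq_wL hu0 hr hx0 hxu] at hSq2
    -- u + (t - s) ≤ u - s + t
    have h3 : t + -s ≤ -s + t := by
      have := hSq2
      rw [sub_eq_add_neg, sub_eq_add_neg, add_assoc] at this
      exact le_of_add_le_add_left this
    have h4 : s + (t + -s) ≤ s + (-s + t) := add_le_add_right h3 s
    have h5 : s + t + -s ≤ t := by simpa [← add_assoc] using h4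
    have h6 : s + t + -s + s ≤ t + s := add_le_add_left h5 s
    simpa [add_assoc] using h6
  -- (b)  t + s ≤ s + t  via Q' = -s + t + u and Sq2 at x~
  have hb : t + s ≤ s + t := by
    have h0Q : 0 ≤ -s + t + u := by
      have h1 : -s + s ≤ -s + (t + u) := add_le_add_right (hsu.trans (by simpa using add_le_add_left ht0 u)) _
      simpa [← add_assoc] using h1
    have hQu : -s + t + u ≤ u := by
      have h1 : -s + t ≤ -s + s := add_le_add_right hts _
      have h2 : -s + t + u ≤ 0 + u := add_le_add_left (by simpa using h1) u
      simpa using h2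
    have hQQ : odot u (-s + t + u) (-s + t + u) = negr u x := by
      show ((-s + t + u) - u + (-s + t + u)) ⊔ 0 = -x + u
      rw [← sq_existR hu0 hr hx0 hxu]
      simp [sub_eq_add_neg, neg_inf, sup_add, neg_add_rev, add_assoc]
      rfl
    have hSq2 := hr.2.2.1 (negr u x) (-s + t + u) (sq_negr0 hxu) (sq_negru hx0) h0Q hQu
      (le_of_eq hQQ)
    rw [sq_wR hu0 hr hx0 hxu] at hSq2
    -- -s + t + u ≤ t + (-s + u)
    have h3 : -s + t ≤ t + -s := by
      have := hSq2
      rw [← add_assoc] at this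
      exact le_of_add_le_add_right this
    have h4 : s + (-s + t) ≤ s + (t + -s) := add_le_add_right h3 s
    have h5 : t ≤ s + t + -s := by simpa [← add_assoc] using h4
    have h6 : t + s ≤ s + t + -s + s := add_le_add_left h5 s
    simpa [add_assoc] using h6
  exact le_antisymm ha hb

-- every ⊕-solution lies above r x - r 0
private lemma sq_sol_lower (hu0 : 0 ≤ u) (hr : IsSquareRoot u r) {x : G} (hx0 : 0 ≤ x)
    (hxu : x ≤ u) {z : G} (hz0 : 0 ≤ z) (hzu : z ≤ u) (hzz : (z + z) ⊓ u = x) :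
    r x - r 0 ≤ z := by
  set s := r x with hs
  set t := r 0 with ht
  have h0Q : 0 ≤ -z + u := by
    have := add_le_add_right hzu (-z); simpa using this
  have hQu : -z + u ≤ u := by
    have h1 : -z ≤ 0 := by simpa using sq_negle hz0
    have := add_le_add_left h1 u; simpa using this
  have hQQ : odot u (-z + u) (-z + u) = negr u x := by
    show ((-z + u) - u + (-z + u)) ⊔ 0 = -x + u
    rw [← hzz]
    simp [sub_eq_add_neg, neg_inf, sup_add, neg_add_rev, add_assoc]
  have hSq2 := hr.2.2.1 (negr u x) (-z + u) (sq_negr0 hxu) (sq_negru hx0) h0Q hQu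
    (le_of_eq hQQ)
  rw [sq_wR hu0 hr hx0 hxu] at hSq2
  -- -z + u ≤ t + (-s + u)
  have h3 : -z ≤ t + -s := by
    have := hSq2
    rw [← add_assoc] at this
    exact le_of_add_le_add_right this
  have h4 := sq_negle h3
  simpa [sub_eq_add_neg, neg_add_rev] using h4

-- r 0 commutes with everything below it
private lemma sq_comm_td (hu0 : 0 ≤ u) (hr : IsSquareRoot u r) {d : G} (hd0 : 0 ≤ d)
    (hdt : d ≤ r 0) : r 0 + d = d + r 0 := by
  set t := r 0 with ht
  have hdu : d ≤ u := hdt.trans (sq_tu hu0 hr)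
  have hddu : d + d ≤ u := (add_le_add hdt hdt).trans (sq_twot hu0 hr)
  have hdd0 : 0 ≤ d + d := add_nonneg hd0 hd0
  have hsol : (d + d) ⊓ u = d + d := inf_eq_left.2 hddu
  have hlow : r (d + d) - t ≤ d := sq_sol_lower hu0 hr hdd0 hddu hd0 hdu hsol
  have hexist := sq_existL hu0 hr hdd0 hddu
  have hble : r (d + d) - t + (r (d + d) - t) ≤ d + d := add_le_add hlow hlow
  rw [inf_eq_left.2 (hble.trans hddu)] at hexist
  -- hexist : r (d+d) - t + (r (d+d) - t) = d + d
  have hd_le : d ≤ r (d + d) - t := by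
    have h1 : d + d ≤ d + (r (d + d) - t) := by
      calc d + d = r (d + d) - t + (r (d + d) - t) := hexist.symm
        _ ≤ d + (r (d + d) - t) := add_le_add_left hlow _
    exact le_of_add_le_add_left h1
  have hbd : r (d + d) - t = d := le_antisymm hlow hd_le
  have hsd : r (d + d) = d + t := by
    rw [sub_eq_iff_eq_add] at hbd; exact hbd
  have hcomm := sq_comm_ts hu0 hr hdd0 hddu
  rw [hsd] at hcomm
  -- hcomm : d + t + t = t + (d + t)
  rw [← add_assoc] at hcomm
  exact (add_right_cancel hcomm).symm

end SqrtProof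

/-- For each `x ∈ M` there is a unique `R(x) ∈ M` with `R(x) ≤ r(0)⁻` and
`R(x) ⊕ R(x) = x`. -/
theorem stmt_1 {G : Type} [Lattice G] [AddGroup G]
    [CovariantClass G G (· + ·) (· ≤ ·)]
    [CovariantClass G G (Function.swap (· + ·)) (· ≤ ·)]
    (u : G) (hu : IsStrongUnit u) (r : G → G) (hr : IsSquareRoot u r)
    (x : G) (hx0 : 0 ≤ x) (hxu : x ≤ u) :
    ∃! R : G, (0 ≤ R ∧ R ≤ u) ∧ R ≤ negl u (r 0) ∧ oplus u R R = x := by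
  obtain ⟨hu0, -⟩ := hu
  have hts : r 0 ≤ r x := sq_t_le hu0 hr hx0 hxu
  have ht0 : 0 ≤ r 0 := sq_t0 hu0 hr
  have hs0 : 0 ≤ r x := (hr.1 x hx0 hxu).1
  have hsu : r x ≤ u := (hr.1 x hx0 hxu).2
  have hcomm : r x + r 0 = r 0 + r x := sq_comm_ts hu0 hr hx0 hxu
  have hR0 : 0 ≤ r x - r 0 := by
    have := add_le_add_left hts (-(r 0)); simpa [sub_eq_add_neg] using this
  have hRut : r x - r 0 ≤ u - r 0 := by
    have := add_le_add_left hsu (-(r 0)); simpa [sub_eq_add_neg] using this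
  have hRu : r x - r 0 ≤ u := by
    refine hRut.trans ?_
    have h1 : -(r 0) ≤ 0 := by simpa using sq_negle ht0
    have := add_le_add_right h1 u; simpa [sub_eq_add_neg] using this
  refine ⟨r x - r 0, ⟨⟨hR0, hRu⟩, hRut, sq_existL hu0 hr hx0 hxu⟩, ?_⟩
  rintro z ⟨⟨hz0, hzu⟩, hzt, hzz⟩
  have hzz' : (z + z) ⊓ u = x := hzz
  have hzt' : z ≤ u - r 0 := hzt
  have hlow : r x - r 0 ≤ z := sq_sol_lower hu0 hr hx0 hxu hz0 hzu hzz'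
  -- z ≤ r x
  have hz_le_s : z ≤ r x := by
    refine hr.2.2.1 x z hx0 hxu hz0 hzu ?_
    show (z - u + z) ⊔ 0 ≤ x
    refine sup_le ?_ hx0
    rw [← hzz']
    refine le_inf ?_ ?_
    · have h1 : z + -u ≤ z + 0 := by
        refine add_le_add_right ?_ z
        simpa using sq_negle hu0
      have h2 : z + -u + z ≤ z + 0 + z := add_le_add_left h1 z
      simpa [sub_eq_add_neg] using h2
    · have h1 : z + -u ≤ 0 := by
        have := add_le_add_left hzu (-u); simpa using this
      have h2 : z + -u + z ≤ 0 + z := add_le_add_left h1 z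
      have h3 : z - u + z ≤ z := by simpa [sub_eq_add_neg] using h2
      exact h3.trans hzu
  -- the difference d
  set d := z - (r x - r 0) with hd
  have hd0 : 0 ≤ d := by
    have h := add_le_add_left hlow (-(r x - r 0))
    rw [add_neg_cancel] at h
    rw [hd, sub_eq_add_neg]; exact h
  have hz_eq : d + (r x - r 0) = z := sub_add_cancel z _
  have e_st : r x - (r x - r 0) = r 0 := by
    rw [sub_eq_add_neg, sub_eq_add_neg, neg_add_rev, neg_neg, ← add_assoc, hcomm,
      add_neg_cancel_right]
  have hdt : d ≤ r 0 := by
    have h1 : z - (r x - r 0) ≤ r x - (r x - r 0) := by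
      have := add_le_add_left hz_le_s (-(r x - r 0)); simpa [sub_eq_add_neg] using this
    rw [e_st] at h1; exact h1
  have hdus : d ≤ u - r x := by
    have h1 : z - (r x - r 0) ≤ (u - r 0) - (r x - r 0) := by
      have := add_le_add_left hzt' (-(r x - r 0)); simpa [sub_eq_add_neg] using this
    have e2 : (u - r 0) - (r x - r 0) = u - r x := by
      simp [sub_eq_add_neg, neg_add_rev, add_assoc]
    rw [e2] at h1; exact h1
  have htd : r 0 + d = d + r 0 := sq_comm_td hu0 hr hd0 hdt
  have hy0 : 0 ≤ d + r x := add_nonneg hd0 hs0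
  have hyu : d + r x ≤ u := by
    have h1 : d + r x ≤ (u - r x) + r x := add_le_add_left hdus (r x)
    simpa [sub_add_cancel] using h1
  -- Sq2 at x with witness d + r x
  have hySq2 : d + r x ≤ r x := by
    refine hr.2.2.1 x (d + r x) hx0 hxu hy0 hyu ?_
    show ((d + r x) - u + (d + r x)) ⊔ 0 ≤ x
    refine sup_le (le_trans (le_inf ?_ ?_) hzz'.le) hx0
    · -- (d + r x) - u + (d + r x) ≤ z + z
      have hkey : r x + -u + r 0 ≤ r x + -(r 0) := by
        have h1 := sq_tneg hu0 hr
        have h2 := add_le_add_right h1 (r x)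
        simpa [add_assoc] using h2
      have e6 : (d + r x) - u + (d + r x)
          = d + ((r x + -u + r 0) + (d + (r x - r 0))) := by
        have e7 : r 0 + (r x - r 0) = r x := by
          rw [sub_eq_add_neg, ← add_assoc, ← hcomm, add_neg_cancel_right]
        calc (d + r x) - u + (d + r x)
            = d + (r x + -u + (d + r x)) := by
              simp [sub_eq_add_neg, add_assoc]
          _ = d + (r x + -u + (d + (r 0 + (r x - r 0)))) := by rw [e7]
          _ = d + (r x + -u + ((d + r 0) + (r x - r 0))) := by
              simp [add_assoc]
          _ = d + (r x + -u + ((r 0 + d) + (r x - r 0))) := by rw [htd]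
          _ = d + ((r x + -u + r 0) + (d + (r x - r 0))) := by
              simp [add_assoc]
      have h8 : d + ((r x + -u + r 0) + (d + (r x - r 0)))
          ≤ d + ((r x + -(r 0)) + (d + (r x - r 0))) :=
        add_le_add_right (add_le_add_left hkey _) d
      have e9 : d + ((r x + -(r 0)) + (d + (r x - r 0))) = z + z := by
        rw [← hz_eq]; simp [sub_eq_add_neg, add_assoc]
      rw [e6]
      exact h8.trans (le_of_eq e9)
    · -- (d + r x) - u + (d + r x) ≤ u
      have h1 : d + r x + -u ≤ 0 := by
        have := add_le_add_left hyu (-u); simpa using this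
      have h2 : d + r x + -u + (d + r x) ≤ 0 + (d + r x) := add_le_add_left h1 _
      have h3 : (d + r x) - u + (d + r x) ≤ d + r x := by
        simpa [sub_eq_add_neg] using h2
      exact h3.trans hyu
  have hd_le0 : d ≤ 0 := by
    have h1 : d + r x ≤ 0 + r x := by simpa using hySq2
    exact le_of_add_le_add_right h1
  have hd_eq : d = 0 := le_antisymm hd_le0 hd0
  rw [← hz_eq, hd_eq, zero_add]
end

section
/- Let r be a square root on a pseudo MV-algebra M = Γ(G,u). Then for each x ∈ M, r(x) is the maximum of the set {y ∧ (y → x) : y ∈ M} and also the maximum of the set {y ∧ (y ⇝ x) : y ∈ M}, where y → x = y⁻ ⊕ x and y ⇝ x = x ⊕ y~. -/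
/-- `r(x)` is the maximum of `{y ⊓ (y → x) : y ∈ M}` and of
`{y ⊓ (y ⇝ x) : y ∈ M}`, where `y → x = y⁻ ⊕ x` and `y ⇝ x = x ⊕ y~`. -/
theorem stmt_2 {G : Type} [Lattice G] [AddGroup G]
    [CovariantClass G G (· + ·) (· ≤ ·)]
    [CovariantClass G G (Function.swap (· + ·)) (· ≤ ·)]
    (u : G) (hu : IsStrongUnit u) (r : G → G) (hr : IsSquareRoot u r)
    (x : G) (hx0 : 0 ≤ x) (hxu : x ≤ u) :
    IsGreatest {z : G | ∃ y, 0 ≤ y ∧ y ≤ u ∧ z = y ⊓ oplus u (negl u y) x} (r x) ∧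
    IsGreatest {z : G | ∃ y, 0 ≤ y ∧ y ≤ u ∧ z = y ⊓ oplus u x (negr u y)} (r x) := by
  obtain ⟨hmem, hsq1, hsq2, -, -⟩ := hr
  obtain ⟨hr0, hru⟩ := hmem x hx0 hxu
  have h1 : r x - u + r x ≤ x := by
    have h := hsq1 x hx0 hxu
    rw [odot] at h
    calc r x - u + r x ≤ (r x - u + r x) ⊔ 0 := le_sup_left
      _ = x := h
  have key1 : r x ≤ u - r x + x := by
    have h := add_le_add_right h1 (u - r x)
    have e : u - r x + (r x - u + r x) = r x := by
      rw [← add_assoc, sub_add_sub_cancel, sub_self, zero_add]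
    rwa [e] at h
  have key2 : r x ≤ x + (-r x + u) := by
    have h := add_le_add_left h1 (-r x + u)
    have e : r x - u + r x + (-r x + u) = r x := by
      rw [add_assoc (r x - u), ← add_assoc (r x), add_neg_cancel, zero_add,
        sub_add_cancel]
    rwa [e] at h
  have cancel : ∀ a b c : G, a - b + (b - a + c) = c := by
    intro a b c
    rw [← add_assoc, sub_add_sub_cancel, sub_self, zero_add]
  constructor
  · constructor
    · refine ⟨r x, hr0, hru, ?_⟩
      simp only [oplus, negl]
      exact (le_antisymm (le_inf le_rfl (le_inf key1 hru)) inf_le_left)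
    · rintro z ⟨y, hy0, hyu, rfl⟩
      set z := y ⊓ oplus u (negl u y) x with hz
      have hzy : z ≤ y := inf_le_left
      have hz2 : z ≤ u - y + x := le_trans inf_le_right inf_le_left
      have hz0 : 0 ≤ z := le_inf hy0 (le_inf (add_nonneg (sub_nonneg.2 hyu) hx0) (hu.1))
      have hzu : z ≤ u := hzy.trans hyu
      refine hsq2 x z hx0 hxu hz0 hzu ?_
      rw [odot]
      refine sup_le ?_ hx0
      calc z - u + z ≤ y - u + (u - y + x) := add_le_add (sub_le_sub_right hzy u) hz2
        _ = x := cancel y u x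
  · constructor
    · refine ⟨r x, hr0, hru, ?_⟩
      simp only [oplus, negr]
      exact (le_antisymm (le_inf le_rfl (le_inf key2 hru)) inf_le_left)
    · rintro z ⟨y, hy0, hyu, rfl⟩
      set z := y ⊓ oplus u x (negr u y) with hz
      have hzy : z ≤ y := inf_le_left
      have hz2 : z ≤ x + (-y + u) := le_trans inf_le_right inf_le_left
      have hz0 : 0 ≤ z := le_inf hy0
        (le_inf (add_nonneg hx0 (by rw [negr]; simpa using add_le_add_left hyu (-y))) hu.1)
      have hzu : z ≤ u := hzy.trans hyu
      refine hsq2 x z hx0 hxu hz0 hzu ?_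
      rw [odot]
      refine sup_le ?_ hx0
      calc z - u + z ≤ (x + (-y + u)) - u + y := add_le_add (sub_le_sub_right hz2 u) hzy
        _ = x := by rw [sub_eq_add_neg, add_assoc x, add_assoc (-y), add_neg_cancel,
              add_zero, add_assoc x, neg_add_cancel, add_zero]
end

section
/- Let r be a square root on a pseudo MV-algebra M = Γ(G,u). Then x ⊙ r(0) ≤ x ⊙ x for every x ∈ M. -/
/-- `x ⊙ r(0) ≤ x ⊙ x` for every `x ∈ M`. -/
theorem stmt_3 {G : Type} [Lattice G] [AddGroup G]
    [CovariantClass G G (· + ·) (· ≤ ·)]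
    [CovariantClass G G (Function.swap (· + ·)) (· ≤ ·)]
    (u : G) (hu : IsStrongUnit u) (r : G → G) (hr : IsSquareRoot u r)
    (x : G) (hx0 : 0 ≤ x) (hxu : x ≤ u) :
    odot u x (r 0) ≤ odot u x x := by
  obtain ⟨hrange, hsq1, hsq2, _⟩ := hr
  set s := odot u x x with hs
  have hs0 : (0:G) ≤ s := le_sup_right
  have hsu : s ≤ u := by
    refine sup_le ?_ hu.1
    have : x - u ≤ 0 := sub_nonpos.2 hxu
    calc x - u + x ≤ 0 + x := add_le_add_left this x
    _ = x := zero_add x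
    _ ≤ u := hxu
  obtain ⟨hr00, hr0u⟩ := hrange 0 le_rfl hu.1
  have hr0sq : odot u (r 0) (r 0) = 0 := hsq1 0 le_rfl hu.1
  have h1 : r 0 ≤ r s := hsq2 s (r 0) hs0 hsu hr00 hr0u (by rw [hr0sq]; exact hs0)
  have h2 : x ≤ r s := hsq2 s x hs0 hsu hx0 hxu (le_of_eq hs.symm)
  have h3 : odot u x (r 0) ≤ odot u (r s) (r s) := by
    unfold odot
    exact sup_le_sup_right (add_le_add (sub_le_sub_right h2 u) h1) 0
  calc odot u x (r 0) ≤ odot u (r s) (r s) := h3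
  _ = s := hsq1 s hs0 hsu
end

section
/- Let M = Γ(G,u) be a representable pseudo MV-algebra with a strict square root. Then (G,u) can be embedded into a two-divisible unital lattice-ordered group: there exist a lattice-ordered group G₀ that is two-divisible, a strong unit u₀ of G₀, and an injective group homomorphism φ : G → G₀ preserving finite meets and joins with φ(u) = u₀. -/
/-- A bundled linearly ordered (not necessarily abelian) group with a strong unit;
`Γ((K i).carrier, (K i).u)` is then a linearly ordered pseudo MV-algebra. -/
structure LinUnitalGroup : Type 1 where
  carrier : Type
  [grp : AddGroup carrier]
  [lin : LinearOrder carrier]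
  covl : ∀ a b c : carrier, b ≤ c → a + b ≤ a + c
  covr : ∀ a b c : carrier, b ≤ c → b + a ≤ c + a
  u : carrier
  u_nonneg : 0 ≤ u
  strong : ∀ g : carrier, ∃ n : ℕ, 1 ≤ n ∧ g ≤ n • u

attribute [instance] LinUnitalGroup.grp LinUnitalGroup.lin

/-- The pseudo MV-algebra `M = Γ(G,u)` is representable: there is a family of linearly
ordered pseudo MV-algebras `Γ((K i).carrier,(K i).u)` and an injective homomorphism
(preserving `⊕`, `⁻`, `~`, `0`, `1`) of `M` into their direct product which is
surjective in each coordinate. -/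
def IsRepresentable {G : Type} [Lattice G] [AddGroup G] (u : G) : Prop :=
  ∃ (ι : Type) (K : ι → LinUnitalGroup) (f : G → ∀ i, (K i).carrier),
    (∀ x, 0 ≤ x → x ≤ u → ∀ i, 0 ≤ f x i ∧ f x i ≤ (K i).u) ∧
    (∀ i, f 0 i = 0) ∧
    (∀ i, f u i = (K i).u) ∧
    (∀ x y, 0 ≤ x → x ≤ u → 0 ≤ y → y ≤ u → ∀ i,
      f (oplus u x y) i = min (f x i + f y i) (K i).u) ∧
    (∀ x, 0 ≤ x → x ≤ u → ∀ i, f (negl u x) i = (K i).u - f x i) ∧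
    (∀ x, 0 ≤ x → x ≤ u → ∀ i, f (negr u x) i = -(f x i) + (K i).u) ∧
    (∀ x y, 0 ≤ x → x ≤ u → 0 ≤ y → y ≤ u → (∀ i, f x i = f y i) → x = y) ∧
    (∀ i, ∀ z : (K i).carrier, 0 ≤ z → z ≤ (K i).u →
      ∃ x, 0 ≤ x ∧ x ≤ u ∧ f x i = z)

/-- A bundled (not necessarily abelian) lattice-ordered group with a strong unit. -/
structure UnitalLGroup : Type 1 where
  carrier : Type
  [grp : AddGroup carrier]
  [lat : Lattice carrier]
  covl : ∀ a b c : carrier, b ≤ c → a + b ≤ a + c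
  covr : ∀ a b c : carrier, b ≤ c → b + a ≤ c + a
  u : carrier
  u_nonneg : 0 ≤ u
  strong : ∀ g : carrier, ∃ n : ℕ, 1 ≤ n ∧ g ≤ n • u

attribute [instance] UnitalLGroup.grp UnitalLGroup.lat



set_option linter.unusedSectionVars false
section PMV
variable {G : Type} [Lattice G] [AddGroup G]
    [CovariantClass G G (· + ·) (· ≤ ·)]
    [CovariantClass G G (Function.swap (· + ·)) (· ≤ ·)]

lemma pmv_dec (a b : G) : ((a - b) ⊔ 0) + (a ⊓ b) = a := by
  have h1 : a + (-(a ⊓ b)) = (a - b) ⊔ 0 := by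
    rw [neg_inf, add_sup, add_neg_cancel, ← sub_eq_add_neg, sup_comm]
  rw [← h1, add_assoc, neg_add_cancel, add_zero]

lemma pmv_pospart (a : G) : a + ((-a) ⊔ 0) = a ⊔ 0 := by
  rw [add_sup, add_neg_cancel, add_zero, sup_comm]

lemma pmv_subparts (a : G) : (a ⊔ 0) - ((-a) ⊔ 0) = a := by
  rw [← pmv_pospart, add_sub_cancel_right]

lemma pmv_supeq (a b : G) : a + ((-(a ⊓ b)) + b) = b ⊔ a := by
  rw [neg_inf, sup_add, add_sup, neg_add_cancel, add_zero, add_neg_cancel_left, sup_comm]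

lemma pmv_disj_comm {a b : G} (h : a ⊓ b = 0) : a + b = b + a := by
  have h1 := pmv_supeq a b
  have h2 := pmv_supeq b a
  rw [h, neg_zero, zero_add] at h1
  rw [inf_comm, h, neg_zero, zero_add] at h2
  rw [h1, h2, sup_comm]

lemma pmv_riesz {a b c : G} (ha : 0 ≤ a) (hb : 0 ≤ b) (hc : 0 ≤ c) :
    a ⊓ (b + c) ≤ (a ⊓ b) + (a ⊓ c) := by
  have hd : 0 ≤ a ⊓ b := le_inf ha hb
  have s1 : a ⊓ (b + c) ≤ (a ⊓ b) + c := by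
    rw [inf_add]
    exact le_inf (le_trans inf_le_left (le_add_of_nonneg_right hc)) inf_le_right
  have s2 : a ⊓ ((a ⊓ b) + c) = (a ⊓ b) + ((-(a ⊓ b) + a) ⊓ c) := by
    rw [add_inf, add_neg_cancel_left, inf_comm]
  have s3 : a ⊓ (b + c) ≤ a ⊓ ((a ⊓ b) + c) := le_inf inf_le_left s1
  have s4 : (-(a ⊓ b) + a) ⊓ c ≤ a ⊓ c := by
    apply inf_le_inf_right
    have : -(a ⊓ b) + a ≤ 0 + a := by
      apply add_le_add_left
      have := add_le_add_right hd (-(a ⊓ b))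
      simpa using this
    simpa using this
  calc a ⊓ (b + c) ≤ a ⊓ ((a ⊓ b) + c) := s3
    _ = (a ⊓ b) + ((-(a ⊓ b) + a) ⊓ c) := s2
    _ ≤ (a ⊓ b) + (a ⊓ c) := add_le_add_right s4 _

lemma pmv_nsmul_self_comm (a : G) (n : ℕ) : a + n • a = n • a + a := by
  induction n with
  | zero => simp
  | succ n ih => rw [succ_nsmul, ← add_assoc, ih, add_assoc]

lemma pmv_two_nsmul (a : G) (n : ℕ) : n • a + n • a = n • (a + a) := by
  induction n with
  | zero => simp
  | succ n ih =>
    rw [succ_nsmul, succ_nsmul, ← ih]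
    have h : a + n • a = n • a + a := pmv_nsmul_self_comm a n
    calc n • a + a + (n • a + a) = n • a + (a + n • a) + a := by
            simp [add_assoc]
      _ = n • a + (n • a + a) + a := by rw [h]
      _ = n • a + n • a + (a + a) := by simp [add_assoc]

lemma pmv_upper_comm {u : G} (hu0 : 0 ≤ u) {c : G}
    (hc : ∀ x, 0 ≤ x → x ≤ u → c + x = x + c) :
    ∀ n : ℕ, ∀ g : G, 0 ≤ g → g ≤ n • u → c + g = g + c := by
  intro n
  induction n with
  | zero => intro g hg0 hgn; rw [zero_nsmul] at hgn
            have : g = 0 := le_antisymm hgn hg0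
            simp [this]
  | succ n ih =>
    intro g hg0 hgn
    set q := (g - u) ⊔ 0 with hq
    set p := g ⊓ u with hp
    have hdec : q + p = g := pmv_dec g u
    have hq0 : 0 ≤ q := le_sup_right
    have hqn : q ≤ n • u := by
      apply sup_le _ (nsmul_nonneg hu0 n)
      have : g - u ≤ (n + 1) • u - u := sub_le_sub_right hgn u
      rwa [succ_nsmul, add_sub_cancel_right] at this
    have hp0 : 0 ≤ p := le_inf hg0 hu0
    have hpu : p ≤ u := inf_le_right
    have c1 : c + q = q + c := ih q hq0 hqn
    have c2 : c + p = p + c := hc p hp0 hpu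
    calc c + g = c + q + p := by rw [← hdec, add_assoc]
      _ = q + c + p := by rw [c1]
      _ = q + (p + c) := by rw [add_assoc, c2]
      _ = g + c := by rw [← add_assoc, hdec]

lemma pmv_central {u : G} (hu : IsStrongUnit u) {c : G}
    (hc : ∀ x, 0 ≤ x → x ≤ u → c + x = x + c) (g : G) : c + g = g + c := by
  have hcomm : ∀ h : G, 0 ≤ h → c + h = h + c := by
    intro h h0
    obtain ⟨n, -, hn⟩ := hu.2 h
    exact pmv_upper_comm hu.1 hc n h h0 hn
  have hA : c + (g ⊔ 0) = (g ⊔ 0) + c := hcomm _ le_sup_right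
  have hB : c + ((-g) ⊔ 0) = ((-g) ⊔ 0) + c := hcomm _ le_sup_right
  have hBneg : c + (-((-g) ⊔ 0)) = (-((-g) ⊔ 0)) + c := by
    have := congrArg (fun z => -((-g) ⊔ 0) + z + (-((-g) ⊔ 0))) hB
    simpa [add_assoc] using this.symm
  calc c + g = c + ((g ⊔ 0) + (-((-g) ⊔ 0))) := by rw [← sub_eq_add_neg, pmv_subparts]
    _ = (c + (g ⊔ 0)) + (-((-g) ⊔ 0)) := by rw [add_assoc]
    _ = (g ⊔ 0) + (c + (-((-g) ⊔ 0))) := by rw [hA, add_assoc]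
    _ = (g ⊔ 0) + ((-((-g) ⊔ 0)) + c) := by rw [hBneg]
    _ = g + c := by rw [← add_assoc, ← sub_eq_add_neg, pmv_subparts]

lemma pmv_poslist {u : G} (hu0 : 0 ≤ u) :
    ∀ n : ℕ, ∀ g : G, 0 ≤ g → g ≤ n • u →
      ∃ L : List G, (∀ x ∈ L, 0 ≤ x ∧ x ≤ u) ∧ L.sum = g := by
  intro n
  induction n with
  | zero => intro g hg0 hgn; rw [zero_nsmul] at hgn
            exact ⟨[], by simp, by simp [le_antisymm hgn hg0]⟩
  | succ n ih =>
    intro g hg0 hgn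
    have hq0 : (0:G) ≤ (g - u) ⊔ 0 := le_sup_right
    have hqn : (g - u) ⊔ 0 ≤ n • u := by
      apply sup_le _ (nsmul_nonneg hu0 n)
      have : g - u ≤ (n + 1) • u - u := sub_le_sub_right hgn u
      rwa [succ_nsmul, add_sub_cancel_right] at this
    obtain ⟨L, hLmem, hLsum⟩ := ih _ hq0 hqn
    refine ⟨L ++ [g ⊓ u], ?_, ?_⟩
    · intro x hx
      rcases List.mem_append.mp hx with h | h
      · exact hLmem x h
      · rw [List.mem_singleton] at h
        exact ⟨h ▸ le_inf hg0 hu0, h ▸ inf_le_right⟩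
    · rw [List.sum_append, hLsum]
      simpa using pmv_dec g u

lemma pmv_add_lt_add_left {a b : G} (h : a < b) (c : G) : c + a < c + b :=
  lt_of_le_of_ne (add_le_add_right h.le c) (fun e => h.ne (add_left_cancel e))

lemma pmv_add_lt_add_right {a b : G} (h : a < b) (c : G) : a + c < b + c :=
  lt_of_le_of_ne (add_le_add_left h.le c) (fun e => h.ne (add_right_cancel e))

lemma pmv_list_sum_nonneg : ∀ L : List G, (∀ x ∈ L, 0 ≤ x) → 0 ≤ L.sum := by
  intro L
  induction L with
  | nil => simp
  | cons x L ih =>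
    intro h
    rw [List.sum_cons]
    exact add_nonneg (h x (List.mem_cons_self)) (ih (fun y hy => h y (List.mem_cons_of_mem x hy)))

lemma pmv_le_list_sum : ∀ L : List G, (∀ x ∈ L, 0 ≤ x) → ∀ x ∈ L, x ≤ L.sum := by
  intro L
  induction L with
  | nil => simp
  | cons y L ih =>
    intro h x hx
    rw [List.sum_cons]
    rcases List.mem_cons.mp hx with h1 | h1
    · subst h1
      exact le_add_of_nonneg_right (pmv_list_sum_nonneg L (fun z hz => h z (List.mem_cons_of_mem _ hz)))
    · calc x ≤ L.sum := ih (fun z hz => h z (List.mem_cons_of_mem _ hz)) x h1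
        _ ≤ y + L.sum := le_add_of_nonneg_left (h y (List.mem_cons_self))

lemma pmv_list_sum_eq_zero : ∀ L : List G, (∀ x ∈ L, 0 ≤ x) → L.sum = 0 → ∀ x ∈ L, x = 0 := by
  intro L
  induction L with
  | nil => simp
  | cons y L ih =>
    intro h hsum x hx
    rw [List.sum_cons] at hsum
    have hy := h y (List.mem_cons_self)
    have hL : 0 ≤ L.sum := pmv_list_sum_nonneg L (fun z hz => h z (List.mem_cons_of_mem _ hz))
    have hy0 : y = 0 := by
      by_contra hne
      have : 0 < y := lt_of_le_of_ne hy (Ne.symm hne)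
      have : 0 < y + L.sum := lt_of_lt_of_le (lt_of_lt_of_le this (le_add_of_nonneg_right hL)) le_rfl
      rw [hsum] at this; exact lt_irrefl 0 this
    have hLsum : L.sum = 0 := by rw [hy0, zero_add] at hsum; exact hsum
    rcases List.mem_cons.mp hx with h1 | h1
    · exact h1 ▸ hy0
    · exact ih (fun z hz => h z (List.mem_cons_of_mem _ hz)) hLsum x h1

end PMV

section PMV2
variable {G : Type} [AddSemigroup G]
lemma pmv_comm_add {a b : G} (h : a + b = b + a) : a + (b + b) = (b + b) + a := by
  rw [← add_assoc, h, add_assoc, h, ← add_assoc]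
end PMV2

section PMV3
variable {G : Type} [Lattice G] [AddGroup G]
    [CovariantClass G G (· + ·) (· ≤ ·)]
    [CovariantClass G G (Function.swap (· + ·)) (· ≤ ·)]

lemma pmv_dec' (a b : G) : (a ⊓ b) + ((-b + a) ⊔ 0) = a := by
  have h1 : -(a ⊓ b) + a = (-b + a) ⊔ 0 := by
    rw [neg_inf, sup_add, neg_add_cancel, sup_comm]
  rw [← h1, add_neg_cancel_left]

lemma pmv_sup_expr (a b : G) : a + ((-a + b) ⊔ 0) = a ⊔ b := by
  rw [add_sup, add_neg_cancel_left, add_zero, sup_comm]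

lemma pmv_inf_zero_neg (a : G) : a ⊓ 0 = -((-a) ⊔ 0) := by
  rw [neg_sup, neg_neg, neg_zero]

lemma pmv_posneg_disj (a : G) : (a ⊔ 0) ⊓ ((-a) ⊔ 0) = 0 := by
  have h1 : (a ⊔ 0) ⊓ ((-a) ⊔ 0) = (a + ((-a) ⊔ 0)) ⊓ (0 + ((-a) ⊔ 0)) := by
    rw [pmv_pospart, zero_add]
  rw [h1, ← inf_add, pmv_inf_zero_neg, neg_add_cancel]

end PMV3

section PMV4
variable {G : Type} [AddGroup G]

lemma pmv_neg_comm {c w : G} (h : c + w = w + c) : -c + w = w + -c := by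
  have e := congrArg (fun z => -c + z + -c) h
  simp only [add_assoc, neg_add_cancel_left, add_neg_cancel, add_zero] at e
  exact e.symm

lemma pmv_shift_half {c g h : G} (hc : ∀ w : G, c + w = w + c) (hh : h + h = g + (c + c)) :
    (h - c) + (h - c) = g := by
  have h1 : -c + h = h + -c := pmv_neg_comm (hc h)
  calc (h - c) + (h - c) = h + (-c + h) + -c := by simp [sub_eq_add_neg, add_assoc]
    _ = h + (h + -c) + -c := by rw [h1]
    _ = (h + h) + (-c + -c) := by simp [add_assoc]
    _ = g + (c + c) + (-c + -c) := by rw [hh]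
    _ = g := by simp [add_assoc]

lemma pmv_nsmul_central {c : G} (hc : ∀ w : G, c + w = w + c) (w : G) (n : ℕ) :
    n • c + w = w + n • c := by
  induction n with
  | zero => simp
  | succ n ih =>
    rw [succ_nsmul, add_assoc, hc w, ← add_assoc, ih, add_assoc]

end PMV4

section PMV5
variable {G : Type} [AddGroup G]

lemma pmv_sub_sub_cancel (a b x : G) : (a - x) - (b - x) = a - b := by
  simp [sub_eq_add_neg, neg_add_rev, neg_neg, add_assoc, neg_add_cancel_left]

lemma pmv_neg_sub' (a b : G) : -(a - b) = b - a := by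
  rw [sub_eq_add_neg, neg_add_rev, neg_neg, ← sub_eq_add_neg]

end PMV5

set_option linter.unusedSectionVars false
section SQF
variable {G : Type} [Lattice G] [AddGroup G]
    [CovariantClass G G (· + ·) (· ≤ ·)]
    [CovariantClass G G (Function.swap (· + ·)) (· ≤ ·)]
    {u : G} {r : G → G}

lemma sf_t01 (hu : IsStrongUnit u) (hr : IsSquareRoot u r) : 0 ≤ r 0 ∧ r 0 ≤ u :=
  hr.1 0 le_rfl hu.1

lemma sf_tt (hs : IsStrict u r) : r 0 + r 0 = u := by
  nth_rewrite 1 [hs]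
  rw [negl, sub_add_cancel]

lemma sf_tle (hu : IsStrongUnit u) (hr : IsSquareRoot u r) (hs : IsStrict u r)
    {x : G} (hx0 : 0 ≤ x) (hxu : x ≤ u) : r 0 ≤ r x := by
  obtain ⟨ht0, htu⟩ := sf_t01 hu hr
  apply hr.2.2.1 x (r 0) hx0 hxu ht0 htu
  have h : r 0 - u + r 0 = 0 := by
    rw [← sf_tt hs]
    simp [sub_eq_add_neg, neg_add_rev, add_assoc]
  rw [odot, h, sup_idem]
  exact hx0

lemma sf_ule (hu : IsStrongUnit u) (hr : IsSquareRoot u r) (hs : IsStrict u r)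
    {x : G} (hx0 : 0 ≤ x) (hxu : x ≤ u) : u - r x ≤ r 0 := by
  have h1 : u - r x ≤ u - r 0 := by
    have := add_le_add_right (neg_le_neg_iff.mpr (sf_tle hu hr hs hx0 hxu)) u
    simpa [sub_eq_add_neg] using this
  have hs' : r 0 = u - r 0 := hs
  rw [← hs'] at h1
  exact h1

lemma sf_core (hu : IsStrongUnit u) (hr : IsSquareRoot u r) (hs : IsStrict u r)
    {x : G} (hx0 : 0 ≤ x) (hxu : x ≤ u) : r x - u + r x = x := by
  have h1 : u - r x ≤ r x := le_trans (sf_ule hu hr hs hx0 hxu) (sf_tle hu hr hs hx0 hxu)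
  have h2 : 0 ≤ r x - u + r x := by
    have h3 : -(u - r x) + (u - r x) ≤ -(u - r x) + r x := add_le_add_right h1 _
    have h4 : -(u - r x) = r x - u := by
      rw [sub_eq_add_neg, neg_add_rev, neg_neg, ← sub_eq_add_neg]
    rw [neg_add_cancel, h4] at h3
    exact h3
  have := hr.2.1 x hx0 hxu
  rwa [odot, sup_eq_left.mpr h2] at this

lemma sf_neg (hu : IsStrongUnit u) (hr : IsSquareRoot u r) (hs : IsStrict u r)
    {x : G} (hx0 : 0 ≤ x) (hxu : x ≤ u) : r (negl u x) = u - r x + r 0 := by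
  have h := hr.2.2.2.1 x hx0 hxu
  rw [h, oplus, negl]
  apply inf_eq_left.mpr
  calc u - r x + r 0 ≤ u - r x + r x := add_le_add_right (sf_tle hu hr hs hx0 hxu) _
    _ = u := by rw [sub_add_cancel]

lemma sf_mem_negl {x : G} (hu0 : 0 ≤ u) (hx0 : 0 ≤ x) (hxu : x ≤ u) :
    0 ≤ negl u x ∧ negl u x ≤ u :=
  ⟨sub_nonneg.mpr hxu, by
    show u - x ≤ u
    have h1 : -x ≤ 0 := by simpa using neg_le_neg_iff.mpr hx0
    calc u - x = u + -x := sub_eq_add_neg u x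
      _ ≤ u + 0 := add_le_add_right h1 u
      _ = u := add_zero u⟩

lemma sf_xeq (hu : IsStrongUnit u) (hr : IsSquareRoot u r) (hs : IsStrict u r)
    {x : G} (hx0 : 0 ≤ x) (hxu : x ≤ u) :
    x = (-(r 0) + r x) + (-(r 0) + r x) := by
  obtain ⟨hn0, hnu⟩ := sf_mem_negl hu.1 hx0 hxu
  have e1 : r (negl u x) - u + r (negl u x) = negl u x := sf_core hu hr hs hn0 hnu
  rw [sf_neg hu hr hs hx0 hxu, negl] at e1
  -- e1 : (u - r x + r 0) - u + (u - r x + r 0) = u - x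
  have e2 : u + ((- r x + r 0) + (- r x + r 0)) = u + (-x) := by
    calc u + ((- r x + r 0) + (- r x + r 0))
        = (u - r x + r 0) - u + (u - r x + r 0) := by
          simp [sub_eq_add_neg, add_assoc, neg_add_cancel_left]
      _ = u - x := e1
      _ = u + (-x) := by rw [sub_eq_add_neg]
  have e3 : (- r x + r 0) + (- r x + r 0) = -x := add_left_cancel e2
  have e4 : x = -((- r x + r 0) + (- r x + r 0)) := by rw [e3, neg_neg]
  conv_lhs => rw [e4]
  simp [neg_add_rev, neg_neg]

lemma sf_comm_t (hu : IsStrongUnit u) (hr : IsSquareRoot u r) (hs : IsStrict u r)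
    {x : G} (hx0 : 0 ≤ x) (hxu : x ≤ u) : r 0 + r x = r x + r 0 := by
  have e1 : x = (-(r 0) + r x) + (-(r 0) + r x) := sf_xeq hu hr hs hx0 hxu
  have e2 : x = (r x + -(r 0)) + (-(r 0) + r x) := by
    calc x = r x - u + r x := (sf_core hu hr hs hx0 hxu).symm
      _ = r x + (-(r 0) + -(r 0)) + r x := by rw [← sf_tt hs, sub_eq_add_neg, neg_add_rev]
      _ = (r x + -(r 0)) + (-(r 0) + r x) := by simp [add_assoc]
  have e3 : r x + -(r 0) = -(r 0) + r x := by
    have := e2.symm.trans e1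
    exact add_right_cancel this
  have h4 : r x + (-(r 0) + r 0) = -(r 0) + (r x + r 0) := by
    rw [← add_assoc, e3, add_assoc]
  rw [neg_add_cancel, add_zero] at h4
  have h5 : r 0 + r x = r 0 + (-(r 0) + (r x + r 0)) := by rw [← h4]
  rw [add_neg_cancel_left] at h5
  exact h5

lemma sf_t_int (hu : IsStrongUnit u) (hr : IsSquareRoot u r) (hs : IsStrict u r)
    {x : G} (hx0 : 0 ≤ x) (hxu : x ≤ u) : r 0 + x = x + r 0 := by
  have hxCC : x = (-(r 0) + r x) + (-(r 0) + r x) := sf_xeq hu hr hs hx0 hxu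
  have h1 : r 0 + (-(r 0) + r x) = r x := add_neg_cancel_left _ _
  have h2 : (-(r 0) + r x) + r 0 = r x := by
    rw [add_assoc, ← sf_comm_t hu hr hs hx0 hxu, neg_add_cancel_left]
  have key : r 0 + (-(r 0) + r x) = (-(r 0) + r x) + r 0 := h1.trans h2.symm
  rw [hxCC]
  exact pmv_comm_add key

lemma sf_t_cen (hu : IsStrongUnit u) (hr : IsSquareRoot u r) (hs : IsStrict u r)
    (g : G) : r 0 + g = g + r 0 :=
  pmv_central hu (fun x hx0 hxu => sf_t_int hu hr hs hx0 hxu) g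

lemma sf_u_cen (hu : IsStrongUnit u) (hr : IsSquareRoot u r) (hs : IsStrict u r)
    (g : G) : u + g = g + u := by
  rw [← sf_tt hs, add_assoc, sf_t_cen hu hr hs g, ← add_assoc, sf_t_cen hu hr hs g, add_assoc]

lemma sf_negl_eq_negr (hu : IsStrongUnit u) (hr : IsSquareRoot u r) (hs : IsStrict u r)
    (x : G) : negl u x = negr u x := by
  rw [negl, negr, sub_eq_add_neg, sf_u_cen hu hr hs (-x)]

lemma sf_H (hu : IsStrongUnit u) (hr : IsSquareRoot u r) (hs : IsStrict u r)
    {x : G} (hx0 : 0 ≤ x) (hxu : x ≤ u) :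
    0 ≤ odot u (r x) (r 0) ∧ odot u (r x) (r 0) ≤ u ∧
      odot u (r x) (r 0) + odot u (r x) (r 0) = x := by
  obtain ⟨hr0, hru⟩ := hr.1 x hx0 hxu
  obtain ⟨ht0, htu⟩ := sf_t01 hu hr
  have hval : odot u (r x) (r 0) = r x - u + r 0 := by
    rw [odot]
    apply sup_eq_left.mpr
    have h1 : u - r x ≤ r 0 := sf_ule hu hr hs hx0 hxu
    have h3 : -(u - r x) + (u - r x) ≤ -(u - r x) + r 0 := add_le_add_right h1 _
    have h4 : -(u - r x) = r x - u := by
      rw [sub_eq_add_neg, neg_add_rev, neg_neg, ← sub_eq_add_neg]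
    rw [neg_add_cancel, h4] at h3
    exact h3
  have hle : odot u (r x) (r 0) ≤ u := by
    rw [hval]
    have h1 : r x - u ≤ 0 := sub_nonpos.mpr hru
    calc r x - u + r 0 ≤ 0 + r 0 := add_le_add_left h1 _
      _ = r 0 := zero_add _
      _ ≤ u := htu
  have hge : 0 ≤ odot u (r x) (r 0) := by rw [odot]; exact le_sup_right
  refine ⟨hge, hle, ?_⟩
  rw [hval]
  have hc : r 0 + (r x - u) = (r x - u) + r 0 := by
    have a1 : r 0 + r x = r x + r 0 := sf_comm_t hu hr hs hx0 hxu
    have a2 : r 0 + -u = -u + r 0 := by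
      have := congrArg (fun z => -u + z + -u) (sf_u_cen hu hr hs (r 0))
      simpa [add_assoc, neg_add_cancel_left, add_neg_cancel] using this
    rw [sub_eq_add_neg, ← add_assoc, a1, add_assoc, a2, ← add_assoc]
  calc (r x - u + r 0) + (r x - u + r 0)
      = (r x - u) + (r 0 + (r x - u)) + r 0 := by simp [add_assoc]
    _ = (r x - u) + ((r x - u) + r 0) + r 0 := by rw [hc]
    _ = ((r x - u) + (r x - u)) + (r 0 + r 0) := by simp [add_assoc]
    _ = ((r x - u) + (r x - u)) + u := by rw [sf_tt hs]
    _ = (r x - u) + (r x + (- u + u)) := by simp [sub_eq_add_neg, add_assoc]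
    _ = r x - u + r x := by simp
    _ = x := sf_core hu hr hs hx0 hxu

end SQF

set_option linter.unusedSectionVars false

instance LinUnitalGroup.covL (K : LinUnitalGroup) :
    CovariantClass K.carrier K.carrier (· + ·) (· ≤ ·) :=
  ⟨fun a _ _ h => K.covl a _ _ h⟩

instance LinUnitalGroup.covR (K : LinUnitalGroup) :
    CovariantClass K.carrier K.carrier (Function.swap (· + ·)) (· ≤ ·) :=
  ⟨fun a _ _ h => K.covr a _ _ h⟩


instance PiCovL (ι : Type) (K : ι → LinUnitalGroup) :
    CovariantClass (∀ i, (K i).carrier) (∀ i, (K i).carrier) (· + ·) (· ≤ ·) :=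
  ⟨fun a _ _ h i => (K i).covl (a i) _ _ (h i)⟩

instance PiCovR (ι : Type) (K : ι → LinUnitalGroup) :
    CovariantClass (∀ i, (K i).carrier) (∀ i, (K i).carrier) (Function.swap (· + ·)) (· ≤ ·) :=
  ⟨fun a _ _ h i => (K i).covr (a i) _ _ (h i)⟩

namespace BddP

variable (ι : Type) (K : ι → LinUnitalGroup)

/-- boundedness predicate -/
def Bdd (x : ∀ i, (K i).carrier) : Prop :=
  ∃ n : ℕ, ∀ i, -(n • (K i).u) ≤ x i ∧ x i ≤ n • (K i).u

def T : Type := {x : ∀ i, (K i).carrier // Bdd ι K x}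

variable {ι K}

lemma neg_nsmul_add_neg_nsmul (a : (K i).carrier) (n m : ℕ) :
    -(n • a) + -(m • a) = -((n + m) • a) := by
  rw [← neg_add_rev, ← add_nsmul, Nat.add_comm m n]

lemma bdd_mono {x : ∀ i, (K i).carrier} {n m : ℕ} (hnm : n ≤ m)
    (h : ∀ i, -(n • (K i).u) ≤ x i ∧ x i ≤ n • (K i).u) :
    ∀ i, -(m • (K i).u) ≤ x i ∧ x i ≤ m • (K i).u := by
  intro i
  have hle : n • (K i).u ≤ m • (K i).u := by
    obtain ⟨k, rfl⟩ := Nat.exists_eq_add_of_le hnm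
    rw [add_nsmul]
    exact le_add_of_nonneg_right (nsmul_nonneg (K i).u_nonneg k)
  exact ⟨le_trans (neg_le_neg_iff.mpr hle) (h i).1, le_trans (h i).2 hle⟩

lemma bdd_zero : Bdd ι K (0 : ∀ i, (K i).carrier) :=
  ⟨0, fun i => by simp⟩

lemma bdd_add {x y : ∀ i, (K i).carrier} (hx : Bdd ι K x) (hy : Bdd ι K y) :
    Bdd ι K (x + y) := by
  obtain ⟨n, hn⟩ := hx; obtain ⟨m, hm⟩ := hy
  refine ⟨n + m, fun i => ?_⟩
  rw [Pi.add_apply]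
  constructor
  · rw [← neg_nsmul_add_neg_nsmul]
    exact add_le_add (hn i).1 (hm i).1
  · rw [add_nsmul]
    exact add_le_add (hn i).2 (hm i).2

lemma bdd_neg {x : ∀ i, (K i).carrier} (hx : Bdd ι K x) : Bdd ι K (-x) := by
  obtain ⟨n, hn⟩ := hx
  exact ⟨n, fun i => ⟨neg_le_neg_iff.mpr (hn i).2, by simpa using neg_le_neg_iff.mpr (hn i).1⟩⟩

lemma bdd_sup {x y : ∀ i, (K i).carrier} (hx : Bdd ι K x) (hy : Bdd ι K y) :
    Bdd ι K (x ⊔ y) := by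
  obtain ⟨n, hn⟩ := hx; obtain ⟨m, hm⟩ := hy
  have hn' := bdd_mono (Nat.le_add_right n m) hn
  have hm' := bdd_mono (Nat.le_add_left m n) hm
  refine ⟨n + m, fun i => ?_⟩
  have : (x ⊔ y) i = x i ⊔ y i := rfl
  rw [this]
  exact ⟨le_trans (hn' i).1 le_sup_left, sup_le (hn' i).2 (hm' i).2⟩

lemma bdd_inf {x y : ∀ i, (K i).carrier} (hx : Bdd ι K x) (hy : Bdd ι K y) :
    Bdd ι K (x ⊓ y) := by
  obtain ⟨n, hn⟩ := hx; obtain ⟨m, hm⟩ := hy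
  have hn' := bdd_mono (Nat.le_add_right n m) hn
  have hm' := bdd_mono (Nat.le_add_left m n) hm
  refine ⟨n + m, fun i => ?_⟩
  have : (x ⊓ y) i = x i ⊓ y i := rfl
  rw [this]
  exact ⟨le_inf (hn' i).1 (hm' i).1, le_trans inf_le_left (hn' i).2⟩

variable (ι K)

instance : Zero (T ι K) := ⟨⟨0, bdd_zero⟩⟩
instance : Add (T ι K) := ⟨fun x y => ⟨x.val + y.val, bdd_add x.2 y.2⟩⟩
instance : Neg (T ι K) := ⟨fun x => ⟨-x.val, bdd_neg x.2⟩⟩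

instance : AddGroup (T ι K) :=
  AddGroup.ofLeftAxioms
    (fun a b c => Subtype.ext (add_assoc a.val b.val c.val))
    (fun a => Subtype.ext (zero_add a.val))
    (fun a => Subtype.ext (neg_add_cancel a.val))

variable {ι K}

@[simp] lemma val_add (x y : T ι K) : (x + y).val = x.val + y.val := rfl
@[simp] lemma val_zero : (0 : T ι K).val = 0 := rfl
@[simp] lemma val_neg (x : T ι K) : (-x).val = -x.val := rfl
@[simp] lemma val_sub (x y : T ι K) : (x - y).val = x.val - y.val := by
  rw [sub_eq_add_neg, val_add, val_neg, ← sub_eq_add_neg]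
@[simp] lemma val_nsmul (x : T ι K) (n : ℕ) : ((n • x : T ι K)).val = n • x.val := by
  induction n with
  | zero => rw [zero_nsmul, zero_nsmul]; rfl
  | succ n ih => rw [succ_nsmul, succ_nsmul, val_add, ih]

variable (ι K)

instance : PartialOrder (T ι K) := PartialOrder.lift Subtype.val Subtype.val_injective

variable {ι K}

lemma le_iff {x y : T ι K} : x ≤ y ↔ x.val ≤ y.val := Iff.rfl

variable (ι K)

instance : Lattice (T ι K) where
  sup := fun x y => ⟨x.val ⊔ y.val, bdd_sup x.2 y.2⟩
  inf := fun x y => ⟨x.val ⊓ y.val, bdd_inf x.2 y.2⟩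
  le_sup_left := fun a b => (le_sup_left : a.val ≤ a.val ⊔ b.val)
  le_sup_right := fun a b => (le_sup_right : b.val ≤ a.val ⊔ b.val)
  sup_le := fun a b c h1 h2 => (sup_le h1 h2 : a.val ⊔ b.val ≤ c.val)
  inf_le_left := fun a b => (inf_le_left : a.val ⊓ b.val ≤ a.val)
  inf_le_right := fun a b => (inf_le_right : a.val ⊓ b.val ≤ b.val)
  le_inf := fun a b c h1 h2 => (le_inf h1 h2 : a.val ≤ b.val ⊓ c.val)

variable {ι K}

@[simp] lemma val_sup (x y : T ι K) : (x ⊔ y).val = x.val ⊔ y.val := rfl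
@[simp] lemma val_inf (x y : T ι K) : (x ⊓ y).val = x.val ⊓ y.val := rfl

variable (ι K)

def u0 : T ι K :=
  ⟨fun i => (K i).u, 1, fun i => by
    rw [one_nsmul]
    constructor
    · calc -(K i).u ≤ -0 := neg_le_neg_iff.mpr (K i).u_nonneg
        _ = 0 := neg_zero
        _ ≤ (K i).u := (K i).u_nonneg
    · exact le_rfl⟩

def H : UnitalLGroup where
  carrier := T ι K
  covl := fun a b c h => by
    rw [le_iff, val_add, val_add]
    intro i
    exact (K i).covl _ _ _ (h i)
  covr := fun a b c h => by
    rw [le_iff, val_add, val_add]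
    intro i
    exact (K i).covr _ _ _ (h i)
  u := u0 ι K
  u_nonneg := by
    rw [le_iff, val_zero]
    intro i
    exact (K i).u_nonneg
  strong := by
    intro g
    obtain ⟨n, hn⟩ := g.2
    refine ⟨n + 1, Nat.le_add_left 1 n, ?_⟩
    rw [le_iff, val_nsmul]
    intro i
    calc g.val i ≤ n • (K i).u := (hn i).2
      _ ≤ (n + 1) • (K i).u := by
          rw [succ_nsmul]
          exact le_add_of_nonneg_right (K i).u_nonneg
      _ = ((n + 1) • (u0 ι K).val) i := by rw [Pi.smul_apply]; rfl

end BddP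

set_option linter.unusedSectionVars false
set_option maxHeartbeats 1000000

section Main
variable {G : Type} [Lattice G] [AddGroup G]
    [CovariantClass G G (· + ·) (· ≤ ·)]
    [CovariantClass G G (Function.swap (· + ·)) (· ≤ ·)]
    {u : G} {r : G → G}
    {ι : Type} {K : ι → LinUnitalGroup} {f : G → ∀ i, (K i).carrier}

/-- membership in the interval -/
def memS (u x : G) : Prop := 0 ≤ x ∧ x ≤ u

lemma mem_negl' (hu0 : 0 ≤ u) {x : G} (hx : memS u x) : memS u (negl u x) :=
  sf_mem_negl hu0 hx.1 hx.2

lemma mem_oplus' (hu0 : 0 ≤ u) {x y : G} (hx : memS u x) (hy : memS u y) :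
    memS u (oplus u x y) :=
  ⟨le_inf (add_nonneg hx.1 hy.1) hu0, inf_le_right⟩

lemma mem_odot' (hu0 : 0 ≤ u) {x y : G} (hx : memS u x) (hy : memS u y) :
    memS u (odot u x y) := by
  constructor
  · exact le_sup_right
  · apply sup_le _ hu0
    calc x - u + y ≤ x - u + u := add_le_add_right hy.2 _
      _ = x := sub_add_cancel x u
      _ ≤ u := hx.2

/-- ⊙ in terms of ⊕ and negations -/
lemma Eodot (u x y : G) : odot u x y = negr u (oplus u (negl u y) (negl u x)) := by
  rw [odot, negr, oplus, negl, negl, neg_inf, sup_add, neg_add_cancel]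
  congr 1
  simp [sub_eq_add_neg, neg_add_rev, add_assoc]

lemma Esup (u : G) {x y : G} (hx : x ≤ u) (hy : y ≤ u) :
    x ⊔ y = oplus u (odot u x (negl u y)) y := by
  rw [oplus, odot, negl]
  have h1 : x - u + (u - y) = x - y := by
    simp [sub_eq_add_neg, add_assoc, neg_add_cancel_left]
  rw [h1, sup_add, sub_add_cancel, zero_add]
  exact (inf_eq_left.mpr (sup_le hx hy)).symm

lemma Einf (hucen : ∀ g : G, u + g = g + u) (x y : G) :
    x ⊓ y = negl u ((negl u x) ⊔ (negl u y)) := by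
  rw [negl, negl, negl, sub_eq_add_neg u (_ ⊔ _), neg_sup, add_inf]
  have h1 : ∀ w : G, u + -(u - w) = w := by
    intro w
    have h2 : -(u - w) = w - u := by
      rw [sub_eq_add_neg, neg_add_rev, neg_neg, ← sub_eq_add_neg]
    rw [h2, sub_eq_add_neg, ← add_assoc, hucen w, add_assoc, add_neg_cancel, add_zero]
  rw [h1, h1]

section WithRep

variable (h01 : ∀ x, 0 ≤ x → x ≤ u → ∀ i, 0 ≤ f x i ∧ f x i ≤ (K i).u)
    (h0 : ∀ i, f 0 i = 0)
    (huu : ∀ i, f u i = (K i).u)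
    (hopl : ∀ x y, 0 ≤ x → x ≤ u → 0 ≤ y → y ≤ u → ∀ i,
      f (oplus u x y) i = min (f x i + f y i) (K i).u)
    (hnegl : ∀ x, 0 ≤ x → x ≤ u → ∀ i, f (negl u x) i = (K i).u - f x i)
    (hnegr : ∀ x, 0 ≤ x → x ≤ u → ∀ i, f (negr u x) i = -(f x i) + (K i).u)

include h01 hopl hnegl hnegr in
lemma hfodot (hu0 : 0 ≤ u) {x y : G} (hx : memS u x) (hy : memS u y) (i : ι) :
    f (odot u x y) i = (f x i - (K i).u + f y i) ⊔ 0 := by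
  have my := mem_negl' hu0 hy
  have mx := mem_negl' hu0 hx
  have mo := mem_oplus' hu0 my mx
  rw [Eodot, hnegr _ mo.1 mo.2 i, hopl _ _ my.1 my.2 mx.1 mx.2 i,
      hnegl _ hy.1 hy.2 i, hnegl _ hx.1 hx.2 i]
  rw [neg_inf, sup_add, neg_add_cancel]
  congr 1
  simp [sub_eq_add_neg, neg_add_rev, add_assoc, neg_add_cancel_left]

include h01 hopl hnegl hnegr in
lemma hfsup (hu0 : 0 ≤ u) {x y : G} (hx : memS u x) (hy : memS u y) (i : ι) :
    f (x ⊔ y) i = f x i ⊔ f y i := by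
  have my := mem_negl' hu0 hy
  have mo := mem_odot' hu0 hx my
  rw [Esup u hx.2 hy.2, hopl _ _ mo.1 mo.2 hy.1 hy.2 i,
      hfodot h01 hopl hnegl hnegr hu0 hx my i, hnegl _ hy.1 hy.2 i]
  have h1 : f x i - (K i).u + ((K i).u - f y i) = f x i - f y i := by
    simp [sub_eq_add_neg, add_assoc, neg_add_cancel_left]
  rw [h1, sup_add, sub_add_cancel, zero_add]
  exact inf_eq_left.mpr (sup_le (h01 x hx.1 hx.2 i).2 (h01 y hy.1 hy.2 i).2)

include h01 hopl hnegl hnegr in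
lemma hfmono (hu0 : 0 ≤ u) {x y : G} (hx : memS u x) (hy : memS u y)
    (hxy : x ≤ y) (i : ι) : f x i ≤ f y i := by
  have := hfsup h01 hopl hnegl hnegr hu0 hx hy i
  rw [sup_eq_right.mpr hxy] at this
  rw [this]
  exact le_sup_left

include h01 hopl hnegl hnegr in
lemma hfaddS (hu0 : 0 ≤ u) {x y : G} (hx0 : 0 ≤ x) (hy0 : 0 ≤ y)
    (hxyu : x + y ≤ u) (i : ι) : f (x + y) i = f x i + f y i := by
  have hx : memS u x := ⟨hx0, le_trans (le_add_of_nonneg_right hy0) hxyu⟩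
  have hy : memS u y := ⟨hy0, le_trans (le_add_of_nonneg_left hx0) hxyu⟩
  have hxy : memS u (x + y) := ⟨add_nonneg hx0 hy0, hxyu⟩
  have e : oplus u x y = x + y := inf_eq_left.mpr hxyu
  have h2 : f x i + f y i ≤ (K i).u := by
    have hle : x ≤ negl u y := by
      rw [negl]
      exact le_sub_iff_add_le.mpr hxyu
    have := hfmono h01 hopl hnegl hnegr hu0 hx (mem_negl' hu0 hy) hle i
    rw [hnegl _ hy.1 hy.2 i] at this
    calc f x i + f y i ≤ ((K i).u - f y i) + f y i := add_le_add_left this _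
      _ = (K i).u := sub_add_cancel _ _
  rw [← e, hopl _ _ hx.1 hx.2 hy.1 hy.2 i, min_eq_left h2]

end WithRep
end Main

set_option linter.unusedSectionVars false

section Main2
variable {G : Type} [Lattice G] [AddGroup G]
    [CovariantClass G G (· + ·) (· ≤ ·)]
    [CovariantClass G G (Function.swap (· + ·)) (· ≤ ·)]
    {u : G} {r : G → G}
    {ι : Type} {K : ι → LinUnitalGroup} {f : G → ∀ i, (K i).carrier}

variable (h01 : ∀ x, 0 ≤ x → x ≤ u → ∀ i, 0 ≤ f x i ∧ f x i ≤ (K i).u)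
    (h0 : ∀ i, f 0 i = 0)
    (huu : ∀ i, f u i = (K i).u)
    (hopl : ∀ x y, 0 ≤ x → x ≤ u → 0 ≤ y → y ≤ u → ∀ i,
      f (oplus u x y) i = min (f x i + f y i) (K i).u)
    (hnegl : ∀ x, 0 ≤ x → x ≤ u → ∀ i, f (negl u x) i = (K i).u - f x i)
    (hnegr : ∀ x, 0 ≤ x → x ≤ u → ∀ i, f (negr u x) i = -(f x i) + (K i).u)
    (hsurj : ∀ i, ∀ z : (K i).carrier, 0 ≤ z → z ≤ (K i).u →
      ∃ x, 0 ≤ x ∧ x ≤ u ∧ f x i = z)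

include h01 h0 huu hopl hnegl hnegr hsurj in
lemma hKu_int (hu : IsStrongUnit u) (hr : IsSquareRoot u r) (hs : IsStrict u r)
    (i : ι) (z : (K i).carrier) (hz0 : 0 ≤ z) (hzu : z ≤ (K i).u) :
    z + (K i).u = (K i).u + z := by
  obtain ⟨x, hx0, hxu, hfx⟩ := hsurj i z hz0 hzu
  have e1 := hnegl x hx0 hxu i
  rw [sf_negl_eq_negr hu hr hs x, hnegr x hx0 hxu i, hfx] at e1
  have e : (K i).u + -z = -z + (K i).u := by rw [← sub_eq_add_neg, ← e1]
  have e2' := congrArg (fun w => z + w + z) e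
  simpa [add_assoc, add_neg_cancel_left, neg_add_cancel, add_zero] using e2'

include h01 h0 huu hopl hnegl hnegr hsurj in
lemma hKu_cen (hu : IsStrongUnit u) (hr : IsSquareRoot u r) (hs : IsStrict u r)
    (i : ι) (g : (K i).carrier) : (K i).u + g = g + (K i).u :=
  pmv_central ⟨(K i).u_nonneg, (K i).strong⟩
    (fun z hz0 hzu => (hKu_int h01 h0 huu hopl hnegl hnegr hsurj hu hr hs i z hz0 hzu).symm) g

include h01 h0 huu hopl hnegl hnegr hsurj in
lemma hKnu (hu : IsStrongUnit u) (hr : IsSquareRoot u r) (hs : IsStrict u r)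
    (i : ι) (g : (K i).carrier) : -(K i).u + g = g + -(K i).u :=
  pmv_neg_comm (hKu_cen h01 h0 huu hopl hnegl hnegr hsurj hu hr hs i g)

include h01 h0 huu hopl hnegl hnegr hsurj in
lemma hKmove (hu : IsStrongUnit u) (hr : IsSquareRoot u r) (hs : IsStrict u r)
    (i : ι) (a b : (K i).carrier) : a - (K i).u + b = -(K i).u + (a + b) := by
  rw [sub_eq_add_neg, ← hKnu h01 h0 huu hopl hnegl hnegr hsurj hu hr hs i a, add_assoc]

include h01 h0 huu hopl hnegl hnegr hsurj in
lemma hfinf (hu : IsStrongUnit u) (hr : IsSquareRoot u r) (hs : IsStrict u r)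
    {x y : G} (hx : memS u x) (hy : memS u y) (i : ι) :
    f (x ⊓ y) i = f x i ⊓ f y i := by
  have mx := mem_negl' hu.1 hx
  have my := mem_negl' hu.1 hy
  have mA : memS u ((negl u x) ⊔ (negl u y)) := ⟨le_trans mx.1 le_sup_left, sup_le mx.2 my.2⟩
  rw [Einf (sf_u_cen hu hr hs) x y, hnegl _ mA.1 mA.2 i,
      hfsup h01 hopl hnegl hnegr hu.1 mx my i, hnegl _ hx.1 hx.2 i, hnegl _ hy.1 hy.2 i]
  have hsub2 : ∀ w : (K i).carrier, (K i).u - ((K i).u - w) = w := by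
    intro w
    rw [sub_eq_add_neg ((K i).u) ((K i).u - w), sub_eq_add_neg ((K i).u) w,
        neg_add_rev, neg_neg, ← add_assoc, hKu_cen h01 h0 huu hopl hnegl hnegr hsurj hu hr hs i w,
        add_assoc, add_neg_cancel, add_zero]
  rcases le_total (f x i) (f y i) with h | h
  · have h1 : (K i).u - f y i ≤ (K i).u - f x i := by
      have := add_le_add_right (neg_le_neg_iff.mpr h) ((K i).u)
      simpa [sub_eq_add_neg] using this
    rw [sup_eq_left.mpr h1, hsub2, inf_eq_left.mpr h]
  · have h1 : (K i).u - f x i ≤ (K i).u - f y i := by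
      have := add_le_add_right (neg_le_neg_iff.mpr h) ((K i).u)
      simpa [sub_eq_add_neg] using this
    rw [sup_eq_right.mpr h1, hsub2, inf_eq_right.mpr h]

include h01 h0 huu hopl hnegl hnegr hsurj in
lemma hKtautau (hu : IsStrongUnit u) (hr : IsSquareRoot u r) (hs : IsStrict u r)
    (i : ι) : f (r 0) i + f (r 0) i = (K i).u := by
  have mt : memS u (r 0) := sf_t01 hu hr
  have e1 : oplus u (r 0) (r 0) = u := by rw [oplus, sf_tt hs, inf_idem]
  have e2 := hopl (r 0) (r 0) mt.1 mt.2 mt.1 mt.2 i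
  rw [e1, huu i] at e2
  have hge : (K i).u ≤ f (r 0) i + f (r 0) i := inf_eq_right.mp e2.symm
  have e3 : odot u (r 0) (r 0) = 0 := by
    have h : r 0 - u + r 0 = 0 := by
      rw [← sf_tt hs]; simp [sub_eq_add_neg, neg_add_rev, add_assoc]
    rw [odot, h, sup_idem]
  have e4 := hfodot h01 hopl hnegl hnegr hu.1 mt mt i
  rw [e3, h0 i] at e4
  have h5 : f (r 0) i - (K i).u + f (r 0) i ≤ 0 := sup_eq_right.mp e4.symm
  rw [hKmove h01 h0 huu hopl hnegl hnegr hsurj hu hr hs i] at h5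
  have h6 := add_le_add_left h5 ((K i).u)
  simpa [add_neg_cancel_left] using le_antisymm (by simpa [add_neg_cancel_left] using h6) hge

include h01 h0 huu hopl hnegl hnegr hsurj in
lemma hKtau_int (hu : IsStrongUnit u) (hr : IsSquareRoot u r) (hs : IsStrict u r)
    (i : ι) (z : (K i).carrier) (hz0 : 0 ≤ z) (hzu : z ≤ (K i).u) :
    f (r 0) i + z = z + f (r 0) i := by
  obtain ⟨x, hx0, hxu, rfl⟩ := hsurj i z hz0 hzu
  have mt : memS u (r 0) := sf_t01 hu hr
  have mx : memS u x := ⟨hx0, hxu⟩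
  have hnu : ∀ g : G, -u + g = g + -u := fun g => pmv_neg_comm (sf_u_cen hu hr hs g)
  have e1 : oplus u (r 0) x = oplus u x (r 0) := by
    rw [oplus, oplus, sf_t_cen hu hr hs x]
  have e2 : (f (r 0) i + f x i) ⊓ (K i).u = (f x i + f (r 0) i) ⊓ (K i).u := by
    have a1 := hopl (r 0) x mt.1 mt.2 hx0 hxu i
    have a2 := hopl x (r 0) hx0 hxu mt.1 mt.2 i
    rw [e1] at a1
    rw [a2] at a1
    exact a1.symm
  have e3 : odot u (r 0) x = odot u x (r 0) := by
    rw [odot, odot]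
    congr 1
    rw [sub_eq_add_neg, sub_eq_add_neg, ← hnu (r 0), add_assoc, sf_t_cen hu hr hs x,
        ← add_assoc, hnu x]
  have e4 : (-(K i).u + (f (r 0) i + f x i)) ⊔ 0 = (-(K i).u + (f x i + f (r 0) i)) ⊔ 0 := by
    have a1 := hfodot h01 hopl hnegl hnegr hu.1 mt mx i
    have a2 := hfodot h01 hopl hnegl hnegr hu.1 mx mt i
    rw [e3] at a1
    rw [a2] at a1
    rw [← hKmove h01 h0 huu hopl hnegl hnegr hsurj hu hr hs i, ← hKmove h01 h0 huu hopl hnegl hnegr hsurj hu hr hs i]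
    exact a1.symm
  calc f (r 0) i + f x i
      = ((f (r 0) i + f x i) ⊓ (K i).u) + ((-(K i).u + (f (r 0) i + f x i)) ⊔ 0) :=
        (pmv_dec' _ _).symm
    _ = ((f x i + f (r 0) i) ⊓ (K i).u) + ((-(K i).u + (f x i + f (r 0) i)) ⊔ 0) := by
        rw [e2, e4]
    _ = f x i + f (r 0) i := pmv_dec' _ _

include h01 h0 huu hopl hnegl hnegr hsurj in
lemma hKtau_cen (hu : IsStrongUnit u) (hr : IsSquareRoot u r) (hs : IsStrict u r)
    (i : ι) (g : (K i).carrier) : f (r 0) i + g = g + f (r 0) i :=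
  pmv_central ⟨(K i).u_nonneg, (K i).strong⟩
    (fun z hz0 hzu => hKtau_int h01 h0 huu hopl hnegl hnegr hsurj hu hr hs i z hz0 hzu) g

include h01 h0 huu hopl hnegl hnegr hsurj in
lemma hKhalf (hu : IsStrongUnit u) (hr : IsSquareRoot u r) (hs : IsStrict u r)
    (i : ι) (z : (K i).carrier) (hz0 : 0 ≤ z) (hzu : z ≤ (K i).u) :
    ∃ h, 0 ≤ h ∧ h + h = z := by
  obtain ⟨x, hx0, hxu, rfl⟩ := hsurj i z hz0 hzu
  obtain ⟨hH0, hHu, hHsum⟩ := sf_H hu hr hs hx0 hxu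
  refine ⟨f (odot u (r x) (r 0)) i, (h01 _ hH0 hHu i).1, ?_⟩
  have h2 := hfaddS h01 hopl hnegl hnegr hu.1 hH0 hH0 (by rw [hHsum]; exact hxu) i
  rw [hHsum] at h2
  exact h2.symm

include h01 h0 huu hopl hnegl hnegr hsurj in
lemma hKpos (hu : IsStrongUnit u) (hr : IsSquareRoot u r) (hs : IsStrict u r)
    (i : ι) : ∀ n : ℕ, ∀ g : (K i).carrier, 0 ≤ g → g ≤ n • (K i).u →
      ∃ h, h + h = g := by
  intro n
  induction n with
  | zero =>
    intro g hg0 hgn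
    rw [zero_nsmul] at hgn
    exact ⟨0, by simp [le_antisymm hgn hg0]⟩
  | succ n ih =>
    intro g hg0 hgn
    rcases le_total g ((K i).u) with h | h
    · obtain ⟨h', -, hh'⟩ := hKhalf h01 h0 huu hopl hnegl hnegr hsurj hu hr hs i g hg0 h
      exact ⟨h', hh'⟩
    · have hg0' : 0 ≤ g - (K i).u := sub_nonneg.mpr h
      have hgn' : g - (K i).u ≤ n • (K i).u := by
        rw [sub_le_iff_le_add]
        rwa [succ_nsmul] at hgn
      obtain ⟨h0', hh0⟩ := ih (g - (K i).u) hg0' hgn'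
      refine ⟨h0' + f (r 0) i, ?_⟩
      have hc := hKtau_cen h01 h0 huu hopl hnegl hnegr hsurj hu hr hs i h0'
      calc (h0' + f (r 0) i) + (h0' + f (r 0) i)
          = h0' + (f (r 0) i + h0') + f (r 0) i := by simp [add_assoc]
        _ = h0' + (h0' + f (r 0) i) + f (r 0) i := by rw [hc]
        _ = (h0' + h0') + (f (r 0) i + f (r 0) i) := by simp [add_assoc]
        _ = (g - (K i).u) + (K i).u := by
            rw [hh0, hKtautau h01 h0 huu hopl hnegl hnegr hsurj hu hr hs i]
        _ = g := sub_add_cancel _ _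

include h01 h0 huu hopl hnegl hnegr hsurj in
lemma hKdiv (hu : IsStrongUnit u) (hr : IsSquareRoot u r) (hs : IsStrict u r)
    (i : ι) (g : (K i).carrier) : ∃ h, h + h = g := by
  obtain ⟨n₁, -, hn₁⟩ := (K i).strong g
  obtain ⟨n₂, -, hn₂⟩ := (K i).strong (-g)
  have hg0' : 0 ≤ g + n₂ • (K i).u := by
    have := add_le_add_right hn₂ g
    simpa using this
  have hgn' : g + n₂ • (K i).u ≤ (n₁ + n₂) • (K i).u := by
    rw [add_nsmul]
    exact add_le_add_left hn₁ _
  obtain ⟨h', hh'⟩ := hKpos h01 h0 huu hopl hnegl hnegr hsurj hu hr hs i (n₁ + n₂) _ hg0' hgn'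
  refine ⟨h' - n₂ • (f (r 0) i), ?_⟩
  apply pmv_shift_half
  · exact fun w => pmv_nsmul_central (hKtau_cen h01 h0 huu hopl hnegl hnegr hsurj hu hr hs i) w n₂
  · rw [hh']
    congr 1
    rw [pmv_two_nsmul, hKtautau h01 h0 huu hopl hnegl hnegr hsurj hu hr hs i]

end Main2

set_option linter.unusedSectionVars false

/-- coordinatewise sum of `f`-images of a list -/
def fsum {G : Type} {ι : Type} {K : ι → LinUnitalGroup} (f : G → ∀ i, (K i).carrier)
    (L : List G) : ∀ i, (K i).carrier :=
  fun i => (L.map (fun x => f x i)).sum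

section Main3
variable {G : Type} [Lattice G] [AddGroup G]
    [CovariantClass G G (· + ·) (· ≤ ·)]
    [CovariantClass G G (Function.swap (· + ·)) (· ≤ ·)]
    {u : G} {r : G → G}
    {ι : Type} {K : ι → LinUnitalGroup} {f : G → ∀ i, (K i).carrier}

@[simp] lemma fsum_nil (i : ι) : fsum f ([] : List G) i = 0 := rfl

@[simp] lemma fsum_cons (x : G) (L : List G) (i : ι) :
    fsum f (x :: L) i = f x i + fsum f L i := by
  simp [fsum]

@[simp] lemma fsum_append (L L' : List G) (i : ι) :
    fsum f (L ++ L') i = fsum f L i + fsum f L' i := by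
  simp [fsum]

variable (h01 : ∀ x, 0 ≤ x → x ≤ u → ∀ i, 0 ≤ f x i ∧ f x i ≤ (K i).u)
    (h0 : ∀ i, f 0 i = 0)
    (huu : ∀ i, f u i = (K i).u)
    (hopl : ∀ x y, 0 ≤ x → x ≤ u → 0 ≤ y → y ≤ u → ∀ i,
      f (oplus u x y) i = min (f x i + f y i) (K i).u)
    (hnegl : ∀ x, 0 ≤ x → x ≤ u → ∀ i, f (negl u x) i = (K i).u - f x i)
    (hnegr : ∀ x, 0 ≤ x → x ≤ u → ∀ i, f (negr u x) i = -(f x i) + (K i).u)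
    (hsurj : ∀ i, ∀ z : (K i).carrier, 0 ≤ z → z ≤ (K i).u →
      ∃ x, 0 ≤ x ∧ x ≤ u ∧ f x i = z)

include h01 in
lemma fsum_nonneg : ∀ L : List G, (∀ x ∈ L, memS u x) → ∀ i, 0 ≤ fsum f L i := by
  intro L
  induction L with
  | nil => intro _ i; simp
  | cons x L ih =>
    intro h i
    rw [fsum_cons]
    have hx := h x (List.mem_cons_self)
    exact add_nonneg (h01 x hx.1 hx.2 i).1 (ih (fun y hy => h y (List.mem_cons_of_mem x hy)) i)

include h01 in
lemma fsum_le : ∀ L : List G, (∀ x ∈ L, memS u x) → ∀ i,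
    fsum f L i ≤ L.length • (K i).u := by
  intro L
  induction L with
  | nil => intro _ i; simp
  | cons x L ih =>
    intro h i
    rw [fsum_cons, List.length_cons, succ_nsmul]
    have hx := h x (List.mem_cons_self)
    calc f x i + fsum f L i ≤ (K i).u + L.length • (K i).u :=
          add_le_add (h01 x hx.1 hx.2 i).2 (ih (fun y hy => h y (List.mem_cons_of_mem x hy)) i)
      _ = L.length • (K i).u + (K i).u := by
          rw [← pmv_nsmul_self_comm]
  
include h0 in
lemma fsum_zero : ∀ L : List G, (∀ x ∈ L, x = 0) → ∀ i, fsum f L i = 0 := by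
  intro L
  induction L with
  | nil => intro _ i; simp
  | cons x L ih =>
    intro h i
    rw [fsum_cons, h x (List.mem_cons_self), h0 i, zero_add]
    exact ih (fun y hy => h y (List.mem_cons_of_mem x hy)) i

include h01 h0 huu hopl hnegl hnegr hsurj in
lemma subtract_list (hu : IsStrongUnit u) (hr : IsSquareRoot u r) (hs : IsStrict u r) :
    ∀ B : List G, ∀ v : G, memS u v → (∀ x ∈ B, memS u x) → v ≤ B.sum →
    ∃ B' : List G, (∀ x ∈ B', memS u x) ∧ B.sum = v + B'.sum ∧
      (∀ i, fsum f B i = f v i + fsum f B' i) ∧ B'.length = B.length := by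
  intro B
  induction B with
  | nil =>
    intro v hv _ hle
    have hv0 : v = 0 := le_antisymm (by simpa using hle) hv.1
    exact ⟨[], by simp, by simp [hv0], fun i => by simp [hv0, h0 i], rfl⟩
  | cons w B0 ih =>
    intro v hv hmem hle
    have hw : memS u w := hmem w (List.mem_cons_self)
    have hB0 : ∀ x ∈ B0, memS u x := fun x hx => hmem x (List.mem_cons_of_mem w hx)
    have hz0 : 0 ≤ v ⊓ w := le_inf hv.1 hw.1
    have hzu : v ⊓ w ≤ u := le_trans inf_le_left hv.2
    have hnz : -(v ⊓ w) ≤ 0 := by simpa using neg_le_neg_iff.mpr hz0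
    have hv' : memS u (-(v ⊓ w) + v) := by
      constructor
      · have := add_le_add_left (inf_le_left : v ⊓ w ≤ v) (-(v ⊓ w))
        simpa using this
      · have h2 : -(v ⊓ w) + v ≤ 0 + v := add_le_add_left hnz v
        rw [zero_add] at h2
        exact le_trans h2 hv.2
    have hw' : memS u (-(v ⊓ w) + w) := by
      constructor
      · have := add_le_add_left (inf_le_right : v ⊓ w ≤ w) (-(v ⊓ w))
        simpa using this
      · have h2 : -(v ⊓ w) + w ≤ 0 + w := add_le_add_left hnz w
        rw [zero_add] at h2
        exact le_trans h2 hw.2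
    have split_v : (v ⊓ w) + (-(v ⊓ w) + v) = v := add_neg_cancel_left _ _
    have split_w : (v ⊓ w) + (-(v ⊓ w) + w) = w := add_neg_cancel_left _ _
    have disj : (-(v ⊓ w) + v) ⊓ (-(v ⊓ w) + w) = 0 := by
      rw [← add_inf, neg_add_cancel]
    have hcomm : (-(v ⊓ w) + v) + (-(v ⊓ w) + w) = (-(v ⊓ w) + w) + (-(v ⊓ w) + v) :=
      pmv_disj_comm disj
    have hle2 : v ≤ w + B0.sum := by simpa [List.sum_cons] using hle
    have s0 : 0 ≤ B0.sum := pmv_list_sum_nonneg B0 (fun x hx => (hB0 x hx).1)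
    have v'le : -(v ⊓ w) + v ≤ B0.sum := by
      have h1 : -(v ⊓ w) + v ≤ (-(v ⊓ w) + w) + B0.sum := by
        have := add_le_add_right hle2 (-(v ⊓ w))
        rwa [← add_assoc] at this
      have h2 : (-(v ⊓ w) + v) ⊓ ((-(v ⊓ w) + w) + B0.sum) = -(v ⊓ w) + v :=
        inf_eq_left.mpr h1
      have h3 := pmv_riesz hv'.1 hw'.1 s0
      rw [h2, disj, zero_add] at h3
      exact le_trans h3 inf_le_right
    obtain ⟨B0', hm', hsum', hfs', hlen'⟩ := ih (-(v ⊓ w) + v) hv' hB0 v'le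
    refine ⟨(-(v ⊓ w) + w) :: B0', ?_, ?_, ?_, ?_⟩
    · intro x hx
      rcases List.mem_cons.mp hx with h1 | h1
      · exact h1 ▸ hw'
      · exact hm' x h1
    · rw [List.sum_cons, List.sum_cons, hsum']
      calc w + ((-(v ⊓ w) + v) + B0'.sum)
          = ((v ⊓ w) + (-(v ⊓ w) + w)) + ((-(v ⊓ w) + v) + B0'.sum) := by rw [split_w]
        _ = (v ⊓ w) + ((-(v ⊓ w) + w) + (-(v ⊓ w) + v)) + B0'.sum := by
            simp [add_assoc]
        _ = (v ⊓ w) + ((-(v ⊓ w) + v) + (-(v ⊓ w) + w)) + B0'.sum := by rw [← hcomm]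
        _ = ((v ⊓ w) + (-(v ⊓ w) + v)) + ((-(v ⊓ w) + w) + B0'.sum) := by
            simp [add_assoc]
        _ = v + ((-(v ⊓ w) + w) + B0'.sum) := by rw [split_v]
    · intro i
      have fw : f w i = f (v ⊓ w) i + f (-(v ⊓ w) + w) i := by
        have h4 := hfaddS h01 hopl hnegl hnegr hu.1 hz0 hw'.1
          (by rw [split_w]; exact hw.2) i
        rw [split_w] at h4
        exact h4
      have fv : f v i = f (v ⊓ w) i + f (-(v ⊓ w) + v) i := by
        have h4 := hfaddS h01 hopl hnegl hnegr hu.1 hz0 hv'.1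
          (by rw [split_v]; exact hv.2) i
        rw [split_v] at h4
        exact h4
      have fdisj : f (-(v ⊓ w) + v) i ⊓ f (-(v ⊓ w) + w) i = 0 := by
        have h4 := hfinf h01 h0 huu hopl hnegl hnegr hsurj hu hr hs hv' hw' i
        rw [disj, h0 i] at h4
        exact h4.symm
      have fcomm : f (-(v ⊓ w) + v) i + f (-(v ⊓ w) + w) i
          = f (-(v ⊓ w) + w) i + f (-(v ⊓ w) + v) i := pmv_disj_comm fdisj
      rw [fsum_cons, fsum_cons, hfs' i, fw, fv]
      calc (f (v ⊓ w) i + f (-(v ⊓ w) + w) i) + (f (-(v ⊓ w) + v) i + fsum f B0' i)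
          = f (v ⊓ w) i + (f (-(v ⊓ w) + w) i + f (-(v ⊓ w) + v) i) + fsum f B0' i := by
            simp [add_assoc]
        _ = f (v ⊓ w) i + (f (-(v ⊓ w) + v) i + f (-(v ⊓ w) + w) i) + fsum f B0' i := by
            rw [← fcomm]
        _ = (f (v ⊓ w) i + f (-(v ⊓ w) + v) i) + (f (-(v ⊓ w) + w) i + fsum f B0' i) := by
            simp [add_assoc]
    · simp [hlen']

include h01 h0 huu hopl hnegl hnegr hsurj in
lemma invar_list (hu : IsStrongUnit u) (hr : IsSquareRoot u r) (hs : IsStrict u r) :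
    ∀ N : ℕ, ∀ L L' : List G, L.length + L'.length ≤ N →
      (∀ x ∈ L, memS u x) → (∀ x ∈ L', memS u x) → L.sum = L'.sum →
      ∀ i, fsum f L i = fsum f L' i := by
  intro N
  induction N with
  | zero =>
    intro L L' hlen _ _ _ i
    have hL : L = [] := List.length_eq_zero_iff.mp (by omega)
    have hL' : L' = [] := List.length_eq_zero_iff.mp (by omega)
    rw [hL, hL']
  | succ N ih =>
    intro L L' hlen hm hm' hsum i
    rcases L with _ | ⟨x, A⟩
    · -- L = [], so all elements of L' are 0
      have h1 : L'.sum = 0 := by simpa using hsum.symm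
      have h2 : ∀ y ∈ L', y = 0 :=
        pmv_list_sum_eq_zero L' (fun y hy => (hm' y hy).1) h1
      rw [fsum_zero h0 L' h2 i]
      simp
    rcases L' with _ | ⟨y, B⟩
    · have h1 : (x :: A).sum = 0 := by simpa using hsum
      have h2 : ∀ z ∈ (x :: A), z = 0 :=
        pmv_list_sum_eq_zero _ (fun z hz => (hm z hz).1) h1
      rw [fsum_zero h0 _ h2 i]
      simp
    -- main case
    have hx : memS u x := hm x (List.mem_cons_self)
    have hy : memS u y := hm' y (List.mem_cons_self)
    have hA : ∀ z ∈ A, memS u z := fun z hz => hm z (List.mem_cons_of_mem x hz)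
    have hB : ∀ z ∈ B, memS u z := fun z hz => hm' z (List.mem_cons_of_mem y hz)
    have hz0 : 0 ≤ x ⊓ y := le_inf hx.1 hy.1
    have hzu : x ⊓ y ≤ u := le_trans inf_le_left hx.2
    have hnz : -(x ⊓ y) ≤ 0 := by simpa using neg_le_neg_iff.mpr hz0
    have hx' : memS u (-(x ⊓ y) + x) := by
      constructor
      · have := add_le_add_left (inf_le_left : x ⊓ y ≤ x) (-(x ⊓ y))
        simpa using this
      · have h2 : -(x ⊓ y) + x ≤ 0 + x := add_le_add_left hnz x
        rw [zero_add] at h2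
        exact le_trans h2 hx.2
    have hy' : memS u (-(x ⊓ y) + y) := by
      constructor
      · have := add_le_add_left (inf_le_right : x ⊓ y ≤ y) (-(x ⊓ y))
        simpa using this
      · have h2 : -(x ⊓ y) + y ≤ 0 + y := add_le_add_left hnz y
        rw [zero_add] at h2
        exact le_trans h2 hy.2
    have split_x : (x ⊓ y) + (-(x ⊓ y) + x) = x := add_neg_cancel_left _ _
    have split_y : (x ⊓ y) + (-(x ⊓ y) + y) = y := add_neg_cancel_left _ _
    have disj : (-(x ⊓ y) + x) ⊓ (-(x ⊓ y) + y) = 0 := by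
      rw [← add_inf, neg_add_cancel]
    have hcomm : (-(x ⊓ y) + x) + (-(x ⊓ y) + y) = (-(x ⊓ y) + y) + (-(x ⊓ y) + x) :=
      pmv_disj_comm disj
    have hsA : 0 ≤ A.sum := pmv_list_sum_nonneg A (fun z hz => (hA z hz).1)
    have hsB : 0 ≤ B.sum := pmv_list_sum_nonneg B (fun z hz => (hB z hz).1)
    -- x' + A.sum = y' + B.sum
    have key : (-(x ⊓ y) + x) + A.sum = (-(x ⊓ y) + y) + B.sum := by
      rw [add_assoc, add_assoc]
      have : x + A.sum = y + B.sum := by simpa [List.sum_cons] using hsum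
      rw [this]
    have x'le : -(x ⊓ y) + x ≤ B.sum := by
      have h1 : -(x ⊓ y) + x ≤ (-(x ⊓ y) + y) + B.sum := by
        calc -(x ⊓ y) + x ≤ (-(x ⊓ y) + x) + A.sum := le_add_of_nonneg_right hsA
          _ = (-(x ⊓ y) + y) + B.sum := key
      have h2 : (-(x ⊓ y) + x) ⊓ ((-(x ⊓ y) + y) + B.sum) = -(x ⊓ y) + x :=
        inf_eq_left.mpr h1
      have h3 := pmv_riesz hx'.1 hy'.1 hsB
      rw [h2, disj, zero_add] at h3
      exact le_trans h3 inf_le_right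
    obtain ⟨B', hmB', hsumB', hfsB', hlenB'⟩ :=
      subtract_list h01 h0 huu hopl hnegl hnegr hsurj hu hr hs B (-(x ⊓ y) + x) hx' hB x'le
    -- A.sum = y' + B'.sum
    have hAsum : A.sum = ((-(x ⊓ y) + y) :: B').sum := by
      rw [List.sum_cons]
      have e1 : (-(x ⊓ y) + x) + A.sum = (-(x ⊓ y) + x) + ((-(x ⊓ y) + y) + B'.sum) := by
        rw [key, hsumB']
        calc (-(x ⊓ y) + y) + ((-(x ⊓ y) + x) + B'.sum)
            = ((-(x ⊓ y) + y) + (-(x ⊓ y) + x)) + B'.sum := by rw [← add_assoc]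
          _ = ((-(x ⊓ y) + x) + (-(x ⊓ y) + y)) + B'.sum := by rw [← hcomm]
          _ = (-(x ⊓ y) + x) + ((-(x ⊓ y) + y) + B'.sum) := by rw [add_assoc]
      exact add_left_cancel e1
    have hrec := ih A ((-(x ⊓ y) + y) :: B')
      (by simp at hlen ⊢; rw [hlenB']; omega)
      hA
      (by
        intro z hz
        rcases List.mem_cons.mp hz with h1 | h1
        · exact h1 ▸ hy'
        · exact hmB' z h1)
      hAsum i
    rw [fsum_cons] at hrec
    -- f-additivity on x, y
    have fx : f x i = f (x ⊓ y) i + f (-(x ⊓ y) + x) i := by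
      have h4 := hfaddS h01 hopl hnegl hnegr hu.1 hz0 hx'.1 (by rw [split_x]; exact hx.2) i
      rw [split_x] at h4
      exact h4
    have fy : f y i = f (x ⊓ y) i + f (-(x ⊓ y) + y) i := by
      have h4 := hfaddS h01 hopl hnegl hnegr hu.1 hz0 hy'.1 (by rw [split_y]; exact hy.2) i
      rw [split_y] at h4
      exact h4
    have fdisj : f (-(x ⊓ y) + x) i ⊓ f (-(x ⊓ y) + y) i = 0 := by
      have h4 := hfinf h01 h0 huu hopl hnegl hnegr hsurj hu hr hs hx' hy' i
      rw [disj, h0 i] at h4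
      exact h4.symm
    have fcomm : f (-(x ⊓ y) + x) i + f (-(x ⊓ y) + y) i
        = f (-(x ⊓ y) + y) i + f (-(x ⊓ y) + x) i := pmv_disj_comm fdisj
    rw [fsum_cons, fsum_cons, hrec, hfsB' i, fx, fy]
    calc (f (x ⊓ y) i + f (-(x ⊓ y) + x) i) + (f (-(x ⊓ y) + y) i + fsum f B' i)
        = f (x ⊓ y) i + (f (-(x ⊓ y) + x) i + f (-(x ⊓ y) + y) i) + fsum f B' i := by
          simp [add_assoc]
      _ = f (x ⊓ y) i + (f (-(x ⊓ y) + y) i + f (-(x ⊓ y) + x) i) + fsum f B' i := by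
          rw [fcomm]
      _ = (f (x ⊓ y) i + f (-(x ⊓ y) + y) i) + (f (-(x ⊓ y) + x) i + fsum f B' i) := by
          simp [add_assoc]

end Main3

set_option linter.unusedSectionVars false

open Classical in
/-- value of the extension on positive elements, via a choice of decomposition -/
noncomputable def phip {G : Type} [Lattice G] [AddGroup G] {ι : Type} {K : ι → LinUnitalGroup}
    (u : G) (f : G → ∀ i, (K i).carrier) (p : G) : ∀ i, (K i).carrier :=
  if h : ∃ L : List G, (∀ x ∈ L, memS u x) ∧ L.sum = p then fsum f h.choose else 0

/-- the extension homomorphism -/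
noncomputable def phi {G : Type} [Lattice G] [AddGroup G] {ι : Type} {K : ι → LinUnitalGroup}
    (u : G) (f : G → ∀ i, (K i).carrier) (g : G) : ∀ i, (K i).carrier :=
  phip u f (g ⊔ 0) - phip u f ((-g) ⊔ 0)

section Main4
variable {G : Type} [Lattice G] [AddGroup G]
    [CovariantClass G G (· + ·) (· ≤ ·)]
    [CovariantClass G G (Function.swap (· + ·)) (· ≤ ·)]
    {u : G} {r : G → G}
    {ι : Type} {K : ι → LinUnitalGroup} {f : G → ∀ i, (K i).carrier}

variable (h01 : ∀ x, 0 ≤ x → x ≤ u → ∀ i, 0 ≤ f x i ∧ f x i ≤ (K i).u)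
    (h0 : ∀ i, f 0 i = 0)
    (huu : ∀ i, f u i = (K i).u)
    (hopl : ∀ x y, 0 ≤ x → x ≤ u → 0 ≤ y → y ≤ u → ∀ i,
      f (oplus u x y) i = min (f x i + f y i) (K i).u)
    (hnegl : ∀ x, 0 ≤ x → x ≤ u → ∀ i, f (negl u x) i = (K i).u - f x i)
    (hnegr : ∀ x, 0 ≤ x → x ≤ u → ∀ i, f (negr u x) i = -(f x i) + (K i).u)
    (hinj : ∀ x y, 0 ≤ x → x ≤ u → 0 ≤ y → y ≤ u → (∀ i, f x i = f y i) → x = y)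
    (hsurj : ∀ i, ∀ z : (K i).carrier, 0 ≤ z → z ≤ (K i).u →
      ∃ x, 0 ≤ x ∧ x ≤ u ∧ f x i = z)

include h01 h0 huu hopl hnegl hnegr hsurj in
lemma phip_spec (hu : IsStrongUnit u) (hr : IsSquareRoot u r) (hs : IsStrict u r)
    (p : G) (L : List G) (hm : ∀ x ∈ L, memS u x) (hsum : L.sum = p) :
    phip u f p = fsum f L := by
  have hex : ∃ L₀ : List G, (∀ x ∈ L₀, memS u x) ∧ L₀.sum = p := ⟨L, hm, hsum⟩
  funext i
  unfold phip
  rw [dif_pos hex]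
  exact invar_list h01 h0 huu hopl hnegl hnegr hsurj hu hr hs
    (hex.choose.length + L.length) hex.choose L le_rfl hex.choose_spec.1 hm
    (hex.choose_spec.2.trans hsum.symm) i

lemma exList (hu : IsStrongUnit u) (p : G) (hp : 0 ≤ p) :
    ∃ L : List G, (∀ x ∈ L, memS u x) ∧ L.sum = p := by
  obtain ⟨n, -, hn⟩ := hu.2 p
  exact pmv_poslist hu.1 n p hp hn

include h01 h0 huu hopl hnegl hnegr hsurj in
lemma phip_zero (hu : IsStrongUnit u) (hr : IsSquareRoot u r) (hs : IsStrict u r) :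
    phip u f 0 = 0 := by
  rw [phip_spec h01 h0 huu hopl hnegl hnegr hsurj hu hr hs 0 [] (by simp) (by simp)]
  funext i
  simp

include h01 h0 huu hopl hnegl hnegr hsurj in
lemma phip_add (hu : IsStrongUnit u) (hr : IsSquareRoot u r) (hs : IsStrict u r)
    (p q : G) (hp : 0 ≤ p) (hq : 0 ≤ q) :
    phip u f (p + q) = phip u f p + phip u f q := by
  obtain ⟨Lp, hmp, hsp⟩ := exList hu p hp
  obtain ⟨Lq, hmq, hsq⟩ := exList hu q hq
  rw [phip_spec h01 h0 huu hopl hnegl hnegr hsurj hu hr hs p Lp hmp hsp,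
      phip_spec h01 h0 huu hopl hnegl hnegr hsurj hu hr hs q Lq hmq hsq,
      phip_spec h01 h0 huu hopl hnegl hnegr hsurj hu hr hs (p + q) (Lp ++ Lq)
      (by intro x hx; rcases List.mem_append.mp hx with h | h
          exacts [hmp x h, hmq x h])
      (by rw [List.sum_append, hsp, hsq])]
  funext i
  rw [fsum_append]
  rfl

include h01 h0 huu hopl hnegl hnegr hsurj in
lemma phip_nonneg (hu : IsStrongUnit u) (hr : IsSquareRoot u r) (hs : IsStrict u r)
    (p : G) (hp : 0 ≤ p) (i : ι) : 0 ≤ phip u f p i := by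
  obtain ⟨Lp, hmp, hsp⟩ := exList hu p hp
  rw [phip_spec h01 h0 huu hopl hnegl hnegr hsurj hu hr hs p Lp hmp hsp]
  exact fsum_nonneg h01 Lp hmp i

include h01 h0 huu hopl hnegl hnegr hsurj in
lemma phip_bound (hu : IsStrongUnit u) (hr : IsSquareRoot u r) (hs : IsStrict u r)
    (p : G) (hp : 0 ≤ p) : ∃ m : ℕ, ∀ i, phip u f p i ≤ m • (K i).u := by
  obtain ⟨Lp, hmp, hsp⟩ := exList hu p hp
  rw [phip_spec h01 h0 huu hopl hnegl hnegr hsurj hu hr hs p Lp hmp hsp]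
  exact ⟨Lp.length, fun i => fsum_le h01 Lp hmp i⟩

include h01 in
lemma fsum_pos (i : ι) : ∀ L : List G, (∀ x ∈ L, memS u x) → 0 < fsum f L i →
    ∃ x ∈ L, 0 < f x i := by
  intro L
  induction L with
  | nil => intro _ h; simp at h
  | cons w L ih =>
    intro hm hpos
    have hw := hm w (List.mem_cons_self)
    rcases lt_or_ge 0 (f w i) with h | h
    · exact ⟨w, List.mem_cons_self, h⟩
    · have hw0 : f w i = 0 := le_antisymm h (h01 w hw.1 hw.2 i).1
      rw [fsum_cons, hw0, zero_add] at hpos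
      obtain ⟨x, hx, hfx⟩ := ih (fun y hy => hm y (List.mem_cons_of_mem w hy)) hpos
      exact ⟨x, List.mem_cons_of_mem w hx, hfx⟩

include h01 h0 huu hopl hnegl hnegr hsurj in
lemma phip_disj (hu : IsStrongUnit u) (hr : IsSquareRoot u r) (hs : IsStrict u r)
    (p q : G) (hp : 0 ≤ p) (hq : 0 ≤ q) (hpq : p ⊓ q = 0) (i : ι) :
    phip u f p i ⊓ phip u f q i = 0 := by
  obtain ⟨Lp, hmp, hsp⟩ := exList hu p hp
  obtain ⟨Lq, hmq, hsq⟩ := exList hu q hq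
  rw [phip_spec h01 h0 huu hopl hnegl hnegr hsurj hu hr hs p Lp hmp hsp,
      phip_spec h01 h0 huu hopl hnegl hnegr hsurj hu hr hs q Lq hmq hsq]
  have hA : 0 ≤ fsum f Lp i := fsum_nonneg h01 Lp hmp i
  have hB : 0 ≤ fsum f Lq i := fsum_nonneg h01 Lq hmq i
  by_contra hne
  have hlt : 0 < fsum f Lp i ⊓ fsum f Lq i :=
    lt_of_le_of_ne (le_inf hA hB) (Ne.symm hne)
  have hpA : 0 < fsum f Lp i := lt_of_lt_of_le hlt inf_le_left
  have hpB : 0 < fsum f Lq i := lt_of_lt_of_le hlt inf_le_right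
  obtain ⟨x, hxL, hfx⟩ := fsum_pos h01 i Lp hmp hpA
  obtain ⟨y, hyL, hfy⟩ := fsum_pos h01 i Lq hmq hpB
  have hxm := hmp x hxL
  have hym := hmq y hyL
  have hxp : x ≤ p := hsp ▸ pmv_le_list_sum Lp (fun z hz => (hmp z hz).1) x hxL
  have hyq : y ≤ q := hsq ▸ pmv_le_list_sum Lq (fun z hz => (hmq z hz).1) y hyL
  have hxy : x ⊓ y = 0 := le_antisymm
    (le_trans (inf_le_inf hxp hyq) (le_of_eq hpq)) (le_inf hxm.1 hym.1)
  have := hfinf h01 h0 huu hopl hnegl hnegr hsurj hu hr hs hxm hym i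
  rw [hxy, h0 i] at this
  have hmin : (0:(K i).carrier) < f x i ⊓ f y i := lt_min hfx hfy
  rw [← this] at hmin
  exact lt_irrefl 0 hmin

include h01 h0 huu hopl hnegl hnegr hsurj in
lemma phi_pos (hu : IsStrongUnit u) (hr : IsSquareRoot u r) (hs : IsStrict u r)
    (p : G) (hp : 0 ≤ p) : phi u f p = phip u f p := by
  rw [phi, sup_eq_left.mpr hp, sup_eq_right.mpr (by simpa using neg_le_neg_iff.mpr hp),
      phip_zero h01 h0 huu hopl hnegl hnegr hsurj hu hr hs, sub_zero]

include h01 h0 huu hopl hnegl hnegr hsurj in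
lemma phi_diff (hu : IsStrongUnit u) (hr : IsSquareRoot u r) (hs : IsStrict u r)
    (g p q : G) (hp : 0 ≤ p) (hq : 0 ≤ q) (hg : g = p - q) :
    phi u f g = phip u f p - phip u f q := by
  have hp' : p + (-q + ((-g) ⊔ 0)) = g ⊔ 0 := by
    rw [← add_assoc, ← sub_eq_add_neg, ← hg, pmv_pospart]
  have hq' : q + (-q + ((-g) ⊔ 0)) = (-g) ⊔ 0 := add_neg_cancel_left _ _
  set d := -q + ((-g) ⊔ 0) with hd
  have hdd : d + ((-d) ⊔ 0) = d ⊔ 0 := pmv_pospart d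
  have e1 : (g ⊔ 0) + ((-d) ⊔ 0) = p + (d ⊔ 0) := by
    rw [← hp', add_assoc, hdd]
  have e2 : ((-g) ⊔ 0) + ((-d) ⊔ 0) = q + (d ⊔ 0) := by
    rw [← hq', add_assoc, hdd]
  have hg0 : 0 ≤ g ⊔ 0 := le_sup_right
  have hng0 : 0 ≤ (-g) ⊔ 0 := le_sup_right
  have hdp : 0 ≤ d ⊔ 0 := le_sup_right
  have hdn : 0 ≤ (-d) ⊔ 0 := le_sup_right
  have E1 : phip u f (g ⊔ 0) + phip u f ((-d) ⊔ 0) = phip u f p + phip u f (d ⊔ 0) := by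
    rw [← phip_add h01 h0 huu hopl hnegl hnegr hsurj hu hr hs _ _ hg0 hdn,
        ← phip_add h01 h0 huu hopl hnegl hnegr hsurj hu hr hs _ _ hp hdp, e1]
  have E2 : phip u f ((-g) ⊔ 0) + phip u f ((-d) ⊔ 0) = phip u f q + phip u f (d ⊔ 0) := by
    rw [← phip_add h01 h0 huu hopl hnegl hnegr hsurj hu hr hs _ _ hng0 hdn,
        ← phip_add h01 h0 huu hopl hnegl hnegr hsurj hu hr hs _ _ hq hdp, e2]
  have F1 : phip u f (g ⊔ 0) = (phip u f p + phip u f (d ⊔ 0)) - phip u f ((-d) ⊔ 0) :=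
    eq_sub_of_add_eq E1
  have F2 : phip u f ((-g) ⊔ 0) = (phip u f q + phip u f (d ⊔ 0)) - phip u f ((-d) ⊔ 0) :=
    eq_sub_of_add_eq E2
  rw [phi, F1, F2, pmv_sub_sub_cancel]
  simp [sub_eq_add_neg, neg_add_rev, add_assoc, neg_add_cancel_left, add_neg_cancel_left]

include h01 h0 huu hopl hnegl hnegr hsurj in
lemma phi_add (hu : IsStrongUnit u) (hr : IsSquareRoot u r) (hs : IsStrict u r)
    (a b : G) : phi u f (a + b) = phi u f a + phi u f b := by
  set Pa := a ⊔ 0 with hPa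
  set Na := (-a) ⊔ 0 with hNa
  set Pb := b ⊔ 0 with hPb
  set Nb := (-b) ⊔ 0 with hNb
  have hPa0 : 0 ≤ Pa := le_sup_right
  have hNa0 : 0 ≤ Na := le_sup_right
  have hPb0 : 0 ≤ Pb := le_sup_right
  have hNb0 : 0 ≤ Nb := le_sup_right
  have hw0 : 0 ≤ -Na + (Pb + Na) := by
    have h1 : Na ≤ Pb + Na := le_add_of_nonneg_left hPb0
    have := add_le_add_left h1 (-Na)
    simpa using this
  have repr : a + b = (Pa + (-Na + (Pb + Na))) - (Nb + Na) := by
    have e1 : (Pa + (-Na + (Pb + Na))) - (Nb + Na)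
        = Pa + (-Na + (Pb + (Na + (-Na + -Nb)))) := by
      simp [sub_eq_add_neg, neg_add_rev, add_assoc]
    rw [e1, add_neg_cancel_left]
    have e2 : Pa + (-Na + (Pb + -Nb)) = (Pa + -Na) + (Pb + -Nb) := by
      rw [add_assoc]
    rw [e2, ← sub_eq_add_neg, ← sub_eq_add_neg, hPa, hNa, hPb, hNb,
        pmv_subparts, pmv_subparts]
  have key : Na + (-Na + (Pb + Na)) = Pb + Na := add_neg_cancel_left _ _
  have KEY : phip u f Na + phip u f (-Na + (Pb + Na)) = phip u f Pb + phip u f Na := by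
    rw [← phip_add h01 h0 huu hopl hnegl hnegr hsurj hu hr hs _ _ hNa0 hw0,
        ← phip_add h01 h0 huu hopl hnegl hnegr hsurj hu hr hs _ _ hPb0 hNa0, key]
  have hW : phip u f (-Na + (Pb + Na)) = -(phip u f Na) + (phip u f Pb + phip u f Na) := by
    rw [← KEY, neg_add_cancel_left]
  have L1 : phi u f (a + b) = (phip u f Pa + phip u f (-Na + (Pb + Na))) - (phip u f Nb + phip u f Na) := by
    rw [phi_diff h01 h0 huu hopl hnegl hnegr hsurj hu hr hs (a + b) _ _
        (add_nonneg hPa0 hw0) (add_nonneg hNb0 hNa0) repr,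
        phip_add h01 h0 huu hopl hnegl hnegr hsurj hu hr hs _ _ hPa0 hw0,
        phip_add h01 h0 huu hopl hnegl hnegr hsurj hu hr hs _ _ hNb0 hNa0]
  have L2 : phi u f a = phip u f Pa - phip u f Na := by
    rw [phi]
  have L3 : phi u f b = phip u f Pb - phip u f Nb := by
    rw [phi]
  rw [L1, L2, L3, hW]
  simp [sub_eq_add_neg, neg_add_rev, add_assoc, neg_add_cancel_left, add_neg_cancel_left]

end Main4

set_option linter.unusedSectionVars false

section Main5
variable {G : Type} [Lattice G] [AddGroup G]
    [CovariantClass G G (· + ·) (· ≤ ·)]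
    [CovariantClass G G (Function.swap (· + ·)) (· ≤ ·)]
    {u : G} {r : G → G}
    {ι : Type} {K : ι → LinUnitalGroup} {f : G → ∀ i, (K i).carrier}

variable (h01 : ∀ x, 0 ≤ x → x ≤ u → ∀ i, 0 ≤ f x i ∧ f x i ≤ (K i).u)
    (h0 : ∀ i, f 0 i = 0)
    (huu : ∀ i, f u i = (K i).u)
    (hopl : ∀ x y, 0 ≤ x → x ≤ u → 0 ≤ y → y ≤ u → ∀ i,
      f (oplus u x y) i = min (f x i + f y i) (K i).u)
    (hnegl : ∀ x, 0 ≤ x → x ≤ u → ∀ i, f (negl u x) i = (K i).u - f x i)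
    (hnegr : ∀ x, 0 ≤ x → x ≤ u → ∀ i, f (negr u x) i = -(f x i) + (K i).u)
    (hinj : ∀ x y, 0 ≤ x → x ≤ u → 0 ≤ y → y ≤ u → (∀ i, f x i = f y i) → x = y)
    (hsurj : ∀ i, ∀ z : (K i).carrier, 0 ≤ z → z ≤ (K i).u →
      ∃ x, 0 ≤ x ∧ x ≤ u ∧ f x i = z)

include h01 h0 huu hopl hnegl hnegr hsurj in
lemma phi_neg (hu : IsStrongUnit u) (hr : IsSquareRoot u r) (hs : IsStrict u r)
    (g : G) : phi u f (-g) = -(phi u f g) := by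
  have hg : -g = ((-g) ⊔ 0) - (g ⊔ 0) := by
    have := pmv_subparts (-g)
    simpa [neg_neg] using this.symm
  rw [phi_diff h01 h0 huu hopl hnegl hnegr hsurj hu hr hs (-g) _ _ le_sup_right le_sup_right hg,
      phi, pmv_neg_sub']

include h01 h0 huu hopl hnegl hnegr hinj hsurj in
lemma phip_eq_zero (hu : IsStrongUnit u) (hr : IsSquareRoot u r) (hs : IsStrict u r)
    (p : G) (hp : 0 ≤ p) (hz : ∀ i, phip u f p i = 0) : p = 0 := by
  obtain ⟨L, hm, hsL⟩ := exList hu p hp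
  have hLz : ∀ x ∈ L, x = 0 := by
    intro x hx
    apply hinj x 0 (hm x hx).1 (hm x hx).2 le_rfl hu.1
    intro i
    rw [h0 i]
    have h1 : f x i ∈ L.map (fun y => f y i) := List.mem_map_of_mem hx
    have h2 : ∀ w ∈ L.map (fun y => f y i), 0 ≤ w := by
      intro w hw
      obtain ⟨y, hy, rfl⟩ := List.mem_map.mp hw
      exact (h01 y (hm y hy).1 (hm y hy).2 i).1
    have h3 : f x i ≤ fsum f L i := pmv_le_list_sum _ h2 _ h1
    have hz' := hz i
    rw [phip_spec h01 h0 huu hopl hnegl hnegr hsurj hu hr hs p L hm hsL] at hz'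
    rw [hz'] at h3
    exact le_antisymm h3 (h01 x (hm x hx).1 (hm x hx).2 i).1
  rw [← hsL]
  exact List.sum_eq_zero hLz

include h01 h0 huu hopl hnegl hnegr hinj hsurj in
lemma phi_ker (hu : IsStrongUnit u) (hr : IsSquareRoot u r) (hs : IsStrict u r)
    (g : G) (hz : phi u f g = 0) : g = 0 := by
  unfold phi at hz
  have e : phip u f (g ⊔ 0) = phip u f ((-g) ⊔ 0) := sub_eq_zero.mp hz
  have hP : ∀ i, phip u f (g ⊔ 0) i = 0 := by
    intro i
    have hd := phip_disj h01 h0 huu hopl hnegl hnegr hsurj hu hr hs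
      (g ⊔ 0) ((-g) ⊔ 0) le_sup_right le_sup_right (pmv_posneg_disj g) i
    have h1 : phip u f (g ⊔ 0) i ≤ phip u f (g ⊔ 0) i ⊓ phip u f ((-g) ⊔ 0) i :=
      le_inf le_rfl (le_of_eq (congrFun e i))
    have h2 := phip_nonneg h01 h0 huu hopl hnegl hnegr hsurj hu hr hs (g ⊔ 0) le_sup_right i
    rw [hd] at h1
    exact le_antisymm h1 h2
  have hN : ∀ i, phip u f ((-g) ⊔ 0) i = 0 := by
    intro i
    rw [← congrFun e i]
    exact hP i
  have hP0 := phip_eq_zero h01 h0 huu hopl hnegl hnegr hinj hsurj hu hr hs (g ⊔ 0) le_sup_right hP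
  have hN0 := phip_eq_zero h01 h0 huu hopl hnegl hnegr hinj hsurj hu hr hs ((-g) ⊔ 0) le_sup_right hN
  have := pmv_subparts g
  rw [hP0, hN0, sub_zero] at this
  exact this.symm

include h01 h0 huu hopl hnegl hnegr hsurj in
lemma phi_posval (hu : IsStrongUnit u) (hr : IsSquareRoot u r) (hs : IsStrict u r)
    (g : G) : phi u f (g ⊔ 0) = (phi u f g) ⊔ 0 := by
  rw [phi_pos h01 h0 huu hopl hnegl hnegr hsurj hu hr hs (g ⊔ 0) le_sup_right]
  funext i
  have hd := phip_disj h01 h0 huu hopl hnegl hnegr hsurj hu hr hs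
    (g ⊔ 0) ((-g) ⊔ 0) le_sup_right le_sup_right (pmv_posneg_disj g) i
  have hA := phip_nonneg h01 h0 huu hopl hnegl hnegr hsurj hu hr hs (g ⊔ 0) le_sup_right i
  have hB := phip_nonneg h01 h0 huu hopl hnegl hnegr hsurj hu hr hs ((-g) ⊔ 0) le_sup_right i
  have hv : (phi u f g ⊔ 0) i = (phip u f (g ⊔ 0) i - phip u f ((-g) ⊔ 0) i) ⊔ 0 := rfl
  rw [hv]
  rcases le_total (phip u f (g ⊔ 0) i) (phip u f ((-g) ⊔ 0) i) with h | h
  · have hA0 : phip u f (g ⊔ 0) i = 0 := by rw [← hd, inf_eq_left.mpr h]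
    rw [hA0, zero_sub]
    have : -(phip u f ((-g) ⊔ 0) i) ≤ 0 := by simpa using neg_le_neg_iff.mpr hB
    exact (sup_eq_right.mpr this).symm
  · have hB0 : phip u f ((-g) ⊔ 0) i = 0 := by rw [← hd, inf_eq_right.mpr h]
    rw [hB0, sub_zero, sup_eq_left.mpr hA]

include h01 h0 huu hopl hnegl hnegr hsurj in
lemma phi_u_eq (hu : IsStrongUnit u) (hr : IsSquareRoot u r) (hs : IsStrict u r) :
    phi u f u = fun i => (K i).u := by
  rw [phi_pos h01 h0 huu hopl hnegl hnegr hsurj hu hr hs u hu.1,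
      phip_spec h01 h0 huu hopl hnegl hnegr hsurj hu hr hs u [u]
      (by intro x hx; rw [List.mem_singleton] at hx; subst hx; exact ⟨hu.1, le_rfl⟩) (by simp)]
  funext i
  rw [fsum_cons, fsum_nil, add_zero, huu i]

include h01 h0 huu hopl hnegl hnegr hsurj in
lemma phi_sup (hu : IsStrongUnit u) (hr : IsSquareRoot u r) (hs : IsStrict u r)
    (a b : G) : phi u f (a ⊔ b) = phi u f a ⊔ phi u f b := by
  rw [← pmv_sup_expr a b,
      phi_add h01 h0 huu hopl hnegl hnegr hsurj hu hr hs a ((-a + b) ⊔ 0),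
      phi_posval h01 h0 huu hopl hnegl hnegr hsurj hu hr hs (-a + b),
      phi_add h01 h0 huu hopl hnegl hnegr hsurj hu hr hs (-a) b,
      phi_neg h01 h0 huu hopl hnegl hnegr hsurj hu hr hs a]
  exact pmv_sup_expr _ _

include h01 h0 huu hopl hnegl hnegr hsurj in
lemma phi_inf (hu : IsStrongUnit u) (hr : IsSquareRoot u r) (hs : IsStrict u r)
    (a b : G) : phi u f (a ⊓ b) = phi u f a ⊓ phi u f b := by
  have h1 : a ⊓ b = -((-a) ⊔ (-b)) := by rw [neg_sup, neg_neg, neg_neg]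
  rw [h1, phi_neg h01 h0 huu hopl hnegl hnegr hsurj hu hr hs,
      phi_sup h01 h0 huu hopl hnegl hnegr hsurj hu hr hs (-a) (-b),
      phi_neg h01 h0 huu hopl hnegl hnegr hsurj hu hr hs a,
      phi_neg h01 h0 huu hopl hnegl hnegr hsurj hu hr hs b,
      neg_sup, neg_neg, neg_neg]

include h01 h0 huu hopl hnegl hnegr hsurj in
lemma phi_bdd (hu : IsStrongUnit u) (hr : IsSquareRoot u r) (hs : IsStrict u r)
    (g : G) : BddP.Bdd ι K (phi u f g) := by
  obtain ⟨m₁, hm₁⟩ := phip_bound h01 h0 huu hopl hnegl hnegr hsurj hu hr hs (g ⊔ 0) le_sup_right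
  obtain ⟨m₂, hm₂⟩ := phip_bound h01 h0 huu hopl hnegl hnegr hsurj hu hr hs ((-g) ⊔ 0) le_sup_right
  refine ⟨m₁ + m₂, fun i => ?_⟩
  have hA := phip_nonneg h01 h0 huu hopl hnegl hnegr hsurj hu hr hs (g ⊔ 0) le_sup_right i
  have hB := phip_nonneg h01 h0 huu hopl hnegl hnegr hsurj hu hr hs ((-g) ⊔ 0) le_sup_right i
  have hv : phi u f g i = phip u f (g ⊔ 0) i - phip u f ((-g) ⊔ 0) i := rfl
  constructor
  · rw [hv, sub_eq_add_neg]
    have h1 : -((m₁ + m₂) • (K i).u) ≤ 0 + -(m₂ • (K i).u) := by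
      rw [zero_add]
      apply neg_le_neg_iff.mpr
      rw [add_nsmul]
      exact le_add_of_nonneg_left (nsmul_nonneg (K i).u_nonneg m₁)
    exact le_trans h1 (add_le_add hA (neg_le_neg_iff.mpr (hm₂ i)))
  · rw [hv, sub_eq_add_neg]
    have h1 : -(phip u f ((-g) ⊔ 0) i) ≤ 0 := by simpa using neg_le_neg_iff.mpr hB
    calc phip u f (g ⊔ 0) i + -(phip u f ((-g) ⊔ 0) i)
        ≤ m₁ • (K i).u + 0 := add_le_add (hm₁ i) h1
      _ = m₁ • (K i).u := add_zero _
      _ ≤ (m₁ + m₂) • (K i).u := by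
          rw [add_nsmul]
          exact le_add_of_nonneg_right (nsmul_nonneg (K i).u_nonneg m₂)

end Main5


/-- a representable pseudo MV-algebra `M = Γ(G,u)` with a strict square
root yields an embedding of `(G,u)` into a two-divisible unital ℓ-group. -/
theorem stmt_5 {G : Type} [Lattice G] [AddGroup G]
    [CovariantClass G G (· + ·) (· ≤ ·)]
    [CovariantClass G G (Function.swap (· + ·)) (· ≤ ·)]
    (u : G) (hu : IsStrongUnit u) (hrep : IsRepresentable u)
    (r : G → G) (hr : IsSquareRoot u r) (hs : IsStrict u r) :
    ∃ (H : UnitalLGroup) (φ : G → H.carrier),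
      Function.Injective φ ∧
      (∀ a b : G, φ (a + b) = φ a + φ b) ∧
      (∀ a b : G, φ (a ⊓ b) = φ a ⊓ φ b) ∧
      (∀ a b : G, φ (a ⊔ b) = φ a ⊔ φ b) ∧
      φ u = H.u ∧
      TwoDivisible H.carrier := by
  obtain ⟨ι, K, f, h01, h0, huu, hopl, hnegl, hnegr, hinj, hsurj⟩ := hrep
  refine ⟨BddP.H ι K,
    fun g => ⟨phi u f g, phi_bdd h01 h0 huu hopl hnegl hnegr hsurj hu hr hs g⟩,
    ?_, ?_, ?_, ?_, ?_, ?_⟩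
  · -- injective
    intro a b hab
    have h1 : phi u f a = phi u f b := congrArg Subtype.val hab
    have h2 : phi u f (a + -b) = 0 := by
      rw [phi_add h01 h0 huu hopl hnegl hnegr hsurj hu hr hs a (-b),
          phi_neg h01 h0 huu hopl hnegl hnegr hsurj hu hr hs b, h1, add_neg_cancel]
    have h3 := phi_ker h01 h0 huu hopl hnegl hnegr hinj hsurj hu hr hs (a + -b) h2
    have h4 : a - b = 0 := by rwa [sub_eq_add_neg]
    exact sub_eq_zero.mp h4
  · -- additive
    intro a b
    exact Subtype.ext (phi_add h01 h0 huu hopl hnegl hnegr hsurj hu hr hs a b)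
  · -- inf
    intro a b
    exact Subtype.ext (phi_inf h01 h0 huu hopl hnegl hnegr hsurj hu hr hs a b)
  · -- sup
    intro a b
    exact Subtype.ext (phi_sup h01 h0 huu hopl hnegl hnegr hsurj hu hr hs a b)
  · -- unit
    exact Subtype.ext (phi_u_eq h01 h0 huu hopl hnegl hnegr hsurj hu hr hs)
  · -- two-divisible
    intro g
    have hex : ∀ i, ∃ h, h + h = g.val i :=
      fun i => hKdiv h01 h0 huu hopl hnegl hnegr hsurj hu hr hs i (g.val i)
    choose hv hhv using hex
    obtain ⟨n, hn⟩ := g.2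
    have mt : memS u (r 0) := sf_t01 hu hr
    have htau0 : ∀ i, 0 ≤ f (r 0) i := fun i => (h01 (r 0) mt.1 mt.2 i).1
    have htauu : ∀ i, f (r 0) i ≤ (K i).u := fun i => (h01 (r 0) mt.1 mt.2 i).2
    have h2n : ∀ i, n • f (r 0) i + n • f (r 0) i = n • (K i).u := by
      intro i
      rw [pmv_two_nsmul, hKtautau h01 h0 huu hopl hnegl hnegr hsurj hu hr hs i]
    have hub : ∀ i, hv i ≤ n • f (r 0) i := by
      intro i
      by_contra hcon
      have hlt : n • f (r 0) i < hv i := not_le.mp hcon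
      have l1 : n • f (r 0) i + n • f (r 0) i < hv i + hv i :=
        lt_trans (pmv_add_lt_add_left hlt (n • f (r 0) i)) (pmv_add_lt_add_right hlt (hv i))
      rw [h2n i, hhv i] at l1
      exact absurd (hn i).2 (not_le.mpr l1)
  
    have hlb : ∀ i, -(n • f (r 0) i) ≤ hv i := by
      intro i
      by_contra hcon
      have hlt : hv i < -(n • f (r 0) i) := not_le.mp hcon
      have l1 : hv i + hv i < -(n • f (r 0) i) + -(n • f (r 0) i) :=
        lt_trans (pmv_add_lt_add_right hlt (hv i)) (pmv_add_lt_add_left hlt _)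
      have l2 : -(n • f (r 0) i) + -(n • f (r 0) i) = -(n • (K i).u) := by
        rw [← neg_add_rev, h2n i]
      rw [l2, hhv i] at l1
      exact absurd (hn i).1 (not_le.mpr l1)
    refine ⟨⟨hv, n, fun i => ?_⟩, ?_⟩
    · constructor
      · exact le_trans (neg_le_neg_iff.mpr (nsmul_le_nsmul_right (htauu i) n)) (hlb i)
      · exact le_trans (hub i) (nsmul_le_nsmul_right (htauu i) n)
    · exact Subtype.ext (funext fun i => hhv i)
end

section
/- Let M = Γ(G,u) be an MV-algebra (i.e., G is an abelian lattice-ordered group with strong unit u) possessing a strict square root r. Then G is two-divisible: for every g ∈ G there exists h ∈ G with h + h = g. -/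
private lemma add_le_add2 {G : Type} [Lattice G] [AddCommGroup G]
    [CovariantClass G G (· + ·) (· ≤ ·)] {a b c d : G} (h1 : a ≤ b) (h2 : c ≤ d) :
    a + c ≤ b + d := by
  calc a + c ≤ a + d := add_le_add_right h2 a
    _ = d + a := add_comm _ _
    _ ≤ d + b := add_le_add_right h1 d
    _ = b + d := add_comm _ _

/-- an MV-algebra `M = Γ(G,u)` (`G` abelian) with a strict square root
has a two-divisible `G`. -/
theorem stmt_6 {G : Type} [Lattice G] [AddCommGroup G]
    [CovariantClass G G (· + ·) (· ≤ ·)]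
    (u : G) (hu : IsStrongUnit u) (r : G → G)
    (hr : IsSquareRoot u r) (hs : IsStrict u r) :
    TwoDivisible G := by
  haveI : CovariantClass G G (Function.swap (· + ·)) (· ≤ ·) :=
    ⟨fun a b c h => by simpa [add_comm] using add_le_add_left h a⟩
  obtain ⟨hu0, hus⟩ := hu
  obtain ⟨hmap, hsq1, hsq2, hsq3, hsq3'⟩ := hr
  obtain ⟨hr00, hr0u⟩ := hmap 0 le_rfl hu0
  -- r 0 + r 0 = u
  have hhalf : r 0 + r 0 = u := by
    have := hs
    unfold IsStrict negl at this
    have : r 0 + r 0 = (u - r 0) + r 0 := by rw [← this]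
    simpa using this
  -- odot u (r 0) (r 0) = 0
  have hodot0 : odot u (r 0) (r 0) = 0 := hsq1 0 le_rfl hu0
  -- every x in [0,u] is divisible
  have hdiv01 : ∀ x : G, 0 ≤ x → x ≤ u → ∃ h : G, h + h = x := by
    intro x hx0 hxu
    have hr0le : r 0 ≤ r x := hsq2 x (r 0) hx0 hxu hr00 hr0u (by rw [hodot0]; exact hx0)
    have hge : 0 ≤ r x - u + r x := by
      have : r 0 + r 0 ≤ r x + r x := add_le_add2 hr0le hr0le
      rw [hhalf] at this
      have := sub_nonneg.mpr this
      calc (0:G) ≤ r x + r x - u := this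
        _ = r x - u + r x := by abel
    have hx : r x - u + r x = x := by
      have h1 := hsq1 x hx0 hxu
      unfold odot at h1
      rw [sup_eq_left.mpr hge] at h1
      exact h1
    refine ⟨r x - r 0, ?_⟩
    have : (r x - r 0) + (r x - r 0) = r x + r x - (r 0 + r 0) := by abel
    rw [this, hhalf]
    calc r x + r x - u = r x - u + r x := by abel
      _ = x := hx
  -- n • u is nonneg
  have hnsmul : ∀ n : ℕ, (0:G) ≤ n • u := by
    intro n
    induction n with
    | zero => simp
    | succ k ih =>
      rw [succ_nsmul]
      calc (0:G) = 0 + 0 := by simp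
        _ ≤ k • u + u := add_le_add2 ih hu0
  -- every x in [0, n•u] is divisible
  have hdivn : ∀ n : ℕ, ∀ x : G, 0 ≤ x → x ≤ n • u → ∃ h : G, h + h = x := by
    intro n
    induction n with
    | zero =>
      intro x hx0 hxu
      simp at hxu
      exact ⟨0, by simp [le_antisymm hxu hx0]⟩
    | succ k ih =>
      intro x hx0 hxu
      set y := x ⊓ u with hy
      have hy0 : 0 ≤ y := le_inf hx0 hu0
      have hyu : y ≤ u := inf_le_right
      set z := x - y with hz
      have hz0 : 0 ≤ z := sub_nonneg.mpr inf_le_left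
      have hzk : z ≤ k • u := by
        have h1 : x - u ≤ k • u := by
          rw [succ_nsmul] at hxu
          have := sub_le_sub_right hxu u
          simpa using this
        have h2 : z = (x - x) ⊔ (x - u) := by
          rw [hz, hy, sub_inf]
        rw [h2]
        exact sup_le (by simpa using hnsmul k) h1
      obtain ⟨h1, hh1⟩ := hdiv01 y hy0 hyu
      obtain ⟨h2, hh2⟩ := ih z hz0 hzk
      refine ⟨h1 + h2, ?_⟩
      have : h1 + h2 + (h1 + h2) = (h1 + h1) + (h2 + h2) := by abel
      rw [this, hh1, hh2, hz]
      abel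
  -- general case
  intro g
  obtain ⟨n, _, hn⟩ := hus (-g)
  have hg0 : 0 ≤ g + n • u := by
    have h1 : -(n • u) ≤ g := by
      have := add_le_add_right hn (g - n • u)
      calc -(n • u) = g - n • u + -g := by abel
        _ ≤ g - n • u + n • u := this
        _ = g := by abel
    calc (0:G) = -(n • u) + n • u := by abel
      _ ≤ g + n • u := add_le_add2 h1 le_rfl
  obtain ⟨m, _, hm⟩ := hus (g + n • u)
  obtain ⟨h, hh⟩ := hdivn m (g + n • u) hg0 hm
  refine ⟨h - n • r 0, ?_⟩
  have hnu : n • r 0 + n • r 0 = n • u := by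
    rw [← hhalf, nsmul_add]
  calc (h - n • r 0) + (h - n • r 0) = (h + h) - (n • r 0 + n • r 0) := by abel
    _ = (g + n • u) - n • u := by rw [hh, hnu]
    _ = g := by abel
end

section
/- Let M = Γ(G,u) be an MV-algebra (G an abelian lattice-ordered group with strong unit u) with a square root r. Then (G,u) is isomorphic, as a unital lattice-ordered group, to a direct product (G₁ × G₂, (u₁,u₂)) of unital lattice-ordered groups (G₁,u₁) and (G₂,u₂), where G₁ admits an injective lattice-group homomorphism into a direct product ∏_{p∈X} ℤ of copies of the integers (with surjective coordinate maps, i.e., G₁ is a subdirect product of copies of (ℤ,1)), and G₂ is a two-divisible lattice-ordered group. -/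
/-- A bundled abelian lattice-ordered group with a strong unit. -/
structure UnitalAbLGroup : Type 1 where
  carrier : Type
  [grp : AddCommGroup carrier]
  [lat : Lattice carrier]
  cov : ∀ a b c : carrier, b ≤ c → a + b ≤ a + c
  u : carrier
  u_nonneg : 0 ≤ u
  strong : ∀ g : carrier, ∃ n : ℕ, 1 ≤ n ∧ g ≤ n • u

attribute [instance] UnitalAbLGroup.grp UnitalAbLGroup.lat


set_option linter.unusedSectionVars false

section LG
variable {G : Type} [Lattice G] [AddCommGroup G] [CovariantClass G G (· + ·) (· ≤ ·)]

lemma lg_nsmul_nonneg {b : G} (hb : 0 ≤ b) (n : ℕ) : 0 ≤ n • b := by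
  induction n with
  | zero => simp
  | succ n ih => rw [succ_nsmul]; exact add_nonneg ih hb

lemma lg_nsmul_mono {b : G} (hb : 0 ≤ b) {n m : ℕ} (h : n ≤ m) : n • b ≤ m • b := by
  have : m • b - n • b = (m - n) • b := by
    rw [← Nat.cast_smul_eq_nsmul ℤ, ← Nat.cast_smul_eq_nsmul ℤ, ← Nat.cast_smul_eq_nsmul ℤ,
      ← sub_smul, ← Nat.cast_sub h]
  have h2 : 0 ≤ m • b - n • b := by rw [this]; exact lg_nsmul_nonneg hb _
  exact sub_nonneg.mp h2

lemma lg_two_pos {a : G} (h : 0 ≤ a + a) : 0 ≤ a := by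
  have : 0 ≤ 2 • a := by rwa [two_smul]
  exact nsmul_two_semiclosed this

lemma lg_two_cancel {a b : G} (h : a + a ≤ b + b) : a ≤ b := by
  have h2 : 0 ≤ (b - a) + (b - a) := by
    have := sub_nonneg.mpr h
    calc (0:G) ≤ b + b - (a + a) := this
      _ = (b - a) + (b - a) := by abel
  exact sub_nonneg.mp (lg_two_pos h2)

/-- Riesz-type inequality. -/
lemma lg_riesz {a b c : G} (ha : 0 ≤ a) (hb : 0 ≤ b) (hc : 0 ≤ c) :
    a ⊓ (b + c) ≤ a ⊓ b + a ⊓ c := by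
  have : a ⊓ b + a ⊓ c = ((a + a) ⊓ (b + a)) ⊓ ((a + c) ⊓ (b + c)) := by
    rw [inf_add, add_inf, add_inf, inf_inf_inf_comm]
  rw [this]
  refine le_inf (le_inf ?_ ?_) (le_inf ?_ ?_)
  · exact le_trans inf_le_left (le_add_of_nonneg_left ha)
  · exact le_trans inf_le_left (le_add_of_nonneg_left hb)
  · exact le_trans inf_le_left (le_add_of_nonneg_right hc)
  · exact inf_le_right

lemma lg_orth_nsmul {a b : G} (ha : 0 ≤ a) (hb : 0 ≤ b) (h : a ⊓ b = 0) (n : ℕ) :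
    a ⊓ (n • b) = 0 := by
  induction n with
  | zero => simpa using inf_eq_right.mpr ha
  | succ n ih =>
    refine le_antisymm ?_ (le_inf ha (lg_nsmul_nonneg hb _))
    calc a ⊓ ((n+1) • b) = a ⊓ (n • b + b) := by rw [succ_nsmul]
      _ ≤ a ⊓ (n • b) + a ⊓ b := lg_riesz ha (lg_nsmul_nonneg hb _) hb
      _ = 0 := by rw [ih, h, add_zero]

lemma lg_orth_nsmul' {a b : G} (ha : 0 ≤ a) (hb : 0 ≤ b) (h : a ⊓ b = 0) (n m : ℕ) :
    (n • a) ⊓ (m • b) = 0 := by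
  have h1 : b ⊓ (n • a) = 0 := by
    rw [inf_comm] at h; exact lg_orth_nsmul hb ha h n
  rw [inf_comm]
  have := lg_orth_nsmul (lg_nsmul_nonneg ha n) hb (by rw [inf_comm] at h1; exact h1) m
  rwa [inf_comm] at this

/-- An element dominated by two orthogonal "axes" bounds is zero. -/
lemma lg_pinch {e f z : G} (he : 0 ≤ e) (hf : 0 ≤ f) {n : ℕ}
    (hze : z ⊓ e = 0) (hzf : z ⊓ f = 0) (hz : 0 ≤ z) (hb : z ≤ n • e + n • f) : z = 0 := by
  have h1 : z = z ⊓ (n • e + n • f) := (inf_eq_left.mpr hb).symm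
  have h2 : z ⊓ (n • e) = 0 := lg_orth_nsmul hz he hze n
  have h3 : z ⊓ (n • f) = 0 := lg_orth_nsmul hz hf hzf n
  have := lg_riesz hz (lg_nsmul_nonneg he n) (lg_nsmul_nonneg hf n)
  rw [h2, h3, add_zero] at this
  exact le_antisymm (h1 ▸ this) hz

/-- orthogonal decomposition of a doubly bounded positive element -/
lemma lg_two_inf_le {a b : G} : (a ⊓ b) + (a ⊓ b) ≤ a + b :=
  add_le_add inf_le_left inf_le_right

lemma lg_orth_add_eq {c p q : G} (hc : 0 ≤ c) (hp : 0 ≤ p) (hq : 0 ≤ q)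
    (hpq : p ⊓ q = 0) (hb : c ≤ p + q) : (c ⊓ p) + (c ⊓ q) = c := by
  refine le_antisymm ?_ ?_
  · have horth : (c ⊓ p) ⊓ (c ⊓ q) = 0 := by
      refine le_antisymm ?_ (le_inf (le_inf hc hp) (le_inf hc hq))
      calc (c ⊓ p) ⊓ (c ⊓ q) ≤ p ⊓ q := inf_le_inf inf_le_right inf_le_right
        _ = 0 := hpq
    have h5 := inf_add_sup (c ⊓ p) (c ⊓ q)
    rw [horth, zero_add] at h5
    rw [← h5]
    exact sup_le inf_le_left inf_le_left
  · have : (c ⊓ p) + (c ⊓ q) = ((c + c) ⊓ (p + c)) ⊓ ((c + q) ⊓ (p + q)) := by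
      rw [inf_add, add_inf, add_inf, inf_inf_inf_comm]
    rw [this]
    refine le_inf (le_inf ?_ ?_) (le_inf ?_ ?_)
    · exact le_add_of_nonneg_left hc
    · exact le_add_of_nonneg_left hp
    · exact le_add_of_nonneg_right hq
    · exact hb

end LG

section LGmore
variable {G : Type} [Lattice G] [AddCommGroup G] [CovariantClass G G (· + ·) (· ≤ ·)]

lemma le_shuffle {X Y A B : G} (h : X ≤ Y) (e : Y - X = B - A) : A ≤ B :=
  sub_nonneg.mp (e ▸ sub_nonneg.mpr h)

lemma le_shuffle2 {X1 Y1 X2 Y2 A B : G} (h1 : X1 ≤ Y1) (h2 : X2 ≤ Y2)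
    (e : (Y1 - X1) + (Y2 - X2) = B - A) : A ≤ B := by
  refine sub_nonneg.mp (e ▸ ?_)
  exact add_nonneg (sub_nonneg.mpr h1) (sub_nonneg.mpr h2)

/-- The key decomposition data extracted from a square root. -/
lemma mv_key (u : G) (hu : IsStrongUnit u) (r : G → G) (hr : IsSquareRoot u r) :
    ∃ e f : G, 0 ≤ e ∧ 0 ≤ f ∧ e + f = u ∧ e ⊓ f = 0 ∧
      (∀ x, 0 ≤ x → x ≤ e → x ⊓ (e - x) = 0) ∧
      (∀ x, 0 ≤ x → x ≤ f → ∃ h, 0 ≤ h ∧ h + h = x) := by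
  obtain ⟨hu0, _⟩ := hu
  obtain ⟨hmaps, hsq1, hsq2, hsq3, -⟩ := hr
  set s := r 0 with hs
  obtain ⟨hs0, hsu⟩ := hmaps 0 le_rfl hu0
  have hodot0 : odot u s s = 0 := hsq1 0 le_rfl hu0
  have h2s : s + s ≤ u := by
    have h1 : s - u + s ≤ 0 := by
      have := le_sup_left.trans_eq hodot0
      exact this
    exact le_shuffle h1 (by abel)
  -- upper bound from Sq1
  have hub : ∀ x, 0 ≤ x → x ≤ u → r x + r x ≤ u + x := by
    intro x hx hxu
    have h := hsq1 x hx hxu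
    have h1 : r x - u + r x ≤ x := le_sup_left.trans_eq h
    exact le_shuffle h1 (by abel)
  have hsle : ∀ x, 0 ≤ x → x ≤ u → s ≤ r x := by
    intro x hx hxu
    exact hsq2 x s hx hxu hs0 hsu (hodot0 ▸ hx)
  have hxle : ∀ x, 0 ≤ x → x ≤ u → x ≤ r x := by
    intro x hx hxu
    refine hsq2 x x hx hxu hx hxu (sup_le ?_ hx)
    exact le_shuffle hxu (by abel)
  have hrle : ∀ x, 0 ≤ x → x ≤ u → r x ≤ s + x := by
    intro x hx hxu
    have hge := hxle x hx hxu
    have hy0 : 0 ≤ r x - x := sub_nonneg.mpr hge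
    have hyu : r x - x ≤ u := (sub_le_self _ hx).trans (hmaps x hx hxu).2
    have hyy : odot u (r x - x) (r x - x) ≤ 0 := by
      refine sup_le ?_ le_rfl
      exact le_shuffle2 (hub x hx hxu) hx (by abel)
    have := hsq2 0 (r x - x) le_rfl hu0 hy0 hyu hyy
    exact le_shuffle this (by abel)
  have h2rge : ∀ x, 0 ≤ x → x ≤ u → x + (s + s) ≤ r x + r x := by
    intro x hx hxu
    have h3 := hsq3 x hx hxu
    have hsx : negl u (r x) + s ≤ u := by
      have := hsle x hx hxu
      exact le_shuffle this (by simp [negl]; abel)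
    have heq : r (u - x) = u - r x + s := by
      have : r (negl u x) = negl u (r x) + s := by
        rw [h3]; exact inf_eq_left.mpr hsx
      simpa [negl] using this
    have hb := hub (u - x) (sub_nonneg.mpr hxu) (sub_le_self u hx)
    rw [heq] at hb
    exact le_shuffle hb (by abel)
  have he : 0 ≤ (u - (s + s)) := sub_nonneg.mpr h2s
  have hf : 0 ≤ (s + s) := add_nonneg hs0 hs0
  have heu : (u - (s + s)) ≤ u := sub_le_self _ hf
  have hfu : (s + s) ≤ u := h2s
  have hsum : (u - (s + s)) + (s + s) = u := by abel
  -- r (u - (s + s)) = u - s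
  have hre : r (u - (s + s)) = u - s := by
    refine le_antisymm ?_ ?_
    · exact lg_two_cancel (le_shuffle (hub (u - (s + s)) he heu) (by abel))
    · refine hsq2 (u - (s + s)) (u - s) he heu (sub_nonneg.mpr hsu) (sub_le_self _ hs0) ?_
      have : u - s - u + (u - s) = (u - (s + s)) := by abel
      rw [odot, this]
      exact sup_le le_rfl he
  have hrf : r (s + s) = (s + s) := by
    have h3 := hsq3 (u - (s + s)) he heu
    have h4 : negl u (u - (s + s)) = (s + s) := by simp [negl]
    have h5 : negl u (r (u - (s + s))) + s = (s + s) := by rw [hre]; simp [negl]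
    rw [h4, oplus, h5] at h3
    rw [h3]
    exact inf_eq_left.mpr hfu
  have hK1 : ((s + s) - u + (s + s)) ⊔ 0 = (s + s) := by
    have := hsq1 (s + s) hf hfu
    rwa [hrf, odot] at this
  have hef : (u - (s + s)) ⊓ (s + s) = 0 := by
    have h2 : (((s + s) - u + (s + s)) ⊔ 0) - (s + s) = 0 := by rw [hK1]; simp
    rw [sup_sub] at h2
    have h3 : -((u - (s + s)) ⊓ (s + s)) = ((s + s) - u + (s + s) - (s + s)) ⊔ (0 - (s + s)) := by
      rw [neg_inf]; congr 1
      · abel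
      · abel
    have h4 : -((u - (s + s)) ⊓ (s + s)) = 0 := by rw [h3, h2]
    exact neg_eq_zero.mp h4
  refine ⟨(u - (s + s)), (s + s), he, hf, hsum, hef, ?_, ?_⟩
  · intro x hx hxe
    set d := x ⊓ ((u - (s + s)) - x) with hd
    have hd0 : 0 ≤ d := le_inf hx (sub_nonneg.mpr hxe)
    have hdd : d + d ≤ (u - (s + s)) := lg_two_inf_le.trans_eq (by abel)
    have hyu : s + d ≤ u := by
      have h1 : d ≤ (u - (s + s)) := inf_le_right.trans (sub_le_self _ hx)
      exact le_shuffle2 h1 hs0 (by abel)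
    have hyy : odot u (s + d) (s + d) ≤ 0 := by
      refine sup_le ?_ le_rfl
      exact le_shuffle hdd (by abel)
    have hy := hsq2 0 (s + d) le_rfl hu0 (add_nonneg hs0 hd0) hyu hyy
    have : d ≤ 0 := le_shuffle hy (by abel)
    exact le_antisymm this hd0
  · intro x hx hxf
    have hxu : x ≤ u := hxf.trans hfu
    have hxe : x ⊓ (u - (s + s)) = 0 := by
      refine le_antisymm ?_ (le_inf hx he)
      calc x ⊓ (u - (s + s)) ≤ (s + s) ⊓ (u - (s + s)) := inf_le_inf_right (u - (s + s)) hxf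
        _ = 0 := by rw [inf_comm]; exact hef
    refine ⟨r x - s, sub_nonneg.mpr (hsle x hx hxu), ?_⟩
    set q := (r x + r x) - (s + s) - x with hq
    have hq0 : 0 ≤ q := sub_nonneg.mpr (le_shuffle (h2rge x hx hxu) (by abel))
    have hqx : q ≤ x := by
      have h1 := hrle x hx hxu
      exact le_shuffle2 h1 h1 (by rw [hq]; abel)
    have hqe : q ≤ (u - (s + s)) := le_shuffle (hub x hx hxu) (by rw [hq]; abel)
    have hqz : q = 0 := le_antisymm (le_trans (le_inf hqx hqe) (le_of_eq hxe)) hq0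
    have : (r x - s) + (r x - s) = x + q := by rw [hq]; abel
    rw [this, hqz, add_zero]

end LGmore

section Subdirect
variable {H : Type} [Lattice H] [AddCommGroup H] [CovariantClass H H (· + ·) (· ≤ ·)]

/-- An ℓ-ideal of an abelian ℓ-group. -/
def IsLId (S : Set H) : Prop :=
  (0:H) ∈ S ∧ (∀ x ∈ S, ∀ y ∈ S, x + y ∈ S) ∧ (∀ x y : H, y ∈ S → |x| ≤ |y| → x ∈ S)

lemma IsLId.abs_mem {S : Set H} (hS : IsLId S) {x : H} (hx : x ∈ S) : |x| ∈ S :=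
  hS.2.2 _ _ hx (le_of_eq (abs_of_nonneg (abs_nonneg x)))

lemma IsLId.neg_mem {S : Set H} (hS : IsLId S) {x : H} (hx : x ∈ S) : -x ∈ S :=
  hS.2.2 _ _ hx (le_of_eq (abs_neg x))

lemma IsLId.mem_of_nonneg_le {S : Set H} (hS : IsLId S) {x y : H}
    (hx : 0 ≤ x) (hxy : x ≤ y) (hy : y ∈ S) : x ∈ S := by
  refine hS.2.2 _ _ hy ?_
  rw [abs_of_nonneg hx, abs_of_nonneg (hx.trans hxy)]
  exact hxy

lemma IsLId.nsmul_mem {S : Set H} (hS : IsLId S) {x : H} (hx : x ∈ S) (n : ℕ) : n • x ∈ S := by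
  induction n with
  | zero => simpa using hS.1
  | succ n ih => rw [succ_nsmul]; exact hS.2.1 _ ih _ hx

lemma lg_abs_le_zero {x : H} (h : |x| ≤ 0) : x = 0 :=
  le_antisymm ((le_abs_self x).trans h) (neg_nonpos.mp ((neg_le_abs x).trans h))

theorem subdirect_rep (e : H) (he : 0 ≤ e)
    (hstrong : ∀ g : H, ∃ n : ℕ, g ≤ n • e)
    (hsing : ∀ x : H, 0 ≤ x → x ≤ e → x ⊓ (e - x) = 0) :
    ∃ (X : Type) (φ : H → X → ℤ),
      Function.Injective φ ∧
      (∀ a b : H, φ (a + b) = φ a + φ b) ∧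
      (∀ a b : H, φ (a ⊓ b) = φ a ⊓ φ b) ∧
      (∀ a b : H, φ (a ⊔ b) = φ a ⊔ φ b) ∧
      φ e = (fun _ => (1 : ℤ)) ∧
      (∀ p : X, Function.Surjective (fun a : H => φ a p)) := by
  classical
  set X : Type := {p : H → ℤ // (∀ a b : H, p (a+b) = p a + p b) ∧
      (∀ a b : H, p (a ⊓ b) = p a ⊓ p b) ∧ p e = 1} with hX
  set φ : H → X → ℤ := fun a p => p.1 a with hφ
  have pzero : ∀ p : X, p.1 0 = 0 := by
    intro p
    have := p.2.1 0 0
    simp only [add_zero] at this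
    omega
  have pneg : ∀ p : X, ∀ a, p.1 (-a) = - p.1 a := by
    intro p a
    have := p.2.1 a (-a)
    rw [add_neg_cancel, pzero] at this
    omega
  have psub : ∀ p : X, ∀ a b, p.1 (a - b) = p.1 a - p.1 b := by
    intro p a b
    rw [sub_eq_add_neg, p.2.1, pneg]; ring
  have psup : ∀ p : X, ∀ a b : H, p.1 (a ⊔ b) = p.1 a ⊔ p.1 b := by
    intro p a b
    have h1 : (a ⊔ b) = a + b - a ⊓ b := by
      rw [eq_sub_iff_add_eq, add_comm (a ⊔ b), inf_add_sup]
    rw [h1, psub, p.2.1, p.2.2.1]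
    have h2 : ∀ x y : ℤ, x + y - x ⊓ y = x ⊔ y := by intro x y; omega
    exact h2 _ _
  -- separation of points
  have hsep : ∀ c : H, 0 ≤ c → c ≠ 0 → ∃ p : X, p.1 c ≠ 0 := by
    intro c hc0 hcne
    set T : Set (Set H) := {S | IsLId S ∧ c ∉ S} with hT
    have h0T : ({0} : Set H) ∈ T := by
      refine ⟨⟨rfl, ?_, ?_⟩, by simpa using hcne⟩
      · intro x hx y hy
        simp only [Set.mem_singleton_iff] at *
        rw [hx, hy, add_zero]
      · intro x y hy hxy
        simp only [Set.mem_singleton_iff] at *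
        rw [hy] at hxy
        simp only [abs_zero] at hxy
        exact lg_abs_le_zero hxy
    have hchain : ∀ ch ⊆ T, IsChain (· ⊆ ·) ch → ch.Nonempty →
        ∃ ub ∈ T, ∀ s ∈ ch, s ⊆ ub := by
      intro ch hchT hch hchne
      refine ⟨⋃₀ ch, ⟨⟨?_, ?_, ?_⟩, ?_⟩, fun s hs => Set.subset_sUnion_of_mem hs⟩
      · obtain ⟨S, hS⟩ := hchne
        exact ⟨S, hS, (hchT hS).1.1⟩
      · rintro x ⟨S1, hS1, hx⟩ y ⟨S2, hS2, hy⟩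
        rcases hch.total hS1 hS2 with h | h
        · exact ⟨S2, hS2, (hchT hS2).1.2.1 _ (h hx) _ hy⟩
        · exact ⟨S1, hS1, (hchT hS1).1.2.1 _ hx _ (h hy)⟩
      · rintro x y ⟨S1, hS1, hy⟩ hxy
        exact ⟨S1, hS1, (hchT hS1).1.2.2 _ _ hy hxy⟩
      · rintro ⟨S1, hS1, hc⟩
        exact (hchT hS1).2 hc
    obtain ⟨M, -, hmax⟩ := zorn_subset_nonempty T hchain _ h0T
    obtain ⟨hMl, hcM⟩ := hmax.1
    have heM : e ∉ M := by
      intro heM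
      obtain ⟨n, hn⟩ := hstrong c
      exact hcM (hMl.mem_of_nonneg_le hc0 hn (hMl.nsmul_mem heM n))
    have hprime : ∀ x y : H, 0 ≤ x → 0 ≤ y → x ⊓ y = 0 → x ∈ M ∨ y ∈ M := by
      intro x y hx hy hxy
      by_contra hcon
      push_neg at hcon
      have hgen : ∀ w : H, 0 ≤ w → w ∉ M → ∃ m ∈ M, ∃ n : ℕ, c ≤ |m| + n • w := by
        intro w hw hwM
        set Sw : Set H := {z | ∃ m ∈ M, ∃ n : ℕ, |z| ≤ |m| + n • w} with hSw
        have hSwId : IsLId Sw := by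
          refine ⟨⟨0, hMl.1, 0, by simp⟩, ?_, ?_⟩
          · rintro z ⟨m1, hm1, n1, h1⟩ z' ⟨m2, hm2, n2, h2⟩
            refine ⟨|m1| + |m2|, hMl.2.1 _ (hMl.abs_mem hm1) _ (hMl.abs_mem hm2), n1 + n2, ?_⟩
            rw [abs_of_nonneg (add_nonneg (abs_nonneg m1) (abs_nonneg m2)), add_nsmul]
            calc |z + z'| ≤ |z| + |z'| := abs_add_le z z'
              _ ≤ (|m1| + n1 • w) + (|m2| + n2 • w) := add_le_add h1 h2
              _ = |m1| + |m2| + (n1 • w + n2 • w) := by abel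
          · rintro z z' ⟨m1, hm1, n1, h1⟩ hzz'
            exact ⟨m1, hm1, n1, hzz'.trans h1⟩
        have hMSw : M ⊆ Sw := fun z hz => ⟨z, hz, 0, by simp⟩
        have hwSw : w ∈ Sw := ⟨0, hMl.1, 1, by simp [abs_of_nonneg hw]⟩
        have hcSw : c ∈ Sw := by
          by_contra hcSw
          have : Sw ⊆ M := hmax.2 ⟨hSwId, hcSw⟩ hMSw
          exact hwM (this hwSw)
        obtain ⟨m, hm, n, hcm⟩ := hcSw
        exact ⟨m, hm, n, by rwa [abs_of_nonneg hc0] at hcm⟩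
      obtain ⟨m1, hm1, n1, h1⟩ := hgen x hx hcon.1
      obtain ⟨m2, hm2, n2, h2⟩ := hgen y hy hcon.2
      have h1' : c ≤ |m1| + (max n1 n2) • x :=
        h1.trans (add_le_add_right (lg_nsmul_mono hx (le_max_left n1 n2)) _)
      have h2' : c ≤ |m2| + (max n1 n2) • y :=
        h2.trans (add_le_add_right (lg_nsmul_mono hy (le_max_right n1 n2)) _)
      have horth : ((max n1 n2) • x) ⊓ ((max n1 n2) • y) = 0 :=
        lg_orth_nsmul' hx hy hxy _ _
      have hkey : c ≤ |m1| + |m2| := by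
        calc c ≤ (|m1| + (max n1 n2) • x) ⊓ (|m2| + (max n1 n2) • y) := le_inf h1' h2'
          _ ≤ ((|m1| + |m2|) + (max n1 n2) • x) ⊓ ((|m1| + |m2|) + (max n1 n2) • y) :=
            inf_le_inf (add_le_add_left (le_add_of_nonneg_right (abs_nonneg m2)) _)
              (add_le_add_left (le_add_of_nonneg_left (abs_nonneg m1)) _)
          _ = (|m1| + |m2|) + (((max n1 n2) • x) ⊓ ((max n1 n2) • y)) := (add_inf _ _ _).symm
          _ = |m1| + |m2| := by rw [horth, add_zero]
      exact hcM (hMl.mem_of_nonneg_le hc0 hkey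
        (hMl.2.1 _ (hMl.abs_mem hm1) _ (hMl.abs_mem hm2)))
    -- representation of positive bounded elements
    have hnat : ∀ n : ℕ, ∀ a : H, 0 ≤ a → a ≤ n • e → ∃ k : ℕ, a - (k : ℤ) • e ∈ M := by
      intro n
      induction n with
      | zero =>
        intro a ha han
        simp only [zero_nsmul] at han
        refine ⟨0, ?_⟩
        have h0 : a = 0 := le_antisymm han ha
        simpa [h0] using hMl.1
      | succ n ih =>
        intro a ha han
        have hd0 : (0:H) ≤ (a - n • e) ⊔ 0 := le_sup_right
        have hde : (a - n • e) ⊔ 0 ≤ e := by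
          refine sup_le (le_shuffle han ?_) he
          rw [succ_nsmul]; abel
        have haid : a = (a ⊓ (n • e)) + ((a - n • e) ⊔ 0) := by
          have h1 : (a - n • e) ⊔ 0 = (a ⊔ n • e) - n • e := by
            rw [sup_sub, sub_self]
          rw [h1]
          have h2 := inf_add_sup a (n • e)
          calc a = (a + n • e) - n • e := by abel
            _ = (a ⊓ n • e + (a ⊔ n • e)) - n • e := by rw [h2]
            _ = a ⊓ n • e + ((a ⊔ n • e) - n • e) := by abel
        obtain ⟨k, hk⟩ := ih (a ⊓ (n • e)) (le_inf ha (lg_nsmul_nonneg he n)) inf_le_right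
        rcases hprime _ _ hd0 (sub_nonneg.mpr hde) (hsing _ hd0 hde) with hdM | hedM
        · refine ⟨k, ?_⟩
          have hmem := hMl.2.1 _ hk _ hdM
          have heq : a - (k:ℤ) • e = (a ⊓ (n • e) - (k:ℤ) • e) + ((a - n • e) ⊔ 0) := by
            nth_rewrite 1 [haid]; abel
          rwa [heq]
        · refine ⟨k + 1, ?_⟩
          have hmem := hMl.2.1 _ hk _ (hMl.neg_mem hedM)
          have heq : a - (((k:ℕ)+1 : ℕ):ℤ) • e =
              (a ⊓ (n • e) - (k:ℤ) • e) + (-(e - ((a - n • e) ⊔ 0))) := by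
            nth_rewrite 1 [haid]
            push_cast
            rw [add_zsmul, one_zsmul]; abel
          rwa [heq]
    have hex : ∀ a : H, ∃ k : ℤ, a - k • e ∈ M := by
      intro a
      obtain ⟨n, hn⟩ := hstrong a
      obtain ⟨m, hm⟩ := hstrong (-a)
      have h1 : 0 ≤ a + m • e := le_shuffle (neg_le.mp hm) (by abel)
      have h2 : a + m • e ≤ (n + m) • e := by
        rw [add_nsmul]
        exact add_le_add_left hn _
      obtain ⟨k, hk⟩ := hnat (n+m) _ h1 h2
      refine ⟨(k : ℤ) - m, ?_⟩
      have heq : a - ((k:ℤ) - m) • e = (a + m • e) - (k:ℤ) • e := by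
        rw [sub_zsmul, natCast_zsmul, natCast_zsmul]; abel
      rwa [heq]
    have hjze : ∀ j : ℤ, j • e ∈ M → j = 0 := by
      intro j hj
      by_contra hjne
      have hk : (j.natAbs : ℤ) • e ∈ M := by
        rcases le_or_gt 0 j with h | h
        · rwa [Int.natAbs_of_nonneg h]
        · have hj' : (j.natAbs : ℤ) = -j := by omega
          rw [hj', neg_zsmul]
          exact hMl.neg_mem hj
      rw [natCast_zsmul] at hk
      have h1 : e ≤ j.natAbs • e := by
        have := lg_nsmul_mono he (Nat.one_le_iff_ne_zero.mpr (Int.natAbs_ne_zero.mpr hjne))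
        simpa using this
      exact heM (hMl.mem_of_nonneg_le he h1 hk)
    have huniq : ∀ (a : H) (k l : ℤ), a - k • e ∈ M → a - l • e ∈ M → k = l := by
      intro a k l h1 h2
      have hmem : (k - l) • e ∈ M := by
        have h3 := hMl.2.1 _ h2 _ (hMl.neg_mem h1)
        have heq : (a - l • e) + (-(a - k • e)) = (k - l) • e := by
          rw [sub_zsmul]; abel
        rwa [heq] at h3
      have := hjze _ hmem
      omega
    set p : H → ℤ := fun a => Classical.choose (hex a) with hpdef
    have hp : ∀ a : H, a - (p a) • e ∈ M := fun a => Classical.choose_spec (hex a)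
    have hknn : ∀ a : H, 0 ≤ a → 0 ≤ p a := by
      intro a ha
      obtain ⟨n, hn⟩ := hstrong a
      obtain ⟨k, hk⟩ := hnat n a ha hn
      have := huniq a _ _ (hp a) hk
      omega
    have padd : ∀ a b : H, p (a + b) = p a + p b := by
      intro a b
      have hmem : (a + b) - (p a + p b) • e ∈ M := by
        have h3 := hMl.2.1 _ (hp a) _ (hp b)
        have heq : (a - p a • e) + (b - p b • e) = (a + b) - (p a + p b) • e := by
          rw [add_zsmul]; abel
        rwa [heq] at h3
      exact huniq (a+b) _ _ (hp (a+b)) hmem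
    have pe : p e = 1 := by
      have hmem : e - (1:ℤ) • e ∈ M := by
        rw [one_zsmul, sub_self]; exact hMl.1
      exact huniq e _ _ (hp e) hmem
    have hcaseb : ∀ a b : H, (a - b)⁻ ∈ M → p (a ⊓ b) = p b ∧ p b ≤ p a := by
      intro a b hnM
      constructor
      · have hid : a ⊓ b = b - (a - b)⁻ := by
          rw [negPart_def, neg_sub, sub_sup, sub_sub_cancel, sub_zero, inf_comm]
        have hmem : (a ⊓ b) - (p b) • e ∈ M := by
          have h3 := hMl.2.1 _ (hp b) _ (hMl.neg_mem hnM)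
          have heq : (b - p b • e) + (-(a - b)⁻) = (a ⊓ b) - (p b) • e := by
            rw [hid]; abel
          rwa [heq] at h3
        exact huniq (a ⊓ b) _ _ (hp (a ⊓ b)) hmem
      · have hxab : p a = p (a - b) + p b := by
          have := padd (a - b) b
          rw [sub_add_cancel] at this
          exact this
        have hps := posPart_sub_negPart (a - b)
        have hmem : (a - b)⁺ - (p (a - b)) • e ∈ M := by
          have h3 := hMl.2.1 _ (hp (a - b)) _ hnM
          have heq : ((a - b) - p (a - b) • e) + (a - b)⁻ = (a - b)⁺ - (p (a - b)) • e := by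
            rw [sub_eq_iff_eq_add.mp hps]; abel
          rwa [heq] at h3
        obtain ⟨n, hn⟩ := hstrong ((a - b)⁺)
        obtain ⟨k, hk⟩ := hnat n _ (posPart_nonneg (a-b)) hn
        have := huniq _ _ _ hmem hk
        omega
    have pinf : ∀ a b : H, p (a ⊓ b) = p a ⊓ p b := by
      intro a b
      rcases hprime _ _ (posPart_nonneg (a-b)) (negPart_nonneg (a-b))
        (posPart_inf_negPart_eq_zero (a-b)) with hP | hN
      · have hswap : (b - a)⁻ = (a - b)⁺ := by
          rw [negPart_def, posPart_def, neg_sub]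
        obtain ⟨he1, he2⟩ := hcaseb b a (hswap ▸ hP)
        rw [inf_comm] at he1
        rw [he1]
        omega
      · obtain ⟨he1, he2⟩ := hcaseb a b hN
        rw [he1]
        omega
    have hpc : p c ≠ 0 := by
      intro h0
      apply hcM
      have := hp c
      rwa [h0, zero_zsmul, sub_zero] at this
    exact ⟨⟨p, padd, pinf, pe⟩, hpc⟩
  -- assemble
  refine ⟨X, φ, ?_, fun a b => funext fun p => p.2.1 a b,
    fun a b => funext fun p => p.2.2.1 a b,
    fun a b => funext fun p => psup p a b,
    funext fun p => p.2.2.2, ?_⟩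
  · intro a b hab
    have hdall : ∀ p : X, p.1 (a - b) = 0 := by
      intro p
      have h1 : p.1 a = p.1 b := congrFun hab p
      rw [psub, h1, sub_self]
    have hpp : (a - b)⁺ = 0 := by
      by_contra hne
      obtain ⟨p, hpne⟩ := hsep _ (posPart_nonneg (a-b)) hne
      apply hpne
      rw [posPart_def]
      rw [psup p, hdall, pzero]
      simp
    have hnp : (a - b)⁻ = 0 := by
      by_contra hne
      obtain ⟨p, hpne⟩ := hsep _ (negPart_nonneg (a-b)) hne
      apply hpne
      rw [negPart_def]
      rw [psup p, pneg, hdall, pzero]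
      simp
    have h1 : a - b ≤ 0 := posPart_eq_zero.mp hpp
    have h2 : 0 ≤ a - b := negPart_eq_zero.mp hnp
    have : a - b = 0 := le_antisymm h1 h2
    exact sub_eq_zero.mp this
  · intro p z
    refine ⟨z • e, ?_⟩
    show p.1 (z • e) = z
    have := map_zsmul (AddMonoidHom.mk' p.1 p.2.1) z e
    simp only [AddMonoidHom.mk'_apply] at this
    rw [this, p.2.2.2, smul_eq_mul, mul_one]

end Subdirect

section Polar
variable {G : Type} [Lattice G] [AddCommGroup G] [CovariantClass G G (· + ·) (· ≤ ·)]

lemma lg_posPart_le_abs (a : G) : a⁺ ≤ |a| := by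
  rw [← posPart_add_negPart a]
  exact le_add_of_nonneg_right (negPart_nonneg a)

lemma lg_negPart_le_abs (a : G) : a⁻ ≤ |a| := by
  rw [← posPart_add_negPart a]
  exact le_add_of_nonneg_left (posPart_nonneg a)

/-- The polar subgroup of `w`. -/
def polGrp (w : G) (hw : 0 ≤ w) : AddSubgroup G where
  carrier := {g : G | |g| ⊓ w = 0}
  zero_mem' := by
    simp only [Set.mem_setOf_eq, abs_zero]
    exact inf_eq_left.mpr hw
  add_mem' := by
    intro a b ha hb
    simp only [Set.mem_setOf_eq] at *
    refine le_antisymm ?_ (le_inf (abs_nonneg _) hw)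
    calc |a + b| ⊓ w ≤ (|a| + |b|) ⊓ w := inf_le_inf_right w (abs_add_le a b)
      _ = w ⊓ (|a| + |b|) := inf_comm _ _
      _ ≤ w ⊓ |a| + w ⊓ |b| := lg_riesz hw (abs_nonneg a) (abs_nonneg b)
      _ = |a| ⊓ w + |b| ⊓ w := by rw [inf_comm w, inf_comm w]
      _ = 0 := by rw [ha, hb, add_zero]
  neg_mem' := by
    intro a ha
    simp only [Set.mem_setOf_eq, abs_neg] at *
    exact ha

lemma mem_polGrp {w : G} {hw : 0 ≤ w} {g : G} : g ∈ polGrp w hw ↔ |g| ⊓ w = 0 := Iff.rfl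

lemma polGrp_abs_bound {w : G} {hw : 0 ≤ w} {x y : G}
    (h : |x| ≤ |y|) (hy : y ∈ polGrp w hw) : x ∈ polGrp w hw := by
  rw [mem_polGrp] at *
  refine le_antisymm ?_ (le_inf (abs_nonneg x) hw)
  calc |x| ⊓ w ≤ |y| ⊓ w := inf_le_inf_right w h
    _ = 0 := hy

lemma polGrp_mem_of_nonneg_le {w : G} {hw : 0 ≤ w} {x y : G}
    (hx : 0 ≤ x) (hxy : x ≤ y) (hy : y ∈ polGrp w hw) : x ∈ polGrp w hw := by
  refine polGrp_abs_bound ?_ hy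
  rw [abs_of_nonneg hx, abs_of_nonneg (hx.trans hxy)]
  exact hxy

lemma lg_abs_sup_le (a b : G) : |a ⊔ b| ≤ |a| + |b| := by
  rw [abs_le']
  constructor
  · exact sup_le ((le_abs_self a).trans (le_add_of_nonneg_right (abs_nonneg b)))
      ((le_abs_self b).trans (le_add_of_nonneg_left (abs_nonneg a)))
  · rw [neg_sup]
    exact inf_le_left.trans ((neg_le_abs a).trans (le_add_of_nonneg_right (abs_nonneg b)))

lemma lg_abs_inf_le (a b : G) : |a ⊓ b| ≤ |a| + |b| := by
  rw [abs_le']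
  constructor
  · exact inf_le_left.trans ((le_abs_self a).trans (le_add_of_nonneg_right (abs_nonneg b)))
  · rw [neg_inf]
    exact sup_le ((neg_le_abs a).trans (le_add_of_nonneg_right (abs_nonneg b)))
      ((neg_le_abs b).trans (le_add_of_nonneg_left (abs_nonneg a)))

lemma polGrp_sup {w : G} {hw : 0 ≤ w} : ∀ ⦃x y : G⦄,
    x ∈ polGrp w hw → y ∈ polGrp w hw → x ⊔ y ∈ polGrp w hw := by
  intro x y hx hy
  have hxa : |x| ∈ polGrp w hw :=
    polGrp_abs_bound (le_of_eq (abs_of_nonneg (abs_nonneg x))) hx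
  have hya : |y| ∈ polGrp w hw :=
    polGrp_abs_bound (le_of_eq (abs_of_nonneg (abs_nonneg y))) hy
  have hz : |x| + |y| ∈ polGrp w hw := (polGrp w hw).add_mem hxa hya
  refine polGrp_abs_bound ?_ hz
  rw [abs_of_nonneg (add_nonneg (abs_nonneg x) (abs_nonneg y))]
  exact lg_abs_sup_le x y

lemma polGrp_inf {w : G} {hw : 0 ≤ w} : ∀ ⦃x y : G⦄,
    x ∈ polGrp w hw → y ∈ polGrp w hw → x ⊓ y ∈ polGrp w hw := by
  intro x y hx hy
  have hxa : |x| ∈ polGrp w hw :=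
    polGrp_abs_bound (le_of_eq (abs_of_nonneg (abs_nonneg x))) hx
  have hya : |y| ∈ polGrp w hw :=
    polGrp_abs_bound (le_of_eq (abs_of_nonneg (abs_nonneg y))) hy
  have hz : |x| + |y| ∈ polGrp w hw := (polGrp w hw).add_mem hxa hya
  refine polGrp_abs_bound ?_ hz
  rw [abs_of_nonneg (add_nonneg (abs_nonneg x) (abs_nonneg y))]
  exact lg_abs_inf_le x y

lemma polGrp_pos_bound {w v : G} (hw : 0 ≤ w) {hv : 0 ≤ v}
    {g : G} (hg : g ∈ polGrp v hv) {n : ℕ} (hb : g⁺ ≤ n • w + n • v) : g ≤ n • w := by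
  rw [mem_polGrp] at hg
  have h1 : g⁺ ⊓ v = 0 := le_antisymm
    ((inf_le_inf_right v (lg_posPart_le_abs g)).trans_eq hg)
    (le_inf (posPart_nonneg g) hv)
  have h2 : g⁺ ⊓ (n • v) = 0 := lg_orth_nsmul (posPart_nonneg g) hv h1 n
  have h3 : g⁺ = g⁺ ⊓ (n • w + n • v) := (inf_eq_left.mpr hb).symm
  calc g ≤ g⁺ := le_posPart g
    _ = g⁺ ⊓ (n • w + n • v) := h3
    _ ≤ g⁺ ⊓ (n • w) + g⁺ ⊓ (n • v) :=
        lg_riesz (posPart_nonneg g) (lg_nsmul_nonneg hw n) (lg_nsmul_nonneg hv n)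
    _ = g⁺ ⊓ (n • w) := by rw [h2, add_zero]
    _ ≤ n • w := inf_le_right

end Polar

section Halves
variable {G : Type} [Lattice G] [AddCommGroup G] [CovariantClass G G (· + ·) (· ≤ ·)]

lemma lg_half_ind {e f : G} (he : 0 ≤ e) (hf : 0 ≤ f)
    (hhalf : ∀ x : G, 0 ≤ x → x ≤ f → ∃ h, 0 ≤ h ∧ h + h = x) :
    ∀ n : ℕ, ∀ c : G, 0 ≤ c → c ⊓ e = 0 → c ≤ n • f →
      ∃ h : G, 0 ≤ h ∧ h ≤ c ∧ h + h = c := by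
  intro n
  induction n with
  | zero =>
    intro c hc hce hcn
    simp only [zero_nsmul] at hcn
    have hc0 : c = 0 := le_antisymm hcn hc
    exact ⟨0, le_rfl, by rw [hc0], by rw [hc0, add_zero]⟩
  | succ n ih =>
    intro c hc hce hcn
    obtain ⟨h1, h10, h1s⟩ := hhalf (c ⊓ f) (le_inf hc hf) inf_le_right
    have hc2 : (0:G) ≤ (c - f) ⊔ 0 := le_sup_right
    have hc2c : (c - f) ⊔ 0 ≤ c := sup_le (sub_le_self c hf) hc
    have hc2e : ((c - f) ⊔ 0) ⊓ e = 0 :=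
      le_antisymm ((inf_le_inf_right e hc2c).trans_eq hce) (le_inf hc2 he)
    have hc2n : (c - f) ⊔ 0 ≤ n • f :=
      sup_le (le_shuffle hcn (by rw [succ_nsmul]; abel)) (lg_nsmul_nonneg hf n)
    obtain ⟨h2, h20, h2c, h2s⟩ := ih _ hc2 hc2e hc2n
    have hsum : (c ⊓ f) + ((c - f) ⊔ 0) = c := by
      have h1' : (c - f) ⊔ 0 = (c ⊔ f) - f := by rw [sup_sub, sub_self]
      rw [h1']
      have h2' := inf_add_sup c f
      calc c ⊓ f + ((c ⊔ f) - f) = (c ⊓ f + (c ⊔ f)) - f := by abel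
        _ = (c + f) - f := by rw [h2']
        _ = c := by abel
    have hkey : (h1 + h2) + (h1 + h2) = c := by
      rw [show (h1+h2)+(h1+h2) = (h1+h1)+(h2+h2) by abel, h1s, h2s, hsum]
    refine ⟨h1 + h2, add_nonneg h10 h20, ?_, hkey⟩
    calc h1 + h2 ≤ (h1+h2) + (h1+h2) := le_add_of_nonneg_left (add_nonneg h10 h20)
      _ = c := hkey

end Halves

theorem stmt_7' {G : Type} [Lattice G] [AddCommGroup G]
    [CovariantClass G G (· + ·) (· ≤ ·)]
    (u : G) (hu : IsStrongUnit u) (r : G → G) (hr : IsSquareRoot u r) :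
    ∃ (A B : UnitalAbLGroup) (ψ : G → A.carrier × B.carrier),
      Function.Bijective ψ ∧
      (∀ a b : G, ψ (a + b) = ψ a + ψ b) ∧
      (∀ a b : G, ψ (a ⊓ b) = ψ a ⊓ ψ b) ∧
      (∀ a b : G, ψ (a ⊔ b) = ψ a ⊔ ψ b) ∧
      ψ u = (A.u, B.u) ∧
      (∃ (X : Type) (φ : A.carrier → X → ℤ),
        Function.Injective φ ∧
        (∀ a b : A.carrier, φ (a + b) = φ a + φ b) ∧
        (∀ a b : A.carrier, φ (a ⊓ b) = φ a ⊓ φ b) ∧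
        (∀ a b : A.carrier, φ (a ⊔ b) = φ a ⊔ φ b) ∧
        φ A.u = (fun _ => (1 : ℤ)) ∧
        (∀ p : X, Function.Surjective (fun a : A.carrier => φ a p))) ∧
      TwoDivisible B.carrier := by
  classical
  obtain ⟨e, f, he, hf, hsum, hef, hsing, hhalf⟩ := mv_key u hu r hr
  obtain ⟨hu0, hust⟩ := hu
  have hfe : f ⊓ e = 0 := by rw [inf_comm]; exact hef
  have heA : e ∈ polGrp f hf := by rw [mem_polGrp, abs_of_nonneg he]; exact hef
  have hfB : f ∈ polGrp e he := by rw [mem_polGrp, abs_of_nonneg hf]; exact hfe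
  have hzero : ∀ z : G, 0 ≤ z → z ⊓ e = 0 → z ⊓ f = 0 → z = 0 := by
    intro z hz hze hzf
    obtain ⟨n, -, hn⟩ := hust z
    refine lg_pinch he hf hze hzf hz (n := n) ?_
    rw [← smul_add, hsum]
    exact hn
  have hABzero : ∀ z : G, z ∈ polGrp f hf → z ∈ polGrp e he → z = 0 := by
    intro z hzA hzB
    rw [mem_polGrp] at hzA hzB
    have h0 : |z| = 0 := hzero _ (abs_nonneg z) hzB hzA
    exact lg_abs_le_zero (le_of_eq h0)
  have hbound : ∀ g : G, ∃ n : ℕ, 1 ≤ n ∧ g⁺ ≤ n • e + n • f := by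
    intro g
    obtain ⟨n, hn1, hn⟩ := hust (g⁺)
    exact ⟨n, hn1, by rw [← smul_add, hsum]; exact hn⟩
  -- decomposition
  have hdecpos : ∀ c : G, 0 ≤ c → ∃ a b : G, a ∈ polGrp f hf ∧ b ∈ polGrp e he ∧ c = a + b := by
    intro c hc
    obtain ⟨n, -, hn⟩ := hust c
    have hn' : c ≤ n • e + n • f := by rw [← smul_add, hsum]; exact hn
    have horth := lg_orth_nsmul' he hf hef n n
    have hsum2 := lg_orth_add_eq hc (lg_nsmul_nonneg he n) (lg_nsmul_nonneg hf n) horth hn'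
    refine ⟨c ⊓ n • e, c ⊓ n • f, ?_, ?_, hsum2.symm⟩
    · rw [mem_polGrp, abs_of_nonneg (le_inf hc (lg_nsmul_nonneg he n))]
      refine le_antisymm ?_ (le_inf (le_inf hc (lg_nsmul_nonneg he n)) hf)
      calc (c ⊓ n • e) ⊓ f ≤ (n • e) ⊓ f := inf_le_inf_right f inf_le_right
        _ = 0 := by rw [inf_comm]; exact lg_orth_nsmul hf he hfe n
    · rw [mem_polGrp, abs_of_nonneg (le_inf hc (lg_nsmul_nonneg hf n))]
      refine le_antisymm ?_ (le_inf (le_inf hc (lg_nsmul_nonneg hf n)) he)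
      calc (c ⊓ n • f) ⊓ e ≤ (n • f) ⊓ e := inf_le_inf_right e inf_le_right
        _ = 0 := by rw [inf_comm]; exact lg_orth_nsmul he hf hef n
  have hdec : ∀ g : G, ∃ ab : G × G,
      ab.1 ∈ polGrp f hf ∧ ab.2 ∈ polGrp e he ∧ g = ab.1 + ab.2 := by
    intro g
    obtain ⟨a1, b1, ha1, hb1, h1⟩ := hdecpos (g⁺) (posPart_nonneg g)
    obtain ⟨a2, b2, ha2, hb2, h2⟩ := hdecpos (g⁻) (negPart_nonneg g)
    refine ⟨(a1 - a2, b1 - b2), (polGrp f hf).sub_mem ha1 ha2,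
      (polGrp e he).sub_mem hb1 hb2, ?_⟩
    have hg := posPart_sub_negPart g
    show g = (a1 - a2) + (b1 - b2)
    rw [← hg, h1, h2]; abel
  have huniqd : ∀ {a b a' b' : G}, a ∈ polGrp f hf → b ∈ polGrp e he →
      a' ∈ polGrp f hf → b' ∈ polGrp e he → a + b = a' + b' → a = a' ∧ b = b' := by
    intro a b a' b' ha hb ha' hb' h
    have h1 : a - a' = b' - b := sub_eq_sub_iff_add_eq_add.mpr (h.trans (add_comm a' b'))
    have h2 : a - a' ∈ polGrp f hf := (polGrp f hf).sub_mem ha ha'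
    have h3 : a - a' ∈ polGrp e he := by rw [h1]; exact (polGrp e he).sub_mem hb' hb
    have h4 : a - a' = 0 := hABzero _ h2 h3
    refine ⟨sub_eq_zero.mp h4, ?_⟩
    have h5 : b' - b = 0 := h1 ▸ h4
    exact (sub_eq_zero.mp h5).symm
  have hposrefl : ∀ {a b : G}, a ∈ polGrp f hf → b ∈ polGrp e he →
      0 ≤ a + b → 0 ≤ a ∧ 0 ≤ b := by
    intro a b ha hb hab
    rw [mem_polGrp] at ha hb
    constructor
    · have hnx : -a ≤ b := le_shuffle hab (by abel)
      have h1 : a⁻ ≤ b⁺ := by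
        rw [negPart_def, posPart_def]
        exact sup_le_sup_right hnx 0
      have h2 : a⁻ ⊓ f = 0 := le_antisymm
        ((inf_le_inf_right f (lg_negPart_le_abs a)).trans_eq ha)
        (le_inf (negPart_nonneg a) hf)
      have h3 : a⁻ ⊓ e = 0 := le_antisymm
        ((inf_le_inf_right e (h1.trans (lg_posPart_le_abs b))).trans_eq hb)
        (le_inf (negPart_nonneg a) he)
      exact negPart_eq_zero.mp (hzero _ (negPart_nonneg a) h3 h2)
    · have hnx : -b ≤ a := le_shuffle hab (by abel)
      have h1 : b⁻ ≤ a⁺ := by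
        rw [negPart_def, posPart_def]
        exact sup_le_sup_right hnx 0
      have h2 : b⁻ ⊓ e = 0 := le_antisymm
        ((inf_le_inf_right e (lg_negPart_le_abs b)).trans_eq hb)
        (le_inf (negPart_nonneg b) he)
      have h3 : b⁻ ⊓ f = 0 := le_antisymm
        ((inf_le_inf_right f (h1.trans (lg_posPart_le_abs a))).trans_eq ha)
        (le_inf (negPart_nonneg b) hf)
      exact negPart_eq_zero.mp (hzero _ (negPart_nonneg b) h2 h3)
  -- lattice instances
  letI latA : Lattice ↥(polGrp f hf) := Subtype.lattice polGrp_sup polGrp_inf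
  letI latB : Lattice ↥(polGrp e he) := Subtype.lattice polGrp_sup polGrp_inf
  have hstrongA : ∀ g : G, g ∈ polGrp f hf → ∃ n : ℕ, 1 ≤ n ∧ g ≤ n • e := by
    intro g hg
    obtain ⟨n, hn1, hn⟩ := hbound g
    exact ⟨n, hn1, polGrp_pos_bound he hg hn⟩
  have hstrongB : ∀ g : G, g ∈ polGrp e he → ∃ n : ℕ, 1 ≤ n ∧ g ≤ n • f := by
    intro g hg
    obtain ⟨n, hn1, hn⟩ := hbound g
    rw [add_comm] at hn
    exact ⟨n, hn1, polGrp_pos_bound hf hg hn⟩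
  let A : UnitalAbLGroup :=
    { carrier := ↥(polGrp f hf), grp := inferInstance, lat := latA,
      cov := fun a b c h => add_le_add_right (α := G) h (a : G),
      u := ⟨e, heA⟩,
      u_nonneg := by show (0:G) ≤ e; exact he,
      strong := by
        intro a
        obtain ⟨n, hn1, hn⟩ := hstrongA a.1 a.2
        refine ⟨n, hn1, ?_⟩
        show (a : G) ≤ ((n • (⟨e, heA⟩ : ↥(polGrp f hf)) : ↥(polGrp f hf)) : G)
        rw [AddSubmonoidClass.coe_nsmul]
        exact hn }
  let B : UnitalAbLGroup :=
    { carrier := ↥(polGrp e he), grp := inferInstance, lat := latB,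
      cov := fun a b c h => add_le_add_right (α := G) h (a : G),
      u := ⟨f, hfB⟩,
      u_nonneg := by show (0:G) ≤ f; exact hf,
      strong := by
        intro b
        obtain ⟨n, hn1, hn⟩ := hstrongB b.1 b.2
        refine ⟨n, hn1, ?_⟩
        show (b : G) ≤ ((n • (⟨f, hfB⟩ : ↥(polGrp e he)) : ↥(polGrp e he)) : G)
        rw [AddSubmonoidClass.coe_nsmul]
        exact hn }
  let ψ : G → A.carrier × B.carrier := fun g =>
    (⟨(Classical.choose (hdec g)).1, (Classical.choose_spec (hdec g)).1⟩,
     ⟨(Classical.choose (hdec g)).2, (Classical.choose_spec (hdec g)).2.1⟩)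
  have hψsum : ∀ g : G, g = ((ψ g).1 : G) + ((ψ g).2 : G) := fun g =>
    (Classical.choose_spec (hdec g)).2.2
  have hψchar : ∀ (g a b : G) (ha : a ∈ polGrp f hf) (hb : b ∈ polGrp e he),
      g = a + b → ψ g = (⟨a, ha⟩, ⟨b, hb⟩) := by
    intro g a b ha hb hgab
    obtain ⟨h1, h2⟩ := huniqd (Classical.choose_spec (hdec g)).1
      (Classical.choose_spec (hdec g)).2.1 ha hb ((hψsum g).symm.trans hgab)
    exact Prod.ext (Subtype.ext h1) (Subtype.ext h2)
  have hψadd : ∀ x y : G, ψ (x + y) = ψ x + ψ y := by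
    intro x y
    refine hψchar (x + y) (((ψ x).1 : G) + ((ψ y).1 : G)) (((ψ x).2 : G) + ((ψ y).2 : G))
      ((polGrp f hf).add_mem (ψ x).1.2 (ψ y).1.2)
      ((polGrp e he).add_mem (ψ x).2.2 (ψ y).2.2) ?_
    conv_lhs => rw [hψsum x, hψsum y]
    abel
  have hψle : ∀ {x y : G}, x ≤ y ↔ ψ x ≤ ψ y := by
    intro x y
    constructor
    · intro h
      have hd : (0:G) ≤ (((ψ y).1 : G) - ((ψ x).1 : G)) + (((ψ y).2 : G) - ((ψ x).2 : G)) := by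
        have h2 : (0:G) ≤ y - x := sub_nonneg.mpr h
        refine le_trans h2 (le_of_eq ?_)
        conv_lhs => rw [hψsum x, hψsum y]
        abel
      obtain ⟨hA, hB⟩ := hposrefl ((polGrp f hf).sub_mem (ψ y).1.2 (ψ x).1.2)
        ((polGrp e he).sub_mem (ψ y).2.2 (ψ x).2.2) hd
      rw [Prod.le_def]
      have hA' : ((ψ x).1 : G) ≤ ((ψ y).1 : G) := sub_nonneg.mp hA
      have hB' : ((ψ x).2 : G) ≤ ((ψ y).2 : G) := sub_nonneg.mp hB
      exact ⟨hA', hB'⟩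
    · intro h
      rw [Prod.le_def] at h
      have h1 : ((ψ x).1 : G) ≤ ((ψ y).1 : G) := h.1
      have h2 : ((ψ x).2 : G) ≤ ((ψ y).2 : G) := h.2
      rw [hψsum x, hψsum y]
      exact add_le_add h1 h2
  have hψsurj : Function.Surjective ψ := by
    intro pq
    refine ⟨(pq.1 : G) + (pq.2 : G), ?_⟩
    have := hψchar ((pq.1 : G) + (pq.2 : G)) (pq.1 : G) (pq.2 : G) pq.1.2 pq.2.2 rfl
    rw [this]
  have hψinj : Function.Injective ψ := by
    intro x y h
    rw [hψsum x, hψsum y]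
    rw [Prod.ext_iff] at h
    rw [Subtype.ext_iff] at h
    rw [h.1, (Subtype.ext_iff).mp h.2]
  have hψinf : ∀ x y : G, ψ (x ⊓ y) = ψ x ⊓ ψ y := by
    intro x y
    refine le_antisymm (le_inf (hψle.mp inf_le_left) (hψle.mp inf_le_right)) ?_
    obtain ⟨z, hz⟩ := hψsurj (ψ x ⊓ ψ y)
    rw [← hz]
    refine hψle.mp (le_inf ?_ ?_)
    · exact hψle.mpr (hz.symm ▸ (inf_le_left : ψ x ⊓ ψ y ≤ ψ x))
    · exact hψle.mpr (hz.symm ▸ (inf_le_right : ψ x ⊓ ψ y ≤ ψ y))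
  have hψsup : ∀ x y : G, ψ (x ⊔ y) = ψ x ⊔ ψ y := by
    intro x y
    refine le_antisymm ?_ (sup_le (hψle.mp le_sup_left) (hψle.mp le_sup_right))
    obtain ⟨z, hz⟩ := hψsurj (ψ x ⊔ ψ y)
    rw [← hz]
    refine hψle.mp (sup_le ?_ ?_)
    · exact hψle.mpr (hz.symm ▸ (le_sup_left : ψ x ≤ ψ x ⊔ ψ y))
    · exact hψle.mpr (hz.symm ▸ (le_sup_right : ψ y ≤ ψ x ⊔ ψ y))
  refine ⟨A, B, ψ, ⟨hψinj, hψsurj⟩, hψadd, hψinf, hψsup, ?_, ?_, ?_⟩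
  · exact hψchar u e f heA hfB hsum.symm
  · -- subdirect representation of A
    haveI covA : CovariantClass A.carrier A.carrier (· + ·) (· ≤ ·) :=
      ⟨fun a b c h => add_le_add_right (α := G) h (a : G)⟩
    refine subdirect_rep (H := A.carrier) (⟨e, heA⟩ : ↥(polGrp f hf)) ?_ ?_ ?_
    · show (0:G) ≤ e; exact he
    · intro g
      obtain ⟨n, -, hn⟩ := hstrongA g.1 g.2
      refine ⟨n, ?_⟩
      show (g : G) ≤ ((n • (⟨e, heA⟩ : ↥(polGrp f hf)) : ↥(polGrp f hf)) : G)
      rw [AddSubmonoidClass.coe_nsmul]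
      exact hn
    · intro x hx hxe
      have h1 : (0:G) ≤ (x : G) := hx
      have h2 : (x : G) ≤ e := hxe
      exact Subtype.ext (hsing (x : G) h1 h2)
  · -- two-divisibility of B
    intro b
    have hbmem : ((b : G))⁺ ∈ polGrp e he := polGrp_abs_bound
      (by rw [abs_of_nonneg (posPart_nonneg (b:G))]; exact lg_posPart_le_abs (b:G)) b.2
    have hbmem' : ((b : G))⁻ ∈ polGrp e he := polGrp_abs_bound
      (by rw [abs_of_nonneg (negPart_nonneg (b:G))]; exact lg_negPart_le_abs (b:G)) b.2
    have hposbound : ∀ z : G, z ∈ polGrp e he → 0 ≤ z →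
        ∃ h : G, 0 ≤ h ∧ h ≤ z ∧ h + h = z := by
      intro z hz hz0
      obtain ⟨n, -, hzb⟩ := hstrongB z hz
      have hze : z ⊓ e = 0 := by
        rw [mem_polGrp, abs_of_nonneg hz0] at hz
        exact hz
      exact lg_half_ind he hf hhalf n z hz0 hze hzb
    obtain ⟨h1, h10, h1le, h1s⟩ := hposbound _ hbmem (posPart_nonneg (b:G))
    obtain ⟨h2, h20, h2le, h2s⟩ := hposbound _ hbmem' (negPart_nonneg (b:G))
    have hm1 : h1 ∈ polGrp e he := polGrp_mem_of_nonneg_le h10 h1le hbmem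
    have hm2 : h2 ∈ polGrp e he := polGrp_mem_of_nonneg_le h20 h2le hbmem'
    refine ⟨⟨h1 - h2, (polGrp e he).sub_mem hm1 hm2⟩, ?_⟩
    apply Subtype.ext
    show (h1 - h2) + (h1 - h2) = (b : G)
    rw [show (h1 - h2) + (h1 - h2) = (h1 + h1) - (h2 + h2) by abel, h1s, h2s]
    exact posPart_sub_negPart (b : G)

/-- an MV-algebra `M = Γ(G,u)` with a square root splits `(G,u)` as a
direct product `(G₁ × G₂,(u₁,u₂))` where `(G₁,u₁)` is a subdirect product of copies
of `(ℤ,1)` and `G₂` is two-divisible. -/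
theorem stmt_7 {G : Type} [Lattice G] [AddCommGroup G]
    [CovariantClass G G (· + ·) (· ≤ ·)]
    (u : G) (hu : IsStrongUnit u) (r : G → G) (hr : IsSquareRoot u r) :
    ∃ (A B : UnitalAbLGroup) (ψ : G → A.carrier × B.carrier),
      Function.Bijective ψ ∧
      (∀ a b : G, ψ (a + b) = ψ a + ψ b) ∧
      (∀ a b : G, ψ (a ⊓ b) = ψ a ⊓ ψ b) ∧
      (∀ a b : G, ψ (a ⊔ b) = ψ a ⊔ ψ b) ∧
      ψ u = (A.u, B.u) ∧
      (∃ (X : Type) (φ : A.carrier → X → ℤ),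
        Function.Injective φ ∧
        (∀ a b : A.carrier, φ (a + b) = φ a + φ b) ∧
        (∀ a b : A.carrier, φ (a ⊓ b) = φ a ⊓ φ b) ∧
        (∀ a b : A.carrier, φ (a ⊔ b) = φ a ⊔ φ b) ∧
        φ A.u = (fun _ => (1 : ℤ)) ∧
        (∀ p : X, Function.Surjective (fun a : A.carrier => φ a p))) ∧
      TwoDivisible B.carrier :=
  stmt_7' u hu r hr
end

section
/- Let M = Γ(G,u) be a representable pseudo MV-algebra with a square root r. If the lattice-ordered group G is two-divisible (every g ∈ G equals h + h for some h ∈ G), then r is strict, i.e., r(0) = u − r(0). -/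
/-- In a lattice-ordered group, `0 ≤ a + a` implies `0 ≤ a`. -/
lemma nonneg_of_add_self_nonneg {G : Type} [Lattice G] [AddGroup G]
    [CovariantClass G G (· + ·) (· ≤ ·)]
    [CovariantClass G G (Function.swap (· + ·)) (· ≤ ·)]
    {a : G} (h : 0 ≤ a + a) : 0 ≤ a := by
  set q := a ⊓ 0 with hqdef
  have hq1 : q + q = q := by
    have h1 : q + q = ((a + a) ⊓ a) ⊓ q := by
      calc q + q = (a + q) ⊓ (0 + q) := by rw [hqdef, inf_add]
        _ = ((a + a) ⊓ (a + 0)) ⊓ q := by rw [add_inf, zero_add]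
        _ = ((a + a) ⊓ a) ⊓ q := by rw [add_zero]
    have h2 : ((a + a) ⊓ a) ⊓ q = q := by
      rw [inf_assoc]
      have : a ⊓ q = q := inf_eq_right.mpr (by simp [hqdef])
      rw [this]
      exact inf_eq_right.mpr (le_trans inf_le_right h)
    rw [h1, h2]
  have hq0 : q = 0 := by
    have := congrArg (fun x => x - q) hq1
    simpa using this
  exact inf_eq_right.mp hq0

/-- if a representable pseudo MV-algebra `M = Γ(G,u)` has a square root `r`
and `G` is two-divisible, then `r` is strict, i.e. `r 0 = u - r 0`. -/
theorem stmt_8 {G : Type} [Lattice G] [AddGroup G]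
    [CovariantClass G G (· + ·) (· ≤ ·)]
    [CovariantClass G G (Function.swap (· + ·)) (· ≤ ·)]
    (u : G) (hu : IsStrongUnit u) (hrep : IsRepresentable u)
    (r : G → G) (hr : IsSquareRoot u r)
    (hdiv : TwoDivisible G) :
    r 0 = u - r 0 := by
  obtain ⟨h, hh⟩ := hdiv u
  obtain ⟨hran, hsq1, hsq2, _, _⟩ := hr
  have hnn : 0 ≤ h := nonneg_of_add_self_nonneg (by rw [hh]; exact hu.1)
  have hle : h ≤ u := by rw [← hh]; simpa using add_le_add_left hnn h
  have hr0 := hran 0 le_rfl hu.1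
  -- h ⊙ h = 0 ≤ 0, so h ≤ r 0
  have hodot : odot u h h ≤ 0 := by
    have : h - u + h = 0 := by
      rw [← hh]; simp [sub_eq_add_neg, neg_add_rev, add_assoc]
    simp [odot, this]
  have hhr : h ≤ r 0 := hsq2 0 h le_rfl hu.1 hnn hle hodot
  -- r 0 ⊙ r 0 = 0 gives r 0 + r 0 ≤ u
  have hsq : odot u (r 0) (r 0) = 0 := hsq1 0 le_rfl hu.1
  have hle2 : r 0 - u + r 0 ≤ 0 := by
    have := le_of_eq hsq
    rw [odot] at this
    exact le_trans le_sup_left this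
  have hupper : r 0 + r 0 ≤ u := by
    have h1 : r 0 - u ≤ -(r 0) := by
      have := add_le_add hle2 (le_refl (-(r 0)))
      simpa using this
    have h2 := add_le_add (add_le_add (le_refl (r 0)) h1) (le_refl u)
    simpa [add_assoc, sub_add_cancel] using h2
  have hlower : u ≤ r 0 + r 0 := by
    rw [← hh]; exact add_le_add hhr hhr
  have key : r 0 + r 0 = u := le_antisymm hupper hlower
  exact eq_sub_iff_add_eq.mpr key
end
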